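/- arXiv:2101.10139 — 11 statements merged into one kernel-verified Lean document; each statement's English description precedes it below -/
import Mathlib

section
/- Fix α > 1 and set k₄ = 2·h·m·m₂·k₂·(α k₁/k₀)^{μ/γ}·(1 + (α k₁/k₀)^{(μ−1)/γ}) and H = (w/k₄)^{1/(μ−1)}. Let δ ∈ (0, H), κ = (k₀/k₁)^{1/γ}, K = (1 + (μ−1)·m·h·(κδ)^{μ−1})^{1/(μ−1)}, and let Δ > 0 satisfy Δ + m·h·Δ^μ = κδ/K. Then every solution x of the delay system with initial function φ satisfying ‖φ‖_h < Δ obeys ‖x(t)‖ < δ for all t ≥ 0 and x(t) → 0 as t → ∞. -/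
open Real Set RealInnerProductSpace


lemma deriv_nonneg_of_left_max {g : ℝ → ℝ} {d t : ℝ}
    (hd : HasDerivAt g d t) (hm : ∀ᶠ s in nhdsWithin t (Set.Iio t), g s ≤ g t) : 0 ≤ d := by
  have hs : Filter.Tendsto (slope g t) (nhdsWithin t {t}ᶜ) (nhds d) :=
    hasDerivAt_iff_tendsto_slope.1 hd
  have hs' : Filter.Tendsto (slope g t) (nhdsWithin t (Set.Iio t)) (nhds d) :=
    hs.mono_left (nhdsWithin_mono _ (fun s hs => ne_of_lt hs))
  refine ge_of_tendsto hs' ?_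
  filter_upwards [hm, self_mem_nhdsWithin] with s h1 h2
  have h3 : s - t < 0 := sub_neg.2 h2
  rw [slope_def_field, div_eq_mul_inv]
  have h4 : (s - t)⁻¹ ≤ 0 := inv_nonpos.2 h3.le
  have h5 : g s - g t ≤ 0 := by linarith
  nlinarith

lemma no_upcross {g : ℝ → ℝ} {a b q : ℝ} (hab : a ≤ b)
    (hc : ContinuousOn g (Set.Ici a))
    (h0 : ∀ t ∈ Set.Icc a b, g t < q)
    (hder : ∀ t, b < t → g t = q → (∀ s ∈ Set.Icc a t, g s ≤ q) →
      ∃ d, HasDerivAt g d t ∧ d < 0) :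
    ∀ t ≥ a, g t < q := by
  by_contra hcon
  push_neg at hcon
  obtain ⟨t₁, ht₁a, ht₁⟩ := hcon
  set S : Set ℝ := Set.Ici a ∩ g ⁻¹' (Set.Ici q) with hS
  have hSclosed : IsClosed S := hc.preimage_isClosed_of_isClosed isClosed_Ici isClosed_Ici
  have hne : S.Nonempty := ⟨t₁, ht₁a, ht₁⟩
  have hbdd : BddBelow S := ⟨a, fun s hs => hs.1⟩
  set c := sInf S with hcdef
  have hcS : c ∈ S := hSclosed.csInf_mem hne hbdd
  have hca : a ≤ c := hcS.1
  have hlt : ∀ s, a ≤ s → s < c → g s < q := by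
    intro s h1 h2
    by_contra hge
    exact absurd (csInf_le hbdd ⟨h1, not_lt.1 hge⟩) (not_le.2 h2)
  have hcb : b < c := by
    rcases lt_or_ge b c with h | h
    · exact h
    · exact absurd hcS.2 (not_le.2 (h0 c ⟨hca, h⟩))
  have hgc' : g c = q := by
    refine le_antisymm ?_ hcS.2
    have hac : a < c := lt_of_le_of_lt hab hcb
    have hcw : ContinuousWithinAt g (Set.Ico a c) c :=
      (hc c hca).mono Set.Ico_subset_Ici_self
    have hnb : (nhdsWithin c (Set.Ico a c)).NeBot := by
      refine mem_closure_iff_nhdsWithin_neBot.1 ?_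
      rw [closure_Ico (ne_of_lt hac)]
      exact ⟨hac.le, le_rfl⟩
    refine le_of_tendsto hcw ?_
    filter_upwards [self_mem_nhdsWithin] with s hs
    obtain ⟨h1, h2⟩ := Set.mem_Ico.1 hs
    exact (hlt s h1 h2).le
  have hle : ∀ s ∈ Set.Icc a c, g s ≤ q := by
    intro s hs
    rcases eq_or_lt_of_le hs.2 with rfl | hlt'
    · exact hgc'.le
    · exact (hlt s hs.1 hlt').le
  obtain ⟨d, hd, hdneg⟩ := hder c hcb hgc' hle
  have : 0 ≤ d := by
    refine deriv_nonneg_of_left_max hd ?_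
    have hmem : Set.Ioi b ∈ nhdsWithin c (Set.Iio c) :=
      nhdsWithin_le_nhds (isOpen_Ioi.mem_nhds hcb)
    filter_upwards [hmem, self_mem_nhdsWithin] with s h1 h2
    rw [hgc']
    exact (hlt s (le_of_lt (lt_of_le_of_lt hab h1)) h2).le
  linarith

lemma norm_sub_le_integral_norm {E : Type*} [NormedAddCommGroup E] [NormedSpace ℝ E]
    [CompleteSpace E] {x F : ℝ → E} {a b : ℝ} (hab : a ≤ b)
    (hc : ContinuousOn x (Set.Icc a b))
    (hd : ∀ t ∈ Set.Ioo a b, HasDerivAt x (F t) t)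
    (hF : ContinuousOn F (Set.Icc a b)) :
    ‖x b - x a‖ ≤ ∫ s in a..b, ‖F s‖ := by
  have hint : IntervalIntegrable F MeasureTheory.volume a b :=
    (hF.mono (by rw [Set.uIcc_of_le hab])).intervalIntegrable
  have heq := intervalIntegral.integral_eq_sub_of_hasDeriv_right_of_le hab hc
      (fun t ht => (hd t ht).hasDerivWithinAt) hint
  rw [← heq]
  exact intervalIntegral.norm_integral_le_integral_norm hab

lemma norm_sub_le_const {E : Type*} [NormedAddCommGroup E] [NormedSpace ℝ E]
    [CompleteSpace E] {x F : ℝ → E} {a b C : ℝ} (hab : a ≤ b)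
    (hc : ContinuousOn x (Set.Icc a b))
    (hd : ∀ t ∈ Set.Ioo a b, HasDerivAt x (F t) t)
    (hF : ContinuousOn F (Set.Icc a b))
    (hC : ∀ s ∈ Set.Icc a b, ‖F s‖ ≤ C) :
    ‖x b - x a‖ ≤ C * (b - a) := by
  have hint : IntervalIntegrable F MeasureTheory.volume a b :=
    (hF.mono (by rw [Set.uIcc_of_le hab])).intervalIntegrable
  have heq := intervalIntegral.integral_eq_sub_of_hasDeriv_right_of_le hab hc
      (fun t ht => (hd t ht).hasDerivWithinAt) hint
  rw [← heq]
  have := intervalIntegral.norm_integral_le_of_norm_le_const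
    (f := F) (C := C) (a := a) (b := b) (fun s hs => hC s (Set.mem_Icc_of_Ioc (by rwa [Set.uIoc_of_le hab] at hs)))
  rwa [abs_of_nonneg (by linarith)] at this

set_option maxHeartbeats 4000000 in
/-- Razumikhin-based estimate of the domain of attraction (Theorem 2 with explicit constants):
initial functions with `‖φ‖_h < Δ` yield solutions staying in the ball of radius `δ`
and tending to zero. -/
theorem attraction_region_LR
    {n : ℕ} (hn : 1 ≤ n)
    (h μ : ℝ) (hh : 0 < h) (hμ : 1 < μ)
    (f : EuclideanSpace ℝ (Fin n) × EuclideanSpace ℝ (Fin n) → EuclideanSpace ℝ (Fin n))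
    (hf : ContDiff ℝ 1 f)
    (hhom : ∀ c > (0:ℝ), ∀ x y : EuclideanSpace ℝ (Fin n),
      f (c • x, c • y) = (c ^ μ) • f (x, y))
    (m m₂ : ℝ) (hm : 0 < m) (hm₂ : 0 < m₂)
    (hfb : ∀ x y : EuclideanSpace ℝ (Fin n), ‖f (x, y)‖ ≤ m * (‖x‖ ^ μ + ‖y‖ ^ μ))
    (hfy : ∀ x y : EuclideanSpace ℝ (Fin n),
      ‖fderiv ℝ (fun y' => f (x, y')) y‖ ≤ m₂ * (‖x‖ ^ (μ - 1) + ‖y‖ ^ (μ - 1)))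
    (γ : ℝ) (hγ : 2 ≤ γ)
    (V : EuclideanSpace ℝ (Fin n) → ℝ) (hV : ContDiff ℝ 1 V)
    (k₀ k₁ k₂ w : ℝ) (hk₀ : 0 < k₀) (hk₁ : 0 < k₁) (hk₂ : 0 < k₂) (hw : 0 < w)
    (hVlb : ∀ x : EuclideanSpace ℝ (Fin n), k₀ * ‖x‖ ^ γ ≤ V x)
    (hVub : ∀ x : EuclideanSpace ℝ (Fin n), V x ≤ k₁ * ‖x‖ ^ γ)
    (hgrad : ∀ x : EuclideanSpace ℝ (Fin n), ‖gradient V x‖ ≤ k₂ * ‖x‖ ^ (γ - 1))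
    (hdV : ∀ x : EuclideanSpace ℝ (Fin n),
      ⟪gradient V x, f (x, x)⟫ ≤ -w * ‖x‖ ^ (γ + μ - 1))
    (α : ℝ) (hα : 1 < α)
    (k₄ H δ κ K Δ : ℝ)
    (hk₄ : k₄ = 2 * h * m * m₂ * k₂ * (α * k₁ / k₀) ^ (μ / γ) *
      (1 + (α * k₁ / k₀) ^ ((μ - 1) / γ)))
    (hH : H = (w / k₄) ^ (1 / (μ - 1)))
    (hδ : δ ∈ Set.Ioo 0 H)
    (hκ : κ = (k₀ / k₁) ^ (1 / γ))
    (hK : K = (1 + (μ - 1) * m * h * (κ * δ) ^ (μ - 1)) ^ (1 / (μ - 1)))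
    (hΔpos : 0 < Δ) (hΔ : Δ + m * h * Δ ^ μ = κ * δ / K)
    (φ x : ℝ → EuclideanSpace ℝ (Fin n))
    (hφc : ContinuousOn φ (Set.Icc (-h) 0))
    (hxc : ContinuousOn x (Set.Ici (-h)))
    (hxφ : ∀ θ ∈ Set.Icc (-h) (0:ℝ), x θ = φ θ)
    (hxd : ∀ t > (0:ℝ), HasDerivAt x (f (x t, x (t - h))) t)
    (hφΔ : (⨆ θ : Set.Icc (-h) (0:ℝ), ‖φ θ.1‖) < Δ) :
    (∀ t ≥ (0:ℝ), ‖x t‖ < δ) ∧ Filter.Tendsto x Filter.atTop (nhds 0) := by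
  classical
  obtain ⟨hδ0, hδH⟩ := hδ
  have hμ1 : (0:ℝ) < μ - 1 := by linarith
  have hμ0 : (0:ℝ) < μ := by linarith
  have hγ0 : (0:ℝ) < γ := by linarith
  have hγ1 : (0:ℝ) < γ - 1 := by linarith
  -- k₀ ≤ k₁
  have hk01 : k₀ ≤ k₁ := by
    have he : ‖(EuclideanSpace.single (⟨0, by omega⟩ : Fin n) (1:ℝ))‖ = 1 := by
      rw [EuclideanSpace.norm_single]; norm_num
    have h1 := hVlb (EuclideanSpace.single (⟨0, by omega⟩ : Fin n) (1:ℝ))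
    have h2 := hVub (EuclideanSpace.single (⟨0, by omega⟩ : Fin n) (1:ℝ))
    rw [he, Real.one_rpow] at h1 h2
    linarith
  -- κ facts
  have hκpos : 0 < κ := by rw [hκ]; positivity
  have hκγ : κ ^ γ = k₀ / k₁ := by
    rw [hκ, ← Real.rpow_mul (by positivity), one_div_mul_cancel hγ0.ne', Real.rpow_one]
  have hκle1 : κ ≤ 1 := by
    rw [hκ]
    exact Real.rpow_le_one (by positivity) ((div_le_one hk₁).2 hk01) (by positivity)
  have hκδ : 0 < κ * δ := mul_pos hκpos hδ0
  -- K facts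
  have hKm : K ^ (μ - 1) = 1 + (μ - 1) * m * h * (κ * δ) ^ (μ - 1) := by
    rw [hK, ← Real.rpow_mul (by positivity), one_div_mul_cancel hμ1.ne', Real.rpow_one]
  have hK1 : 1 ≤ K := by
    rw [hK]
    have h1 : 0 ≤ (μ - 1) * m * h * (κ * δ) ^ (μ - 1) := by positivity
    exact Real.one_le_rpow (by linarith) (by positivity)
  have hKpos : 0 < K := lt_of_lt_of_le one_pos hK1
  -- Δ facts
  have hΔκδK : Δ < κ * δ / K := by
    have h1 : 0 < m * h * Δ ^ μ := by
      have := Real.rpow_pos_of_pos hΔpos μ; positivity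
    linarith [hΔ]
  have hΔκδ : Δ < κ * δ := lt_of_lt_of_le hΔκδK (div_le_self hκδ.le hK1)
  have hκδδ : κ * δ ≤ δ := mul_le_of_le_one_left hδ0.le hκle1
  have hΔδ : Δ < δ := lt_of_lt_of_le hΔκδ hκδδ
  -- NUM
  have hk₄pos : 0 < k₄ := by
    rw [hk₄]
    have h1 : (0:ℝ) < (α * k₁ / k₀) ^ (μ / γ) := Real.rpow_pos_of_pos (by positivity) _
    have h2 : (0:ℝ) < (α * k₁ / k₀) ^ ((μ-1) / γ) := Real.rpow_pos_of_pos (by positivity) _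
    positivity
  have hHm : H ^ (μ - 1) = w / k₄ := by
    rw [hH, ← Real.rpow_mul (by positivity), one_div_mul_cancel hμ1.ne', Real.rpow_one]
  have hδμ1 : δ ^ (μ - 1) < w / k₄ := by
    calc δ ^ (μ-1) < H ^ (μ-1) := Real.rpow_lt_rpow hδ0.le hδH hμ1
    _ = w / k₄ := hHm
  have hκμX : κ ^ μ * (k₁ / k₀) ^ (μ / γ) = 1 := by
    have h1 : κ ^ μ = (k₀ / k₁) ^ (μ / γ) := by
      rw [hκ, ← Real.rpow_mul (by positivity)]
      congr 1; ring
    rw [h1, ← Real.mul_rpow (by positivity) (by positivity)]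
    rw [div_mul_div_comm, mul_comm k₀ k₁, div_self (by positivity)]
    exact Real.one_rpow _
  have hk₄ge : 4 * (h*m*m₂*k₂) * (k₁/k₀) ^ (μ/γ) ≤ k₄ := by
    rw [hk₄]
    have hA1 : (1:ℝ) ≤ α * k₁ / k₀ := by
      rw [le_div_iff₀ hk₀, one_mul]
      linarith only [mul_nonneg (sub_nonneg.2 hα.le) hk₁.le, hk01]
    have hble : k₁ / k₀ ≤ α * k₁ / k₀ := (div_le_div_iff_of_pos_right hk₀).2
      (by linarith only [mul_nonneg (sub_nonneg.2 hα.le) hk₁.le])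
    have h1 : (k₁/k₀) ^ (μ/γ) ≤ (α*k₁/k₀) ^ (μ/γ) :=
      Real.rpow_le_rpow (by positivity) hble (by positivity)
    have h2 : (1:ℝ) ≤ (α*k₁/k₀) ^ ((μ-1)/γ) := Real.one_le_rpow hA1 (by positivity)
    have h3 : (0:ℝ) < (α*k₁/k₀) ^ (μ/γ) := Real.rpow_pos_of_pos (by positivity) _
    calc 4 * (h*m*m₂*k₂) * (k₁/k₀) ^ (μ/γ)
        ≤ 4 * (h*m*m₂*k₂) * ((α*k₁/k₀) ^ (μ/γ)) := by
          apply mul_le_mul_of_nonneg_left h1 (by positivity)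
      _ = 2 * h * m * m₂ * k₂ * (α*k₁/k₀) ^ (μ/γ) * 2 := by ring
      _ ≤ 2 * h * m * m₂ * k₂ * (α*k₁/k₀) ^ (μ/γ) * (1 + (α*k₁/k₀) ^ ((μ-1)/γ)) := by
          apply mul_le_mul_of_nonneg_left (by linarith) (by positivity)
  have NUM : 4 * (h*m*m₂*k₂) * δ ^ (μ - 1) < w * κ ^ μ := by
    have hX : (0:ℝ) < (k₁/k₀) ^ (μ/γ) := Real.rpow_pos_of_pos (by positivity) _
    have hκμpos : 0 < κ ^ μ := Real.rpow_pos_of_pos hκpos μ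
    have step1 : 4*(h*m*m₂*k₂) * (k₁/k₀)^(μ/γ) * δ^(μ-1) < w := by
      have s1 : 4*(h*m*m₂*k₂) * (k₁/k₀)^(μ/γ) * δ^(μ-1) <
          4*(h*m*m₂*k₂) * (k₁/k₀)^(μ/γ) * (w/k₄) := by
        apply mul_lt_mul_of_pos_left hδμ1 (by positivity)
      have s2 : 4*(h*m*m₂*k₂) * (k₁/k₀)^(μ/γ) * (w/k₄) ≤ k₄ * (w/k₄) :=
        mul_le_mul_of_nonneg_right hk₄ge (by positivity)
      have s3 : k₄ * (w/k₄) = w := by field_simp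
      linarith
    calc 4*(h*m*m₂*k₂)*δ^(μ-1)
        = 4*(h*m*m₂*k₂)*δ^(μ-1) * (κ^μ * (k₁/k₀)^(μ/γ)) := by rw [hκμX, mul_one]
      _ = (4*(h*m*m₂*k₂) * (k₁/k₀)^(μ/γ) * δ^(μ-1)) * κ^μ := by ring
      _ < w * κ^μ := mul_lt_mul_of_pos_right step1 hκμpos
  -- initial data bound B'
  set B' : ℝ := max (⨆ θ : Set.Icc (-h) (0:ℝ), ‖φ θ.1‖) (Δ/2) with hB'
  have hB'pos : 0 < B' := lt_of_lt_of_le (by linarith) (le_max_right _ _)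
  have hB'Δ : B' < Δ := max_lt hφΔ (by linarith)
  have hφB : ∀ θ ∈ Set.Icc (-h) (0:ℝ), ‖φ θ‖ ≤ B' := by
    intro θ hθ
    refine le_trans ?_ (le_max_left _ _)
    have hbdd : BddAbove (Set.range fun θ : Set.Icc (-h) (0:ℝ) => ‖φ θ.1‖) := by
      have h1 : BddAbove ((fun θ => ‖φ θ‖) '' Set.Icc (-h) 0) :=
        isCompact_Icc.bddAbove_image hφc.norm
      rwa [Set.image_eq_range] at h1
    exact le_ciSup hbdd ⟨θ, hθ⟩
  have hxB : ∀ θ ∈ Set.Icc (-h) (0:ℝ), ‖x θ‖ ≤ B' := fun θ hθ => by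
    rw [hxφ θ hθ]; exact hφB θ hθ
  -- the Lyapunov function along the solution
  set g : ℝ → ℝ := fun t => V (x t) with hgdef
  have hVdiff : Differentiable ℝ V := hV.differentiable one_ne_zero
  have hgc : ContinuousOn g (Set.Ici (-h)) := hVdiff.continuous.comp_continuousOn hxc
  have hgd : ∀ t, 0 < t → HasDerivAt g (⟪gradient V (x t), f (x t, x (t - h))⟫) t := by
    intro t ht
    have h1 : HasFDerivAt V (InnerProductSpace.toDual ℝ _ (gradient V (x t))) (x t) :=
      (hVdiff (x t)).hasGradientAt.hasFDerivAt
    have h2 := h1.comp_hasDerivAt t (hxd t ht)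
    change HasDerivAt (V ∘ x) _ t
    simpa [InnerProductSpace.toDual_apply_apply] using h2
  have hgnn : ∀ t, 0 ≤ g t := fun t =>
    le_trans (by positivity : (0:ℝ) ≤ k₀ * ‖x t‖ ^ γ) (hVlb (x t))
  -- continuous total extension y of x
  set y : ℝ → EuclideanSpace ℝ (Fin n) := fun s => x (max s (-h)) with hydef
  have hyc : Continuous y :=
    hxc.comp_continuous (continuous_id.max continuous_const) (fun s => le_max_right s (-h))
  have hyx : ∀ s, -h ≤ s → y s = x s := fun s hs => by
    rw [hydef]; simp only; rw [max_eq_left hs]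
  -- continuity of r ↦ r ^ μ
  have hcont_rpow : ∀ p : ℝ, 0 < p → Continuous fun r : ℝ => r ^ p := by
    intro p hp
    rw [continuous_iff_continuousAt]
    intro r
    rcases eq_or_ne r 0 with rfl | hr
    · exact Real.continuousAt_rpow_const _ _ (Or.inr hp.le)
    · exact Real.continuousAt_rpow_const _ _ (Or.inl hr)
  -- continuity of the vector field along the solution
  have hxsh : ContinuousOn (fun s => x (s - h)) (Set.Ici (0:ℝ)) := by
    apply hxc.comp (continuous_id.sub continuous_const).continuousOn
    intro s hs
    simp only [Set.mem_Ici, id_eq, Pi.sub_apply] at *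
    linarith
  have hFc : ContinuousOn (fun s => f (x s, x (s - h))) (Set.Ici (0:ℝ)) := by
    apply hf.continuous.comp_continuousOn
    exact ((hxc.mono (fun s hs => by simp only [Set.mem_Ici] at *; linarith) : ContinuousOn x (Set.Ici (0:ℝ)))).prodMk hxsh
  -- integral form bound on [0, h]
  set G : ℝ → ℝ := fun s => m * ‖y s‖ ^ μ with hGdef
  have hGc : Continuous G := continuous_const.mul ((hcont_rpow μ hμ0).comp hyc.norm)
  have hGnn : ∀ s, 0 ≤ G s := fun s => by
    have : (0:ℝ) ≤ ‖y s‖ ^ μ := Real.rpow_nonneg (norm_nonneg _) μ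
    positivity
  set z : ℝ → ℝ := fun t => B' + m * h * B' ^ μ + ∫ s in (0:ℝ)..t, G s with hzdef
  have hzd : ∀ t, HasDerivAt z (G t) t := by
    intro t
    exact ((intervalIntegral.integral_hasDerivAt_right (hGc.intervalIntegrable _ _)
      (hGc.stronglyMeasurableAtFilter _ _) hGc.continuousAt).const_add _)
  have hzc : Continuous z := by
    rw [continuous_iff_continuousAt]; exact fun t => (hzd t).continuousAt
  have hz0 : z 0 = B' + m * h * B' ^ μ := by
    rw [hzdef]; simp [intervalIntegral.integral_same]
  have hzmono : ∀ s t : ℝ, s ≤ t → z s ≤ z t := by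
    intro s t hst
    have h1 : ∫ u in (0:ℝ)..s, G u ≤ ∫ u in (0:ℝ)..t, G u := by
      rw [← intervalIntegral.integral_add_adjacent_intervals
        (hGc.intervalIntegrable 0 s) (hGc.intervalIntegrable s t)]
      have h2 : 0 ≤ ∫ u in s..t, G u :=
        intervalIntegral.integral_nonneg hst (fun u _ => hGnn u)
      linarith
    simp only [hzdef]
    linarith
  have hzpos : ∀ t, 0 ≤ t → 0 < z t := by
    intro t ht
    have h1 : 0 < z 0 := by
      rw [hz0]
      have : (0:ℝ) < B' ^ μ := Real.rpow_pos_of_pos hB'pos μ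
      positivity
    exact lt_of_lt_of_le h1 (hzmono 0 t ht)
  -- a priori integral bound : ‖x t‖ ≤ z t on [0, h]
  have hxz : ∀ t ∈ Set.Icc (0:ℝ) h, ‖x t‖ ≤ z t := by
    intro t ht
    have h0B : ‖x 0‖ ≤ B' := hxB 0 ⟨by linarith, le_rfl⟩
    rcases eq_or_lt_of_le ht.1 with heq | ht0
    · rw [← heq, hz0]
      have h2 : (0:ℝ) < m * h * B' ^ μ := by
        have : (0:ℝ) < B' ^ μ := Real.rpow_pos_of_pos hB'pos μ
        positivity
      linarith
    · have hcx : ContinuousOn x (Set.Icc 0 t) :=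
        hxc.mono (fun s hs => by simp only [Set.mem_Icc, Set.mem_Ici] at *; linarith [hs.1])
      have hdx : ∀ s ∈ Set.Ioo (0:ℝ) t, HasDerivAt x (f (x s, x (s - h))) s :=
        fun s hs => hxd s hs.1
      have hFcx : ContinuousOn (fun s => f (x s, x (s - h))) (Set.Icc 0 t) :=
        hFc.mono (fun s hs => hs.1)
      have hA3 := norm_sub_le_integral_norm ht.1 hcx hdx hFcx
      have huIcc : Set.uIcc (0:ℝ) t = Set.Icc 0 t := Set.uIcc_of_le ht.1
      have hmono2 : (∫ s in (0:ℝ)..t, ‖f (x s, x (s - h))‖) ≤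
          ∫ s in (0:ℝ)..t, (G s + m * B' ^ μ) := by
        refine intervalIntegral.integral_mono_on ht.1
          ((show ContinuousOn _ (Set.uIcc (0:ℝ) t) by rw [huIcc]; exact hFcx.norm).intervalIntegrable)
          ((hGc.add continuous_const).intervalIntegrable _ _) ?_
        intro s hs
        have hsh : s - h ∈ Set.Icc (-h) (0:ℝ) := ⟨by linarith [hs.1], by linarith [hs.2, ht.2]⟩
        calc ‖f (x s, x (s - h))‖ ≤ m * (‖x s‖^μ + ‖x (s-h)‖^μ) := hfb _ _
          _ ≤ G s + m * B'^μ := by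
              have e1 : ‖x (s-h)‖^μ ≤ B'^μ :=
                Real.rpow_le_rpow (norm_nonneg _) (hxB _ hsh) hμ0.le
              have e2 : G s = m * ‖x s‖^μ := by
                rw [hGdef]; simp only; rw [hyx s (by linarith [hs.1])]
              have e3 := mul_le_mul_of_nonneg_left e1 hm.le
              rw [e2]; ring_nf; ring_nf at e3; linarith
      have hsplit : (∫ s in (0:ℝ)..t, (G s + m * B'^μ)) =
          (∫ s in (0:ℝ)..t, G s) + t * (m * B'^μ) := by
        rw [intervalIntegral.integral_add (hGc.intervalIntegrable _ _) intervalIntegrable_const,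
          intervalIntegral.integral_const]
        simp [smul_eq_mul]
      have htmb : t * (m * B'^μ) ≤ h * (m * B'^μ) := by
        apply mul_le_mul_of_nonneg_right ht.2
        have : (0:ℝ) < B'^μ := Real.rpow_pos_of_pos hB'pos μ
        positivity
      have hnorm : ‖x t‖ ≤ ‖x 0‖ + ‖x t - x 0‖ := by
        have hx1 := norm_add_le (x 0) (x t - x 0)
        simpa using hx1
      show ‖x t‖ ≤ B' + m * h * B' ^ μ + ∫ s in (0:ℝ)..t, G s
      have e4 : m * h * B'^μ = h * (m * B'^μ) := by ring
      linarith [hA3, hmono2, hsplit, htmb, h0B, hnorm]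
  -- nonlinear comparison: z t < κ δ on [0, h]
  have hzupper : ∀ t ∈ Set.Icc (0:ℝ) h, z t < κ * δ := by
    have hGz : ∀ t ∈ Set.Icc (0:ℝ) h, G t ≤ m * z t ^ μ := by
      intro t ht
      have h1 : ‖x t‖ ≤ z t := hxz t ht
      have e2 : G t = m * ‖x t‖^μ := by
        rw [hGdef]; simp only; rw [hyx t (by linarith [ht.1])]
      rw [e2]
      exact mul_le_mul_of_nonneg_left (Real.rpow_le_rpow (norm_nonneg _) h1 hμ0.le) hm.le
    set u : ℝ → ℝ := fun t => z t ^ (1 - μ) + (μ - 1) * m * t with hudef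
    have hud : ∀ t ∈ Set.Icc (0:ℝ) h,
        HasDerivAt u (G t * (1-μ) * z t ^ (1-μ-1) + (μ-1)*m) t := by
      intro t ht
      have h1 := (HasDerivAt.rpow_const (p := 1-μ) (hzd t) (Or.inl (hzpos t ht.1).ne')).add
        ((hasDerivAt_id t).const_mul ((μ-1)*m))
      change HasDerivAt ((fun y => z y ^ (1 - μ)) + fun y => (μ - 1) * m * y) _ t
      simpa using h1
    have humono : MonotoneOn u (Set.Icc (0:ℝ) h) := by
      apply monotoneOn_of_deriv_nonneg (convex_Icc 0 h)
      · exact fun t ht => ((hud t ht).continuousAt.continuousWithinAt)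
      · intro t ht
        rw [interior_Icc] at ht
        exact ((hud t ⟨ht.1.le, ht.2.le⟩).differentiableAt.differentiableWithinAt)
      · intro t ht
        rw [interior_Icc] at ht
        have ht' : t ∈ Set.Icc (0:ℝ) h := ⟨ht.1.le, ht.2.le⟩
        rw [(hud t ht').deriv]
        have hzt := hzpos t ht'.1
        have hGle := hGz t ht'
        have e1 : z t ^ (1-μ-1) = (z t ^ μ)⁻¹ := by
          rw [show (1:ℝ)-μ-1 = -μ by ring, Real.rpow_neg hzt.le]
        rw [e1]
        have hzμ : 0 < z t ^ μ := Real.rpow_pos_of_pos hzt μ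
        have h2 : G t / z t ^ μ ≤ m := (div_le_iff₀ hzμ).2 (by linarith [hGle])
        rw [div_eq_mul_inv] at h2
        linarith only [mul_le_mul_of_nonneg_left h2 hμ1.le]
    have hz0lt : z 0 < κ * δ / K := by
      rw [hz0]
      have e1 : B' ^ μ < Δ ^ μ := Real.rpow_lt_rpow hB'pos.le hB'Δ hμ0
      have e0 : (0:ℝ) < m*h := by positivity
      have e2 := mul_lt_mul_of_pos_left e1 e0
      have e3 : m * h * B' ^ μ < m * h * Δ ^ μ := by ring_nf; ring_nf at e2; linarith
      linarith [hΔ]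
    intro t ht
    have hu0 : u 0 ≤ u t := humono ⟨le_rfl, hh.le⟩ ht ht.1
    have hu0' : u 0 = z 0 ^ (1-μ) := by rw [hudef]; simp
    have hz0pos := hzpos 0 le_rfl
    have hztpos := hzpos t ht.1
    have c1 : (κ*δ/K) ^ (1-μ) < z 0 ^ (1-μ) :=
      Real.rpow_lt_rpow_of_neg hz0pos hz0lt (by linarith)
    have c2 : (κ*δ/K)^(1-μ) = (κ*δ)^(1-μ) * K^(μ-1) := by
      rw [Real.div_rpow hκδ.le hKpos.le, show (1:ℝ)-μ = -(μ-1) by ring,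
        Real.rpow_neg hKpos.le, div_inv_eq_mul]
    have c3 : (κ*δ)^(1-μ) * (κ*δ)^(μ-1) = 1 := by
      rw [← Real.rpow_add hκδ]; norm_num
    have key : (κ*δ)^(1-μ) < z t ^ (1-μ) := by
      have d1 : z t ^ (1-μ) = u t - (μ-1)*m*t := by rw [hudef]; ring
      have d2 : (μ-1)*m*t ≤ (μ-1)*m*h :=
        mul_le_mul_of_nonneg_left ht.2 (by positivity)
      have d4 : (κ*δ/K)^(1-μ) = (κ*δ)^(1-μ) + (μ-1)*m*h := by
        rw [c2, hKm]
        linear_combination ((μ-1)*m*h) * c3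
      linarith [hu0, hu0', c1, d4, d1, d2]
    exact (Real.rpow_lt_rpow_iff_of_neg hκδ hztpos (by linarith : 1-μ < 0)).1 key
  -- solution stays in ball of radius κδ on [-h, h]
  have XB0 : ∀ t ∈ Set.Icc (-h) h, ‖x t‖ < κ * δ := by
    intro t ht
    rcases le_or_gt t 0 with h0 | h0
    · exact lt_of_le_of_lt (hxB t ⟨ht.1, h0⟩) (lt_trans hB'Δ hΔκδ)
    · exact lt_of_le_of_lt (hxz t ⟨h0.le, ht.2⟩) (hzupper t ⟨h0.le, ht.2⟩)
  set q := k₀ * δ ^ γ with hq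
  have hκδγq : k₁ * (κ*δ)^γ = q := by
    rw [Real.mul_rpow hκpos.le hδ0.le, hκγ, hq]
    field_simp
  have hg0 : ∀ t ∈ Set.Icc (-h) h, g t < q := by
    intro t ht
    refine lt_of_le_of_lt (hVub (x t)) ?_
    rw [← hκδγq]
    exact mul_lt_mul_of_pos_left (Real.rpow_lt_rpow (norm_nonneg _) (XB0 t ht) hγ0) hk₁
  -- derivative estimate along the solution
  have hDE : ∀ t R, h < t → 0 < R →
      (∀ s ∈ Set.Icc (t - 2*h) t, ‖x s‖ ≤ R) →
      ∃ d, HasDerivAt g d t ∧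
        d ≤ -w * ‖x t‖ ^ (γ + μ - 1) + 4*(h*m*m₂*k₂) * (R^(μ-1) * R^μ) * ‖x t‖ ^ (γ-1) := by
    intro t R ht hR hb
    refine ⟨_, hgd t (by linarith), ?_⟩
    have hxtR : ‖x t‖ ≤ R := hb t ⟨by linarith, le_rfl⟩
    have hxthR : ‖x (t-h)‖ ≤ R := hb (t-h) ⟨by linarith, by linarith⟩
    have hstep : ‖x t - x (t-h)‖ ≤ (2*m*R^μ) * h := by
      have hab : t - h ≤ t := by linarith
      have hcx : ContinuousOn x (Set.Icc (t-h) t) := hxc.mono (fun s hs => by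
        simp only [Set.mem_Icc, Set.mem_Ici] at *; linarith [hs.1])
      have hdx : ∀ s ∈ Set.Ioo (t-h) t, HasDerivAt x (f (x s, x (s-h))) s :=
        fun s hs => hxd s (by linarith [hs.1])
      have hFcx : ContinuousOn (fun s => f (x s, x (s-h))) (Set.Icc (t-h) t) :=
        hFc.mono (fun s hs => by simp only [Set.mem_Icc, Set.mem_Ici] at *; linarith [hs.1])
      have hC : ∀ s ∈ Set.Icc (t-h) t, ‖f (x s, x (s-h))‖ ≤ 2*m*R^μ := by
        intro s hs
        have h1 : ‖x s‖ ≤ R := hb s ⟨by linarith [hs.1], hs.2⟩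
        have h2 : ‖x (s-h)‖ ≤ R := hb (s-h) ⟨by linarith [hs.1], by linarith [hs.2]⟩
        have e1 : ‖x s‖^μ ≤ R^μ := Real.rpow_le_rpow (norm_nonneg _) h1 hμ0.le
        have e2 : ‖x (s-h)‖^μ ≤ R^μ := Real.rpow_le_rpow (norm_nonneg _) h2 hμ0.le
        calc ‖f (x s, x (s-h))‖ ≤ m * (‖x s‖^μ + ‖x (s-h)‖^μ) := hfb _ _
          _ ≤ m * (R^μ + R^μ) := mul_le_mul_of_nonneg_left (add_le_add e1 e2) hm.le
          _ = 2*m*R^μ := by ring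
      calc ‖x t - x (t-h)‖ ≤ 2*m*R^μ * (t - (t-h)) := norm_sub_le_const hab hcx hdx hFcx hC
        _ = (2*m*R^μ) * h := by ring
    have hC2 : ‖f (x t, x (t-h)) - f (x t, x t)‖ ≤ (2*m₂*R^(μ-1)) * ((2*m*R^μ) * h) := by
      have hconv : Convex ℝ (Metric.closedBall (0:EuclideanSpace ℝ (Fin n)) R) :=
        convex_closedBall _ _
      have hdiffb : ∀ p ∈ Metric.closedBall (0:EuclideanSpace ℝ (Fin n)) R,
          DifferentiableAt ℝ (fun y' => f (x t, y')) p := by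
        intro p _
        exact ((hf.differentiable one_ne_zero) (x t, p)).comp p
          (DifferentiableAt.prodMk (differentiableAt_const _) differentiableAt_id)
      have hbnd : ∀ p ∈ Metric.closedBall (0:EuclideanSpace ℝ (Fin n)) R,
          ‖fderiv ℝ (fun y' => f (x t, y')) p‖ ≤ 2*m₂*R^(μ-1) := by
        intro p hp
        rw [Metric.mem_closedBall, dist_zero_right] at hp
        refine le_trans (hfy (x t) p) ?_
        have e1 : ‖x t‖^(μ-1) ≤ R^(μ-1) := Real.rpow_le_rpow (norm_nonneg _) hxtR hμ1.le
        have e2 : ‖p‖^(μ-1) ≤ R^(μ-1) := Real.rpow_le_rpow (norm_nonneg _) hp hμ1.le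
        calc m₂ * (‖x t‖^(μ-1) + ‖p‖^(μ-1)) ≤ m₂ * (R^(μ-1) + R^(μ-1)) :=
              mul_le_mul_of_nonneg_left (add_le_add e1 e2) hm₂.le
          _ = 2*m₂*R^(μ-1) := by ring
      have hm1 : x t ∈ Metric.closedBall (0:EuclideanSpace ℝ (Fin n)) R := by
        rw [Metric.mem_closedBall, dist_zero_right]; exact hxtR
      have hm2 : x (t-h) ∈ Metric.closedBall (0:EuclideanSpace ℝ (Fin n)) R := by
        rw [Metric.mem_closedBall, dist_zero_right]; exact hxthR
      have hmv := hconv.norm_image_sub_le_of_norm_fderiv_le hdiffb hbnd hm1 hm2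
      calc ‖f (x t, x (t-h)) - f (x t, x t)‖ ≤ 2*m₂*R^(μ-1) * ‖x (t-h) - x t‖ := hmv
        _ = 2*m₂*R^(μ-1) * ‖x t - x (t-h)‖ := by rw [norm_sub_rev]
        _ ≤ (2*m₂*R^(μ-1)) * ((2*m*R^μ) * h) := by
            have hRp : (0:ℝ) < R^(μ-1) := Real.rpow_pos_of_pos hR _
            exact mul_le_mul_of_nonneg_left hstep (by positivity)
    have hinner : ⟪gradient V (x t), f (x t, x (t-h))⟫ ≤
        -w*‖x t‖^(γ+μ-1) + (k₂*‖x t‖^(γ-1)) * ((2*m₂*R^(μ-1)) * ((2*m*R^μ)*h)) := by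
      have hsplit : ⟪gradient V (x t), f (x t, x (t-h))⟫ =
          ⟪gradient V (x t), f (x t, x t)⟫ +
          ⟪gradient V (x t), f (x t, x (t-h)) - f (x t, x t)⟫ := by
        rw [inner_sub_right]; ring
      rw [hsplit]
      have h1 := hdV (x t)
      have h2 : ⟪gradient V (x t), f (x t, x (t-h)) - f (x t, x t)⟫ ≤
          (k₂*‖x t‖^(γ-1)) * ((2*m₂*R^(μ-1)) * ((2*m*R^μ)*h)) := by
        refine le_trans (real_inner_le_norm _ _) ?_
        exact mul_le_mul (hgrad (x t)) hC2 (norm_nonneg _) (by positivity)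
      linarith
    refine le_trans hinner ?_
    have heq : (k₂*‖x t‖^(γ-1)) * ((2*m₂*R^(μ-1)) * ((2*m*R^μ)*h)) =
        4*(h*m*m₂*k₂) * (R^(μ-1)*R^μ) * ‖x t‖^(γ-1) := by ring
    linarith [heq.le]
  -- Part 1 : g stays below q for all t ≥ 0
  have P1 : ∀ t ≥ (0:ℝ), g t < q := by
    refine no_upcross hh.le
      (hgc.mono (fun s hs => by simp only [Set.mem_Ici] at *; linarith))
      (fun t ht => hg0 t ⟨by linarith [ht.1], ht.2⟩) ?_
    intro t ht hgt hle
    have hXle : ∀ s ∈ Set.Icc (t - 2*h) t, ‖x s‖ ≤ δ := by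
      intro s hs
      rcases le_or_gt s 0 with h0 | h0
      · exact le_trans (hxB s ⟨by linarith [hs.1], h0⟩) (by linarith)
      · have h1 : k₀ * ‖x s‖^γ ≤ q := le_trans (hVlb (x s)) (hle s ⟨h0.le, hs.2⟩)
        by_contra hcon
        push_neg at hcon
        have h2 := Real.rpow_lt_rpow hδ0.le hcon hγ0
        rw [hq] at h1
        linarith only [h1, mul_pos hk₀ (sub_pos.2 h2)]
    obtain ⟨d, hd, hbound⟩ := hDE t δ ht hδ0 hXle
    refine ⟨d, hd, ?_⟩
    have hxtlb : κ*δ ≤ ‖x t‖ := by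
      have h1 : k₁*(κ*δ)^γ ≤ k₁*‖x t‖^γ := by
        rw [hκδγq, ← hgt]; exact hVub (x t)
      by_contra hcon
      push_neg at hcon
      have h2 := Real.rpow_lt_rpow (norm_nonneg _) hcon hγ0
      linarith only [h1, mul_lt_mul_of_pos_left h2 hk₁]
    have hxtpos : 0 < ‖x t‖ := lt_of_lt_of_le hκδ hxtlb
    have hsplit : ‖x t‖^(γ+μ-1) = ‖x t‖^(γ-1) * ‖x t‖^μ := by
      rw [← Real.rpow_add hxtpos]; ring_nf
    have hBμ : (κ*δ)^μ ≤ ‖x t‖^μ := Real.rpow_le_rpow hκδ.le hxtlb hμ0.le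
    have hκδμ : (κ*δ)^μ = κ^μ * δ^μ := Real.mul_rpow hκpos.le hδ0.le
    have hApos : 0 < ‖x t‖^(γ-1) := Real.rpow_pos_of_pos hxtpos _
    have hδμpos : 0 < δ^μ := Real.rpow_pos_of_pos hδ0 μ
    have s1 : d ≤ (4*(h*m*m₂*k₂)*(δ^(μ-1)*δ^μ) - w*‖x t‖^μ) * ‖x t‖^(γ-1) := by
      rw [hsplit] at hbound
      calc d ≤ -w * (‖x t‖^(γ-1)*‖x t‖^μ) + 4*(h*m*m₂*k₂)*(δ^(μ-1)*δ^μ)*‖x t‖^(γ-1) := hbound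
        _ = _ := by ring
    have s2 : 4*(h*m*m₂*k₂)*(δ^(μ-1)*δ^μ) - w*‖x t‖^μ ≤
        4*(h*m*m₂*k₂)*(δ^(μ-1)*δ^μ) - w*(κ^μ*δ^μ) := by
      rw [← hκδμ]
      linarith [mul_le_mul_of_nonneg_left hBμ hw.le]
    have s3 : 4*(h*m*m₂*k₂)*(δ^(μ-1)*δ^μ) - w*(κ^μ*δ^μ) < 0 := by
      linarith only [mul_lt_mul_of_pos_right NUM hδμpos]
    calc d ≤ (4*(h*m*m₂*k₂)*(δ^(μ-1)*δ^μ) - w*‖x t‖^μ) * ‖x t‖^(γ-1) := s1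
      _ ≤ (4*(h*m*m₂*k₂)*(δ^(μ-1)*δ^μ) - w*(κ^μ*δ^μ)) * ‖x t‖^(γ-1) :=
          mul_le_mul_of_nonneg_right s2 hApos.le
      _ < 0 := mul_neg_of_neg_of_pos s3 hApos
  -- first conclusion
  have XltAll : ∀ t ≥ (0:ℝ), ‖x t‖ < δ := by
    intro t ht
    by_contra hcon
    push_neg at hcon
    have h1 := P1 t ht
    have h2 : k₀*δ^γ ≤ k₀*‖x t‖^γ :=
      mul_le_mul_of_nonneg_left (Real.rpow_le_rpow hδ0.le hcon hγ0.le) hk₀.le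
    have h3 := hVlb (x t)
    have h4 : g t = V (x t) := rfl
    rw [hq] at h1
    linarith
  -- Part 2 : convergence to zero
  have hbddabove : Filter.IsBoundedUnder (· ≤ ·) Filter.atTop g :=
    Filter.isBoundedUnder_of_eventually_le (a := q)
      (Filter.eventually_atTop.2 ⟨0, fun t ht => (P1 t ht).le⟩)
  have hbddbelow : Filter.IsBoundedUnder (· ≥ ·) Filter.atTop g :=
    Filter.isBoundedUnder_of_eventually_ge (a := 0)
      (Filter.Eventually.of_forall hgnn)
  have hcobdd : Filter.IsCoboundedUnder (· ≤ ·) Filter.atTop g :=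
    hbddbelow.isCoboundedUnder_le
  have hcobdd' : Filter.IsCoboundedUnder (· ≥ ·) Filter.atTop g :=
    hbddabove.isCoboundedUnder_ge
  set L := Filter.limsup g Filter.atTop with hLdef
  have hLq : L ≤ q := Filter.limsup_le_of_le hcobdd
    (Filter.eventually_atTop.2 ⟨0, fun t ht => (P1 t ht).le⟩)
  have hLnonpos : ¬ (0 < L) := by
    intro hLpos
    have hc1 : ContinuousAt (fun e : ℝ => w * (((L - e)/k₁) ^ (μ/γ))) 0 := by
      have hb : ContinuousAt (fun e : ℝ => (L - e)/k₁) 0 :=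
        (continuousAt_const.sub continuousAt_id).div_const _
      exact (hb.rpow_const (Or.inl (by simp only [id_eq, sub_zero]; positivity))).const_mul w
    have hc2 : ContinuousAt (fun e : ℝ =>
        4*(h*m*m₂*k₂) * ((((L + e)/k₀) ^ ((μ-1)/γ)) * (((L + e)/k₀) ^ (μ/γ)))) 0 := by
      have hb : ContinuousAt (fun e : ℝ => (L + e)/k₀) 0 :=
        (continuousAt_const.add continuousAt_id).div_const _
      have hb1 := hb.rpow_const (p := (μ-1)/γ) (Or.inl (by simp only [id_eq, add_zero]; positivity))
      have hb2 := hb.rpow_const (p := μ/γ) (Or.inl (by simp only [id_eq, add_zero]; positivity))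
      exact (hb1.mul hb2).const_mul _
    have hstrict : (fun e : ℝ =>
          4*(h*m*m₂*k₂) * ((((L + e)/k₀) ^ ((μ-1)/γ)) * (((L + e)/k₀) ^ (μ/γ)))) 0 <
        (fun e : ℝ => w * (((L - e)/k₁) ^ (μ/γ))) 0 := by
      simp only [add_zero, sub_zero]
      have hLk₀ : 0 < L/k₀ := by positivity
      have e1 : (L/k₀) ^ ((μ-1)/γ) ≤ δ^(μ-1) := by
        have h1 : L/k₀ ≤ δ^γ := by
          rw [div_le_iff₀ hk₀]; rw [hq] at hLq; linarith only [hLq]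
        calc (L/k₀)^((μ-1)/γ) ≤ (δ^γ)^((μ-1)/γ) :=
              Real.rpow_le_rpow hLk₀.le h1 (by positivity)
          _ = δ^(μ-1) := by
              rw [← Real.rpow_mul hδ0.le]; congr 1; field_simp
      have e2 : κ^μ * (L/k₀)^(μ/γ) = (L/k₁)^(μ/γ) := by
        have h1 : κ ^ μ = (k₀/k₁) ^ (μ/γ) := by
          rw [hκ, ← Real.rpow_mul (by positivity)]; congr 1; ring
        rw [h1, ← Real.mul_rpow (by positivity) hLk₀.le]
        congr 1
        field_simp
      have hY : 0 < (L/k₀)^(μ/γ) := Real.rpow_pos_of_pos hLk₀ _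
      calc 4*(h*m*m₂*k₂) * ((L/k₀)^((μ-1)/γ) * (L/k₀)^(μ/γ))
          ≤ 4*(h*m*m₂*k₂) * (δ^(μ-1) * (L/k₀)^(μ/γ)) := by
            apply mul_le_mul_of_nonneg_left (mul_le_mul_of_nonneg_right e1 hY.le) (by positivity)
        _ < w * κ^μ * (L/k₀)^(μ/γ) := by
            have h6 := mul_lt_mul_of_pos_right NUM hY
            calc 4*(h*m*m₂*k₂) * (δ^(μ-1) * (L/k₀)^(μ/γ))
                = 4*(h*m*m₂*k₂)*δ^(μ-1) * (L/k₀)^(μ/γ) := by ring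
              _ < w*κ^μ * (L/k₀)^(μ/γ) := h6
        _ = w * (L/k₁)^(μ/γ) := by rw [← e2]; ring
    have hev1 := hc2.eventually_lt hc1 hstrict
    have hev2 : ∀ᶠ e : ℝ in nhds 0, e < L :=
      continuousAt_id.eventually_lt continuousAt_const (by simpa using hLpos)
    obtain ⟨ε, ⟨hεstrict, hεL⟩, hεpos'⟩ :=
      (((hev1.and hev2).filter_mono (nhdsWithin_le_nhds : nhdsWithin (0:ℝ) (Set.Ioi 0) ≤ nhds 0)).and self_mem_nhdsWithin).exists
    have hεpos : (0:ℝ) < ε := hεpos'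
    set r₁ := ((L - ε)/k₁) ^ (1/γ) with hr₁def
    set R := ((L + ε)/k₀) ^ (1/γ) with hRdef
    have hLε : 0 < L - ε := sub_pos.2 hεL
    have hLε' : 0 < (L - ε)/k₁ := by positivity
    have hLε'' : 0 < (L + ε)/k₀ := by positivity
    have hr₁pos : 0 < r₁ := Real.rpow_pos_of_pos hLε' _
    have hRpos : 0 < R := Real.rpow_pos_of_pos hLε'' _
    have hr₁μ : r₁ ^ μ = ((L-ε)/k₁)^(μ/γ) := by
      rw [hr₁def, ← Real.rpow_mul hLε'.le]; congr 1; ring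
    have hRμ : R ^ μ = ((L+ε)/k₀)^(μ/γ) := by
      rw [hRdef, ← Real.rpow_mul hLε''.le]; congr 1; ring
    have hRμ1 : R ^ (μ-1) = ((L+ε)/k₀)^((μ-1)/γ) := by
      rw [hRdef, ← Real.rpow_mul hLε''.le]; congr 1; ring
    have hgap : 4*(h*m*m₂*k₂)*(R^(μ-1)*R^μ) < w * r₁^μ := by
      rw [hRμ1, hRμ, hr₁μ]; exact hεstrict
    set c := r₁^(γ-1) * (w * r₁^μ - 4*(h*m*m₂*k₂)*(R^(μ-1)*R^μ)) with hcdef2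
    have hr₁γ : 0 < r₁^(γ-1) := Real.rpow_pos_of_pos hr₁pos _
    have hcpos : 0 < c := mul_pos hr₁γ (by linarith only [hgap])
    obtain ⟨T₀', hT₀'⟩ := Filter.eventually_atTop.1
      (Filter.eventually_lt_of_limsup_lt (by linarith only [hεpos] : L < L + ε) hbddabove)
    set T₀ := max T₀' 0 with hT₀def
    have hT₀0 : (0:ℝ) ≤ T₀ := le_max_right _ _
    have hgT₀ : ∀ t, T₀ ≤ t → g t < L + ε := fun t htt =>
      hT₀' t (le_trans (le_max_left _ _) htt)
    set T₁ := T₀ + 2*h + 1 with hT₁def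
    have hKD : ∀ t, T₁ ≤ t → L - ε ≤ g t → ∃ d, HasDerivAt g d t ∧ d ≤ -c := by
      intro t htt hge
      have hXR : ∀ s ∈ Set.Icc (t-2*h) t, ‖x s‖ ≤ R := by
        intro s hs
        have h1 : k₀ * ‖x s‖^γ < L + ε :=
          lt_of_le_of_lt (hVlb (x s)) (hgT₀ s (by linarith only [hs.1, htt, hT₁def]))
        have h2 : ‖x s‖^γ ≤ (L+ε)/k₀ := by
          rw [le_div_iff₀ hk₀, mul_comm]; linarith only [h1]
        calc ‖x s‖ = (‖x s‖^γ)^(1/γ) := by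
              rw [one_div, Real.rpow_rpow_inv (norm_nonneg _) hγ0.ne']
          _ ≤ R := by
              rw [hRdef]; exact Real.rpow_le_rpow (by positivity) h2 (by positivity)
      obtain ⟨d, hd, hbd⟩ := hDE t R (by linarith only [htt, hT₁def, hT₀0, hh]) hRpos hXR
      refine ⟨d, hd, ?_⟩
      have hge' : L - ε ≤ k₁ * ‖x t‖^γ := le_trans hge (hVub (x t))
      have hxtlb : r₁ ≤ ‖x t‖ := by
        have h1 : (L-ε)/k₁ ≤ ‖x t‖^γ := by
          rw [div_le_iff₀ hk₁, mul_comm]; linarith only [hge']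
        calc r₁ = ((L-ε)/k₁)^(1/γ) := hr₁def
          _ ≤ (‖x t‖^γ)^(1/γ) := Real.rpow_le_rpow hLε'.le h1 (by positivity)
          _ = ‖x t‖ := by rw [one_div, Real.rpow_rpow_inv (norm_nonneg _) hγ0.ne']
      have hxtpos : 0 < ‖x t‖ := lt_of_lt_of_le hr₁pos hxtlb
      have hsplit : ‖x t‖^(γ+μ-1) = ‖x t‖^(γ-1) * ‖x t‖^μ := by
        rw [← Real.rpow_add hxtpos]; ring_nf
      have hA : r₁^(γ-1) ≤ ‖x t‖^(γ-1) := Real.rpow_le_rpow hr₁pos.le hxtlb hγ1.le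
      have hB : r₁^μ ≤ ‖x t‖^μ := Real.rpow_le_rpow hr₁pos.le hxtlb hμ0.le
      have s1 : d ≤ (4*(h*m*m₂*k₂)*(R^(μ-1)*R^μ) - w*‖x t‖^μ) * ‖x t‖^(γ-1) := by
        rw [hsplit] at hbd
        calc d ≤ -w * (‖x t‖^(γ-1)*‖x t‖^μ) +
              4*(h*m*m₂*k₂)*(R^(μ-1)*R^μ)*‖x t‖^(γ-1) := hbd
          _ = _ := by ring
      have s2 : (4*(h*m*m₂*k₂)*(R^(μ-1)*R^μ) - w*‖x t‖^μ) * ‖x t‖^(γ-1) ≤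
          (4*(h*m*m₂*k₂)*(R^(μ-1)*R^μ) - w*r₁^μ) * ‖x t‖^(γ-1) := by
        apply mul_le_mul_of_nonneg_right ?_ (Real.rpow_nonneg (norm_nonneg _) _)
        have h7 := mul_le_mul_of_nonneg_left hB hw.le
        linarith only [h7]
      have s3 : (4*(h*m*m₂*k₂)*(R^(μ-1)*R^μ) - w*r₁^μ) * ‖x t‖^(γ-1) ≤
          (4*(h*m*m₂*k₂)*(R^(μ-1)*R^μ) - w*r₁^μ) * r₁^(γ-1) :=
        mul_le_mul_of_nonpos_left hA (by linarith only [hgap])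
      have s4 : (4*(h*m*m₂*k₂)*(R^(μ-1)*R^μ) - w*r₁^μ) * r₁^(γ-1) = -c := by
        rw [hcdef2]; ring
      linarith only [s1, s2, s3, s4]
    by_cases hcase : ∃ t₀, T₁ ≤ t₀ ∧ g t₀ < L - ε
    · obtain ⟨t₀, ht₀T, hgt₀⟩ := hcase
      have hall : ∀ t ≥ t₀, g t < L - ε := by
        refine no_upcross le_rfl (hgc.mono (fun s hs => by
            simp only [Set.mem_Ici] at hs ⊢
            linarith only [hs, ht₀T, hT₁def, hT₀0, hh])) (fun t ht => by
            have he : t = t₀ := le_antisymm ht.2 ht.1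
            rw [he]; exact hgt₀) ?_
        intro t ht hgt _
        obtain ⟨d, hd, hdc⟩ := hKD t (by linarith only [ht, ht₀T]) (le_of_eq hgt.symm)
        exact ⟨d, hd, lt_of_le_of_lt hdc (by linarith only [hcpos])⟩
      have hfreq := Filter.frequently_lt_of_lt_limsup hcobdd (by linarith : L - ε < L)
      obtain ⟨t, hht⟩ := (hfreq.and_eventually (Filter.eventually_ge_atTop t₀)).exists
      exact absurd hht.1 (not_lt.2 (hall t hht.2).le)
    · push_neg at hcase
      set Gf : ℝ → ℝ := fun t => g t + c * t with hGfdef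
      have hGant : AntitoneOn Gf (Set.Ici T₁) := by
        apply antitoneOn_of_deriv_nonpos (convex_Ici T₁)
        · refine ((hgc.mono (fun s hs => ?_)).add
            (continuous_const.mul continuous_id).continuousOn)
          simp only [Set.mem_Ici] at hs ⊢
          linarith only [hs, hT₁def, hT₀0, hh]
        · intro t ht
          rw [interior_Ici] at ht
          obtain ⟨d, hd, _⟩ := hKD t ht.le (hcase t ht.le)
          have hDA : HasDerivAt Gf (d + c * 1) t := hd.add ((hasDerivAt_id t).const_mul c)
          exact hDA.differentiableAt.differentiableWithinAt
        · intro t ht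
          rw [interior_Ici] at ht
          obtain ⟨d, hd, hdc⟩ := hKD t ht.le (hcase t ht.le)
          have hDA : HasDerivAt Gf (d + c * 1) t := hd.add ((hasDerivAt_id t).const_mul c)
          rw [hDA.deriv]; linarith only [hdc, hcpos]
      set t₂ := max T₁ ((g T₁ + c * T₁)/c + 1) with ht₂def
      have ht₂T : T₁ ≤ t₂ := le_max_left _ _
      have h1 : Gf t₂ ≤ Gf T₁ := hGant Set.self_mem_Ici (Set.mem_Ici.2 ht₂T) ht₂T
      have h2 : (g T₁ + c*T₁)/c + 1 ≤ t₂ := le_max_right _ _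
      have h3 : g T₁ + c*T₁ < c * t₂ := by
        have h8 := mul_le_mul_of_nonneg_left h2 hcpos.le
        have e : c * ((g T₁ + c*T₁)/c + 1) = g T₁ + c*T₁ + c := by
          field_simp
        rw [e] at h8
        linarith only [h8, hcpos]
      have h4 := hgnn t₂
      have h5 : Gf t₂ = g t₂ + c * t₂ := rfl
      have h6 : Gf T₁ = g T₁ + c * T₁ := rfl
      linarith only [h1, h3, h4, h5, h6]
  have hliminf : (0:ℝ) ≤ Filter.liminf g Filter.atTop :=
    Filter.le_liminf_of_le hcobdd' (Filter.Eventually.of_forall hgnn)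
  have hgtend : Filter.Tendsto g Filter.atTop (nhds 0) :=
    tendsto_of_le_liminf_of_limsup_le hliminf (not_lt.1 hLnonpos) hbddabove hbddbelow
  refine ⟨XltAll, ?_⟩
  rw [tendsto_zero_iff_norm_tendsto_zero]
  have h1 : Filter.Tendsto (fun t => ‖x t‖^γ) Filter.atTop (nhds 0) := by
    have hupper : ∀ t, ‖x t‖^γ ≤ g t / k₀ := by
      intro t
      rw [le_div_iff₀ hk₀, mul_comm]
      exact hVlb (x t)
    have hdiv : Filter.Tendsto (fun t => g t / k₀) Filter.atTop (nhds 0) := by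
      have h9 := hgtend.div_const k₀
      simpa using h9
    exact squeeze_zero (fun t => Real.rpow_nonneg (norm_nonneg _) γ) hupper hdiv
  have h4 : (0:ℝ) ^ (1/γ) = 0 := Real.zero_rpow (by positivity)
  have h2 : Filter.Tendsto (fun r : ℝ => r ^ (1/γ)) (nhds 0) (nhds ((0:ℝ) ^ (1/γ))) :=
    Real.continuousAt_rpow_const 0 (1/γ) (Or.inr (by positivity))
  rw [h4] at h2
  have h5 := h2.comp h1
  refine h5.congr (fun t => ?_)
  simp only [Function.comp]
  rw [one_div, Real.rpow_rpow_inv (norm_nonneg _) hγ0.ne']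
end

section
/- Let χ > 0 be such that a₂ := w₁ − k₂ m χ^{2(γ−1)} > 0, set H₁ = (k₀/(h k₂ m (1 + χ^{−2μ})))^{1/(μ−1)}, let δ ∈ (0, H₁), and set a₁ = k₀ − h k₂ m (1 + χ^{−2μ}) δ^{μ−1}. Then for every continuous φ : [−h,0] → E with ‖φ‖_h ≤ δ one has v(φ) ≥ a₁‖φ(0)‖^γ + a₂ ∫_{−h}^{0} ‖φ(θ)‖^{γ+μ−1} dθ. -/
open Real Set RealInnerProductSpace

private lemma young_aux {χ : ℝ} (hχ : 0 < χ) {a b p q : ℝ} (ha : 0 ≤ a) (hb : 0 ≤ b)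
    (hp : 0 ≤ p) (hq : 0 ≤ q) :
    a ^ p * b ^ q ≤ χ ^ (-(2 * q)) * a ^ (p + q) + χ ^ (2 * p) * b ^ (p + q) := by
  have hχ2 : (0:ℝ) < χ ^ (2:ℝ) := Real.rpow_pos_of_pos hχ 2
  have h1 : (0:ℝ) ≤ χ ^ (-(2*q)) * a ^ (p+q) :=
    mul_nonneg (Real.rpow_nonneg hχ.le _) (Real.rpow_nonneg ha _)
  have h2 : (0:ℝ) ≤ χ ^ (2*p) * b ^ (p+q) :=
    mul_nonneg (Real.rpow_nonneg hχ.le _) (Real.rpow_nonneg hb _)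
  rcases le_or_gt a (χ ^ (2:ℝ) * b) with hc | hc
  · have h3 : a ^ p * b ^ q ≤ χ ^ (2*p) * b ^ (p+q) := by
      calc a ^ p * b ^ q ≤ (χ ^ (2:ℝ) * b) ^ p * b ^ q := by
            exact mul_le_mul_of_nonneg_right (Real.rpow_le_rpow ha hc hp)
              (Real.rpow_nonneg hb _)
        _ = χ ^ (2*p) * b ^ (p+q) := by
            rw [Real.mul_rpow hχ2.le hb, Real.rpow_add_of_nonneg hb hp hq,
              ← Real.rpow_mul hχ.le]
            ring
    linarith
  · have hb' : b ≤ χ ^ (-(2:ℝ)) * a := by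
      have := mul_le_mul_of_nonneg_left hc.le (Real.rpow_nonneg hχ.le (-(2:ℝ)))
      rwa [← mul_assoc, ← Real.rpow_add hχ, neg_add_cancel, Real.rpow_zero, one_mul] at this
    have h3 : a ^ p * b ^ q ≤ χ ^ (-(2*q)) * a ^ (p+q) := by
      calc a ^ p * b ^ q ≤ a ^ p * (χ ^ (-(2:ℝ)) * a) ^ q := by
            exact mul_le_mul_of_nonneg_left (Real.rpow_le_rpow hb hb' hq)
              (Real.rpow_nonneg ha _)
        _ = χ ^ (-(2*q)) * a ^ (p+q) := by
            rw [Real.mul_rpow (Real.rpow_nonneg hχ.le _) ha,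
              Real.rpow_add_of_nonneg ha hp hq, ← Real.rpow_mul hχ.le]
            ring_nf
    linarith

/-- Lemma 1: lower bound for the Lyapunov–Krasovskii functional `v`. -/
theorem functional_lower_bound
    {n : ℕ} (hn : 1 ≤ n)
    (h μ : ℝ) (hh : 0 < h) (hμ : 1 < μ)
    (f : EuclideanSpace ℝ (Fin n) × EuclideanSpace ℝ (Fin n) → EuclideanSpace ℝ (Fin n))
    (hf : Continuous f)
    (hhom : ∀ c > (0:ℝ), ∀ x y : EuclideanSpace ℝ (Fin n),
      f (c • x, c • y) = (c ^ μ) • f (x, y))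
    (m : ℝ) (hm : 0 < m)
    (hfb : ∀ x y : EuclideanSpace ℝ (Fin n), ‖f (x, y)‖ ≤ m * (‖x‖ ^ μ + ‖y‖ ^ μ))
    (γ : ℝ) (hγ : 2 ≤ γ)
    (V : EuclideanSpace ℝ (Fin n) → ℝ) (hV : ContDiff ℝ 1 V)
    (k₀ k₂ : ℝ) (hk₀ : 0 < k₀) (hk₂ : 0 < k₂)
    (hVlb : ∀ x : EuclideanSpace ℝ (Fin n), k₀ * ‖x‖ ^ γ ≤ V x)
    (hgrad : ∀ x : EuclideanSpace ℝ (Fin n), ‖gradient V x‖ ≤ k₂ * ‖x‖ ^ (γ - 1))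
    (w₁ w₂ : ℝ) (hw₁ : 0 < w₁) (hw₂ : 0 < w₂)
    (χ a₂ H₁ δ a₁ : ℝ)
    (hχ : 0 < χ)
    (ha₂ : a₂ = w₁ - k₂ * m * χ ^ (2 * (γ - 1))) (ha₂pos : 0 < a₂)
    (hH₁ : H₁ = (k₀ / (h * k₂ * m * (1 + χ ^ (-(2 * μ))))) ^ (1 / (μ - 1)))
    (hδ : δ ∈ Set.Ioo 0 H₁)
    (ha₁ : a₁ = k₀ - h * k₂ * m * (1 + χ ^ (-(2 * μ))) * δ ^ (μ - 1)) :
    ∀ φ : ℝ → EuclideanSpace ℝ (Fin n), ContinuousOn φ (Set.Icc (-h) 0) →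
      (⨆ θ : Set.Icc (-h) (0:ℝ), ‖φ θ.1‖) ≤ δ →
      a₁ * ‖φ 0‖ ^ γ + a₂ * ∫ θ in (-h)..0, ‖φ θ‖ ^ (γ + μ - 1) ≤
        V (φ 0) + ⟪gradient V (φ 0), ∫ θ in (-h)..0, f (φ 0, φ θ)⟫ +
          ∫ θ in (-h)..0, (w₁ + (h + θ) * w₂) * ‖φ θ‖ ^ (γ + μ - 1) := by
  intro φ hφ hsup
  obtain ⟨hδ0, hδH⟩ := hδ
  have hh' : (-h : ℝ) ≤ 0 := by linarith
  have huIcc : Set.uIcc (-h) (0:ℝ) = Set.Icc (-h) 0 := Set.uIcc_of_le hh'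
  have hmem0 : (0:ℝ) ∈ Set.Icc (-h) (0:ℝ) := ⟨hh', le_refl 0⟩
  set x := φ 0 with hxdef
  -- pointwise bound ‖φ θ‖ ≤ δ
  have hbdd : BddAbove (Set.range fun θ : Set.Icc (-h) (0:ℝ) => ‖φ θ.1‖) := by
    have he : (fun θ : Set.Icc (-h) (0:ℝ) => ‖φ θ.1‖)
        = (Set.Icc (-h) (0:ℝ)).restrict (fun θ => ‖φ θ‖) := rfl
    rw [he, show ((Set.Icc (-h) (0:ℝ)).restrict fun θ => ‖φ θ‖) = (Set.Icc (-h) (0:ℝ)).domRestrict (fun θ => ‖φ θ‖) from rfl, Set.range_domRestrict]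
    exact (isCompact_Icc.image_of_continuousOn hφ.norm).bddAbove
  have hφδ : ∀ θ ∈ Set.Icc (-h) (0:ℝ), ‖φ θ‖ ≤ δ := fun θ hθ =>
    le_trans (le_ciSup hbdd (⟨θ, hθ⟩ : Set.Icc (-h) (0:ℝ))) hsup
  have hxδ : ‖x‖ ≤ δ := hφδ 0 hmem0
  -- basic positivity
  have hχ' : (0:ℝ) < χ ^ (-(2*μ)) := Real.rpow_pos_of_pos hχ _
  have hexp : (0:ℝ) ≤ γ + μ - 1 := by linarith
  -- integrability facts
  have hcontφ : ContinuousOn (fun θ => ‖φ θ‖ ^ (γ + μ - 1)) (Set.Icc (-h) 0) :=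
    hφ.norm.rpow_const (fun t _ => Or.inr hexp)
  have hintA : IntervalIntegrable (fun θ => ‖φ θ‖ ^ (γ + μ - 1)) MeasureTheory.volume (-h) 0 :=
    (huIcc ▸ hcontφ).intervalIntegrable
  have hcontf : ContinuousOn (fun θ => f (x, φ θ)) (Set.Icc (-h) 0) :=
    hf.comp_continuousOn (continuousOn_const.prodMk hφ)
  have hintf : IntervalIntegrable (fun θ => f (x, φ θ)) MeasureTheory.volume (-h) 0 :=
    (huIcc ▸ hcontf).intervalIntegrable
  have hintnf : IntervalIntegrable (fun θ => ‖f (x, φ θ)‖) MeasureTheory.volume (-h) 0 :=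
    (huIcc ▸ hcontf.norm).intervalIntegrable
  have hintW : IntervalIntegrable (fun θ => (w₁ + (h + θ) * w₂) * ‖φ θ‖ ^ (γ + μ - 1))
      MeasureTheory.volume (-h) 0 :=
    (huIcc ▸ (((continuousOn_const).add ((continuousOn_const.add continuousOn_id).mul
      continuousOn_const)).mul hcontφ)).intervalIntegrable
  set A := ∫ θ in (-h)..0, ‖φ θ‖ ^ (γ + μ - 1) with hAdef
  have hA0 : 0 ≤ A :=
    intervalIntegral.integral_nonneg hh' (fun u _ => Real.rpow_nonneg (norm_nonneg _) _)
  set c1 : ℝ := h * k₂ * m * (1 + χ ^ (-(2*μ))) with hc1def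
  have hc1 : 0 ≤ c1 := by positivity
  set c2 : ℝ := k₂ * m * χ ^ (2*(γ-1)) with hc2def
  -- step: bound on the inner product term
  set B := ∫ θ in (-h)..0, f (x, φ θ) with hBdef
  have hnormx : 0 ≤ ‖x‖ := norm_nonneg x
  have hgB : ‖gradient V x‖ * ‖B‖ ≤ c1 * ‖x‖ ^ (γ + μ - 1) + c2 * A := by
    have step1 : ‖gradient V x‖ * ‖B‖ ≤ (k₂ * ‖x‖ ^ (γ - 1)) * ∫ θ in (-h)..0, ‖f (x, φ θ)‖ := by
      apply mul_le_mul (hgrad x) (intervalIntegral.norm_integral_le_integral_norm hh')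
        (norm_nonneg _) (by positivity)
    have step2 : (k₂ * ‖x‖ ^ (γ - 1)) * ∫ θ in (-h)..0, ‖f (x, φ θ)‖
        = ∫ θ in (-h)..0, (k₂ * ‖x‖ ^ (γ - 1)) * ‖f (x, φ θ)‖ :=
      (intervalIntegral.integral_const_mul _ _).symm
    have hptwise : ∀ θ ∈ Set.Icc (-h) (0:ℝ),
        (k₂ * ‖x‖ ^ (γ - 1)) * ‖f (x, φ θ)‖
          ≤ k₂ * m * ((1 + χ ^ (-(2*μ))) * ‖x‖ ^ (γ + μ - 1)
              + χ ^ (2*(γ-1)) * ‖φ θ‖ ^ (γ + μ - 1)) := by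
      intro θ _
      have hy : 0 ≤ ‖φ θ‖ := norm_nonneg _
      have hb1 : (k₂ * ‖x‖ ^ (γ - 1)) * ‖f (x, φ θ)‖
          ≤ (k₂ * ‖x‖ ^ (γ - 1)) * (m * (‖x‖ ^ μ + ‖φ θ‖ ^ μ)) :=
        mul_le_mul_of_nonneg_left (hfb x (φ θ)) (by positivity)
      have hxx : ‖x‖ ^ (γ - 1) * ‖x‖ ^ μ = ‖x‖ ^ (γ + μ - 1) := by
        rw [← Real.rpow_add_of_nonneg hnormx (by linarith) (by linarith)]
        ring_nf
      have hyoung : ‖x‖ ^ (γ - 1) * ‖φ θ‖ ^ μ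
          ≤ χ ^ (-(2*μ)) * ‖x‖ ^ (γ + μ - 1) + χ ^ (2*(γ-1)) * ‖φ θ‖ ^ (γ + μ - 1) := by
        have := young_aux hχ hnormx hy (by linarith : (0:ℝ) ≤ γ - 1) (by linarith : (0:ℝ) ≤ μ)
        have he : γ - 1 + μ = γ + μ - 1 := by ring
        rwa [he] at this
      calc (k₂ * ‖x‖ ^ (γ - 1)) * ‖f (x, φ θ)‖
          ≤ (k₂ * ‖x‖ ^ (γ - 1)) * (m * (‖x‖ ^ μ + ‖φ θ‖ ^ μ)) := hb1
        _ = k₂ * m * (‖x‖ ^ (γ - 1) * ‖x‖ ^ μ + ‖x‖ ^ (γ - 1) * ‖φ θ‖ ^ μ) := by ring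
        _ ≤ k₂ * m * (‖x‖ ^ (γ + μ - 1) + (χ ^ (-(2*μ)) * ‖x‖ ^ (γ + μ - 1)
              + χ ^ (2*(γ-1)) * ‖φ θ‖ ^ (γ + μ - 1))) := by
            rw [hxx]
            have hkm : (0:ℝ) ≤ k₂ * m := by positivity
            exact mul_le_mul_of_nonneg_left (by linarith) hkm
        _ = k₂ * m * ((1 + χ ^ (-(2*μ))) * ‖x‖ ^ (γ + μ - 1)
              + χ ^ (2*(γ-1)) * ‖φ θ‖ ^ (γ + μ - 1)) := by ring
    have hintL : IntervalIntegrable (fun θ => (k₂ * ‖x‖ ^ (γ - 1)) * ‖f (x, φ θ)‖)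
        MeasureTheory.volume (-h) 0 := hintnf.const_mul _
    have hintR : IntervalIntegrable (fun θ => k₂ * m * ((1 + χ ^ (-(2*μ))) * ‖x‖ ^ (γ + μ - 1)
        + χ ^ (2*(γ-1)) * ‖φ θ‖ ^ (γ + μ - 1))) MeasureTheory.volume (-h) 0 := by
      apply IntervalIntegrable.const_mul
      exact intervalIntegrable_const.add (hintA.const_mul _)
    have step3 : (∫ θ in (-h)..0, (k₂ * ‖x‖ ^ (γ - 1)) * ‖f (x, φ θ)‖)
        ≤ ∫ θ in (-h)..0, k₂ * m * ((1 + χ ^ (-(2*μ))) * ‖x‖ ^ (γ + μ - 1)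
            + χ ^ (2*(γ-1)) * ‖φ θ‖ ^ (γ + μ - 1)) :=
      intervalIntegral.integral_mono_on hh' hintL hintR hptwise
    have step4 : (∫ θ in (-h)..0, k₂ * m * ((1 + χ ^ (-(2*μ))) * ‖x‖ ^ (γ + μ - 1)
        + χ ^ (2*(γ-1)) * ‖φ θ‖ ^ (γ + μ - 1)))
        = c1 * ‖x‖ ^ (γ + μ - 1) + c2 * A := by
      rw [intervalIntegral.integral_const_mul, intervalIntegral.integral_add
        intervalIntegrable_const (hintA.const_mul _), intervalIntegral.integral_const,
        intervalIntegral.integral_const_mul]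
      simp only [smul_eq_mul, hc1def, hc2def, hAdef]
      ring
    calc ‖gradient V x‖ * ‖B‖
        ≤ (k₂ * ‖x‖ ^ (γ - 1)) * ∫ θ in (-h)..0, ‖f (x, φ θ)‖ := step1
      _ = ∫ θ in (-h)..0, (k₂ * ‖x‖ ^ (γ - 1)) * ‖f (x, φ θ)‖ := step2
      _ ≤ _ := step3
      _ = _ := step4
  have hIP : -(c1 * ‖x‖ ^ (γ + μ - 1) + c2 * A) ≤ ⟪gradient V x, B⟫ := by
    have h1 := (abs_le.mp (abs_real_inner_le_norm (gradient V x) B)).1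
    linarith
  -- bound ‖x‖^(γ+μ-1) ≤ δ^(μ-1) * ‖x‖^γ
  have hY : c1 * ‖x‖ ^ (γ + μ - 1) ≤ c1 * δ ^ (μ - 1) * ‖x‖ ^ γ := by
    have h1 : ‖x‖ ^ (γ + μ - 1) = ‖x‖ ^ γ * ‖x‖ ^ (μ - 1) := by
      rw [← Real.rpow_add_of_nonneg hnormx (by linarith) (by linarith)]
      ring_nf
    have h2 : ‖x‖ ^ (μ - 1) ≤ δ ^ (μ - 1) := Real.rpow_le_rpow hnormx hxδ (by linarith)
    calc c1 * ‖x‖ ^ (γ + μ - 1) = c1 * (‖x‖ ^ γ * ‖x‖ ^ (μ - 1)) := by rw [h1]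
      _ ≤ c1 * (‖x‖ ^ γ * δ ^ (μ - 1)) := by
          apply mul_le_mul_of_nonneg_left _ hc1
          exact mul_le_mul_of_nonneg_left h2 (Real.rpow_nonneg hnormx _)
      _ = c1 * δ ^ (μ - 1) * ‖x‖ ^ γ := by ring
  -- bound on the last integral
  have hW : w₁ * A ≤ ∫ θ in (-h)..0, (w₁ + (h + θ) * w₂) * ‖φ θ‖ ^ (γ + μ - 1) := by
    have hint1 : IntervalIntegrable (fun θ => w₁ * ‖φ θ‖ ^ (γ + μ - 1))
        MeasureTheory.volume (-h) 0 := hintA.const_mul _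
    have hmono : ∀ θ ∈ Set.Icc (-h) (0:ℝ),
        w₁ * ‖φ θ‖ ^ (γ + μ - 1) ≤ (w₁ + (h + θ) * w₂) * ‖φ θ‖ ^ (γ + μ - 1) := by
      intro θ hθ
      apply mul_le_mul_of_nonneg_right _ (Real.rpow_nonneg (norm_nonneg _) _)
      nlinarith [hθ.1, hw₂.le]
    have := intervalIntegral.integral_mono_on hh' hint1 hintW hmono
    rwa [intervalIntegral.integral_const_mul] at this
  have hVx : k₀ * ‖x‖ ^ γ ≤ V x := hVlb x
  have hkey : a₁ * ‖x‖ ^ γ + a₂ * A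
      = k₀ * ‖x‖ ^ γ - c1 * δ ^ (μ - 1) * ‖x‖ ^ γ + w₁ * A - c2 * A := by
    rw [ha₁, ha₂, hc1def, hc2def]; ring
  linarith
end

section
/- Let δ > 0 and set b₁ = k₁ + 2 h m k₂ δ^{μ−1}, b₂ = (m k₂ + w₁ + h w₂)δ^{μ−1}, and b = max{b₁, b₂}. Then for every continuous φ : [−h,0] → E with ‖φ‖_h ≤ δ one has v(φ) ≤ b·(‖φ(0)‖^γ + ∫_{−h}^{0} ‖φ(θ)‖^γ dθ). -/
open Real Set RealInnerProductSpace

lemma my_rpow_sub_one_mul {a γ : ℝ} (ha : 0 ≤ a) (hγ : 1 ≤ γ) : a ^ (γ - 1) * a = a ^ γ := by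
  rcases eq_or_lt_of_le ha with h0 | h0
  · have hγ0 : γ ≠ 0 := by linarith
    simp [← h0, Real.zero_rpow hγ0]
  · rw [← Real.rpow_add_one (ne_of_gt h0)]
    ring_nf

lemma my_aux1 {a δ γ μ : ℝ} (ha : 0 ≤ a) (haδ : a ≤ δ) (hγ : 0 < γ) (hμ : 1 ≤ μ) :
    a ^ (γ + μ - 1) ≤ δ ^ (μ - 1) * a ^ γ := by
  rcases eq_or_lt_of_le ha with h0 | h0
  · have h1 : γ + μ - 1 ≠ 0 := by linarith
    have h2 : γ ≠ 0 := ne_of_gt hγ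
    simp [← h0, Real.zero_rpow h1, Real.zero_rpow h2]
  · have : a ^ (γ + μ - 1) = a ^ γ * a ^ (μ - 1) := by
      rw [← Real.rpow_add h0]; ring_nf
    rw [this]
    have h3 : a ^ (μ - 1) ≤ δ ^ (μ - 1) := Real.rpow_le_rpow ha haδ (by linarith)
    have h4 : (0:ℝ) ≤ a ^ γ := Real.rpow_nonneg ha _
    nlinarith

lemma my_aux3 {a δ γ μ : ℝ} (ha : 0 ≤ a) (haδ : a ≤ δ) (hγ : 1 ≤ γ) (hμ : 1 ≤ μ) :
    a ^ (γ - 1) * a ^ μ ≤ δ ^ (μ - 1) * a ^ γ := by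
  rcases eq_or_lt_of_le ha with h0 | h0
  · have h1 : μ ≠ 0 := by linarith
    simp [← h0, Real.zero_rpow h1]
    exact mul_nonneg (Real.rpow_nonneg (le_trans ha haδ) _) (Real.rpow_nonneg le_rfl _)
  · rw [← Real.rpow_add h0]
    have := my_aux1 ha haδ (show (0:ℝ) < γ by linarith) hμ
    calc a ^ (γ - 1 + μ) = a ^ (γ + μ - 1) := by ring_nf
      _ ≤ _ := this

lemma my_aux2 {a b δ γ μ : ℝ} (ha : 0 ≤ a) (hb : 0 ≤ b) (haδ : a ≤ δ) (hbδ : b ≤ δ)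
    (hγ : 2 ≤ γ) (hμ : 1 ≤ μ) :
    a ^ (γ - 1) * b ^ μ ≤ δ ^ (μ - 1) * (a ^ γ + b ^ γ) := by
  have hδ0 : 0 ≤ δ := le_trans ha haδ
  have hbμ : b ^ μ = b ^ (μ - 1) * b := (my_rpow_sub_one_mul hb hμ).symm
  have hkey : a ^ (γ - 1) * b ≤ a ^ γ + b ^ γ := by
    rcases le_total a b with hab | hab
    · have h1 : a ^ (γ - 1) ≤ b ^ (γ - 1) := Real.rpow_le_rpow ha hab (by linarith)
      have h2 : b ^ (γ - 1) * b = b ^ γ := my_rpow_sub_one_mul hb (by linarith)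
      have h3 : (0:ℝ) ≤ a ^ γ := Real.rpow_nonneg ha _
      nlinarith
    · have h2 : a ^ (γ - 1) * a = a ^ γ := my_rpow_sub_one_mul ha (by linarith)
      have h3 : (0:ℝ) ≤ b ^ γ := Real.rpow_nonneg hb _
      have h4 : (0:ℝ) ≤ a ^ (γ - 1) := Real.rpow_nonneg ha _
      nlinarith
  have h5 : b ^ (μ - 1) ≤ δ ^ (μ - 1) := Real.rpow_le_rpow hb hbδ (by linarith)
  have h6 : (0:ℝ) ≤ a ^ (γ - 1) * b := mul_nonneg (Real.rpow_nonneg ha _) hb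
  have h7 : (0:ℝ) ≤ b ^ (μ - 1) := Real.rpow_nonneg hb _
  calc a ^ (γ - 1) * b ^ μ = (a ^ (γ - 1) * b) * b ^ (μ - 1) := by rw [hbμ]; ring
    _ ≤ (a ^ γ + b ^ γ) * δ ^ (μ - 1) := mul_le_mul hkey h5 h7 (by positivity)
    _ = δ ^ (μ - 1) * (a ^ γ + b ^ γ) := by ring

set_option maxHeartbeats 1000000 in
/-- Lemma 2: upper bound for the Lyapunov–Krasovskii functional `v` on the ball `‖φ‖_h ≤ δ`. -/
theorem functional_upper_bound
    {n : ℕ} (hn : 1 ≤ n)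
    (h μ : ℝ) (hh : 0 < h) (hμ : 1 < μ)
    (f : EuclideanSpace ℝ (Fin n) × EuclideanSpace ℝ (Fin n) → EuclideanSpace ℝ (Fin n))
    (hf : Continuous f)
    (m : ℝ) (hm : 0 < m)
    (hfb : ∀ x y : EuclideanSpace ℝ (Fin n), ‖f (x, y)‖ ≤ m * (‖x‖ ^ μ + ‖y‖ ^ μ))
    (γ : ℝ) (hγ : 2 ≤ γ)
    (V : EuclideanSpace ℝ (Fin n) → ℝ) (hV : ContDiff ℝ 1 V)
    (k₁ k₂ : ℝ) (hk₁ : 0 < k₁) (hk₂ : 0 < k₂)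
    (hVub : ∀ x : EuclideanSpace ℝ (Fin n), V x ≤ k₁ * ‖x‖ ^ γ)
    (hgrad : ∀ x : EuclideanSpace ℝ (Fin n), ‖gradient V x‖ ≤ k₂ * ‖x‖ ^ (γ - 1))
    (w₁ w₂ : ℝ) (hw₁ : 0 < w₁) (hw₂ : 0 < w₂)
    (δ b₁ b₂ b : ℝ) (hδ : 0 < δ)
    (hb₁ : b₁ = k₁ + 2 * h * m * k₂ * δ ^ (μ - 1))
    (hb₂ : b₂ = (m * k₂ + w₁ + h * w₂) * δ ^ (μ - 1))
    (hb : b = max b₁ b₂) :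
    ∀ φ : ℝ → EuclideanSpace ℝ (Fin n), ContinuousOn φ (Set.Icc (-h) 0) →
      (⨆ θ : Set.Icc (-h) (0:ℝ), ‖φ θ.1‖) ≤ δ →
      V (φ 0) + ⟪gradient V (φ 0), ∫ θ in (-h)..0, f (φ 0, φ θ)⟫ +
          ∫ θ in (-h)..0, (w₁ + (h + θ) * w₂) * ‖φ θ‖ ^ (γ + μ - 1) ≤
        b * (‖φ 0‖ ^ γ + ∫ θ in (-h)..0, ‖φ θ‖ ^ γ) := by
  intro φ hφ hsup
  have hle : (-h) ≤ (0:ℝ) := by linarith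
  have hIcc : Set.uIcc (-h) (0:ℝ) = Set.Icc (-h) 0 := Set.uIcc_of_le hle
  -- pointwise bound on φ
  have hrest : Continuous ((Set.Icc (-h) (0:ℝ)).restrict φ) :=
    continuousOn_iff_continuous_restrict.mp hφ
  have hbdd : BddAbove (Set.range fun θ : Set.Icc (-h) (0:ℝ) => ‖φ θ.1‖) :=
    (isCompact_range hrest.norm).bddAbove
  have hφδ : ∀ θ ∈ Set.Icc (-h) (0:ℝ), ‖φ θ‖ ≤ δ := fun θ hθ =>
    le_trans (le_ciSup hbdd ⟨θ, hθ⟩) hsup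
  have h0mem : (0:ℝ) ∈ Set.Icc (-h) (0:ℝ) := ⟨hle, le_refl 0⟩
  have hx0 : ‖φ 0‖ ≤ δ := hφδ 0 h0mem
  set A := ‖φ 0‖ ^ γ with hAdef
  set I := ∫ θ in (-h)..0, ‖φ θ‖ ^ γ with hIdef
  have hA : 0 ≤ A := Real.rpow_nonneg (norm_nonneg _) _
  -- integrability facts
  have hcγ : ContinuousOn (fun θ => ‖φ θ‖ ^ γ) (Set.Icc (-h) (0:ℝ)) :=
    ContinuousOn.rpow_const hφ.norm (fun θ _ => Or.inr (by linarith))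
  have intγ : IntervalIntegrable (fun θ => ‖φ θ‖ ^ γ) MeasureTheory.volume (-h) 0 :=
    (hcγ.mono (by rw [hIcc])).intervalIntegrable
  have hI : 0 ≤ I :=
    intervalIntegral.integral_nonneg hle (fun θ _ => Real.rpow_nonneg (norm_nonneg _) _)
  have hcf : ContinuousOn (fun θ => ‖f (φ 0, φ θ)‖) (Set.Icc (-h) (0:ℝ)) :=
    (hf.comp_continuousOn (continuousOn_const.prodMk hφ)).norm
  have int2 : IntervalIntegrable (fun θ => k₂ * ‖φ 0‖ ^ (γ - 1) * ‖f (φ 0, φ θ)‖)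
      MeasureTheory.volume (-h) 0 :=
    ((continuousOn_const.mul hcf).mono (by rw [hIcc])).intervalIntegrable
  have int3 : IntervalIntegrable (fun θ => m * k₂ * δ ^ (μ - 1) * (2 * A + ‖φ θ‖ ^ γ))
      MeasureTheory.volume (-h) 0 :=
    ((continuousOn_const.mul (continuousOn_const.add hcγ)).mono (by rw [hIcc])).intervalIntegrable
  have hcγμ : ContinuousOn (fun θ => ‖φ θ‖ ^ (γ + μ - 1)) (Set.Icc (-h) (0:ℝ)) :=
    ContinuousOn.rpow_const hφ.norm (fun θ _ => Or.inr (by linarith))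
  have int4 : IntervalIntegrable (fun θ => (w₁ + (h + θ) * w₂) * ‖φ θ‖ ^ (γ + μ - 1))
      MeasureTheory.volume (-h) 0 :=
    (((continuousOn_const.add ((continuousOn_const.add continuousOn_id).mul
      continuousOn_const)).mul hcγμ).mono (by rw [hIcc])).intervalIntegrable
  have int5 : IntervalIntegrable (fun θ => (w₁ + h * w₂) * δ ^ (μ - 1) * ‖φ θ‖ ^ γ)
      MeasureTheory.volume (-h) 0 :=
    ((continuousOn_const.mul hcγ).mono (by rw [hIcc])).intervalIntegrable
  -- Term 1
  have hT1 : V (φ 0) ≤ k₁ * A := hVub _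
  -- Term 2
  have hT2 : ⟪gradient V (φ 0), ∫ θ in (-h)..0, f (φ 0, φ θ)⟫ ≤
      m * k₂ * δ ^ (μ - 1) * (2 * h * A + I) := by
    have hnorm : ‖∫ θ in (-h)..0, f (φ 0, φ θ)‖ ≤ ∫ θ in (-h)..0, ‖f (φ 0, φ θ)‖ :=
      intervalIntegral.norm_integral_le_integral_norm hle
    have hintnn : (0:ℝ) ≤ ∫ θ in (-h)..0, ‖f (φ 0, φ θ)‖ :=
      intervalIntegral.integral_nonneg hle (fun θ _ => norm_nonneg _)
    calc ⟪gradient V (φ 0), ∫ θ in (-h)..0, f (φ 0, φ θ)⟫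
        ≤ ‖gradient V (φ 0)‖ * ‖∫ θ in (-h)..0, f (φ 0, φ θ)‖ := real_inner_le_norm _ _
      _ ≤ (k₂ * ‖φ 0‖ ^ (γ - 1)) * (∫ θ in (-h)..0, ‖f (φ 0, φ θ)‖) :=
          mul_le_mul (hgrad _) hnorm (norm_nonneg _)
            (by positivity)
      _ = ∫ θ in (-h)..0, k₂ * ‖φ 0‖ ^ (γ - 1) * ‖f (φ 0, φ θ)‖ := by
          rw [← intervalIntegral.integral_const_mul]
      _ ≤ ∫ θ in (-h)..0, m * k₂ * δ ^ (μ - 1) * (2 * A + ‖φ θ‖ ^ γ) := by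
          apply intervalIntegral.integral_mono_on hle int2 int3
          intro θ hθ
          have hbδ : ‖φ θ‖ ≤ δ := hφδ θ hθ
          have h1 : k₂ * ‖φ 0‖ ^ (γ - 1) * ‖f (φ 0, φ θ)‖ ≤
              k₂ * ‖φ 0‖ ^ (γ - 1) * (m * (‖φ 0‖ ^ μ + ‖φ θ‖ ^ μ)) :=
            mul_le_mul_of_nonneg_left (hfb _ _) (by positivity)
          have h2 : ‖φ 0‖ ^ (γ - 1) * ‖φ 0‖ ^ μ ≤ δ ^ (μ - 1) * ‖φ 0‖ ^ γ :=
            my_aux3 (norm_nonneg _) hx0 (by linarith) (by linarith)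
          have h3 : ‖φ 0‖ ^ (γ - 1) * ‖φ θ‖ ^ μ ≤ δ ^ (μ - 1) * (‖φ 0‖ ^ γ + ‖φ θ‖ ^ γ) :=
            my_aux2 (norm_nonneg _) (norm_nonneg _) hx0 hbδ hγ (by linarith)
          have hmk : (0:ℝ) ≤ m * k₂ := by positivity
          nlinarith [mul_le_mul_of_nonneg_left (add_le_add h2 h3) hmk]
      _ = m * k₂ * δ ^ (μ - 1) * (2 * h * A + I) := by
          rw [intervalIntegral.integral_const_mul,
            intervalIntegral.integral_add intervalIntegrable_const intγ,
            intervalIntegral.integral_const, smul_eq_mul, ← hIdef]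
          ring
  -- Term 3
  have hT3 : (∫ θ in (-h)..0, (w₁ + (h + θ) * w₂) * ‖φ θ‖ ^ (γ + μ - 1)) ≤
      (w₁ + h * w₂) * δ ^ (μ - 1) * I := by
    calc (∫ θ in (-h)..0, (w₁ + (h + θ) * w₂) * ‖φ θ‖ ^ (γ + μ - 1))
        ≤ ∫ θ in (-h)..0, (w₁ + h * w₂) * δ ^ (μ - 1) * ‖φ θ‖ ^ γ := by
          apply intervalIntegral.integral_mono_on hle int4 int5
          intro θ hθ
          have hbδ : ‖φ θ‖ ≤ δ := hφδ θ hθ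
          have hw : w₁ + (h + θ) * w₂ ≤ w₁ + h * w₂ := by nlinarith [hθ.2]
          have hwnn : 0 ≤ w₁ + (h + θ) * w₂ := by nlinarith [hθ.1]
          have hp : ‖φ θ‖ ^ (γ + μ - 1) ≤ δ ^ (μ - 1) * ‖φ θ‖ ^ γ :=
            my_aux1 (norm_nonneg _) hbδ (by linarith) (by linarith)
          calc (w₁ + (h + θ) * w₂) * ‖φ θ‖ ^ (γ + μ - 1)
              ≤ (w₁ + h * w₂) * (δ ^ (μ - 1) * ‖φ θ‖ ^ γ) :=
                mul_le_mul hw hp (Real.rpow_nonneg (norm_nonneg _) _) (by positivity)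
            _ = (w₁ + h * w₂) * δ ^ (μ - 1) * ‖φ θ‖ ^ γ := by ring
      _ = (w₁ + h * w₂) * δ ^ (μ - 1) * I := by
          rw [intervalIntegral.integral_const_mul, ← hIdef]
  -- combine
  have hbA : b₁ * A ≤ b * A := by
    rw [hb]; exact mul_le_mul_of_nonneg_right (le_max_left _ _) hA
  have hbI : b₂ * I ≤ b * I := by
    rw [hb]; exact mul_le_mul_of_nonneg_right (le_max_right _ _) hI
  have hb1A : k₁ * A + m * k₂ * δ ^ (μ - 1) * (2 * h * A + I) +
      (w₁ + h * w₂) * δ ^ (μ - 1) * I = b₁ * A + b₂ * I := by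
    rw [hb₁, hb₂]; ring
  nlinarith [hT1, hT2, hT3, hbA, hbI]
end

section
/- Set β = (2 k₂ m + w₁ + h w₂)·h. Then for every continuous φ : [−h,0] → E one has v(φ) ≤ k₁‖φ(0)‖^γ + β‖φ‖_h^{γ+μ−1}. -/
open Real Set RealInnerProductSpace

/-- The bound `v(φ) ≤ k₁‖φ(0)‖^γ + β‖φ‖_h^{γ+μ-1}` with `β = (2k₂m + w₁ + hw₂)h`. -/
theorem functional_upper_bound_beta
    {n : ℕ} (hn : 1 ≤ n)
    (h μ : ℝ) (hh : 0 < h) (hμ : 1 < μ)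
    (f : EuclideanSpace ℝ (Fin n) × EuclideanSpace ℝ (Fin n) → EuclideanSpace ℝ (Fin n))
    (hf : Continuous f)
    (m : ℝ) (hm : 0 < m)
    (hfb : ∀ x y : EuclideanSpace ℝ (Fin n), ‖f (x, y)‖ ≤ m * (‖x‖ ^ μ + ‖y‖ ^ μ))
    (γ : ℝ) (hγ : 2 ≤ γ)
    (V : EuclideanSpace ℝ (Fin n) → ℝ) (hV : ContDiff ℝ 1 V)
    (k₁ k₂ : ℝ) (hk₁ : 0 < k₁) (hk₂ : 0 < k₂)
    (hVub : ∀ x : EuclideanSpace ℝ (Fin n), V x ≤ k₁ * ‖x‖ ^ γ)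
    (hgrad : ∀ x : EuclideanSpace ℝ (Fin n), ‖gradient V x‖ ≤ k₂ * ‖x‖ ^ (γ - 1))
    (w₁ w₂ : ℝ) (hw₁ : 0 < w₁) (hw₂ : 0 < w₂)
    (β : ℝ) (hβ : β = (2 * k₂ * m + w₁ + h * w₂) * h) :
    ∀ φ : ℝ → EuclideanSpace ℝ (Fin n), ContinuousOn φ (Set.Icc (-h) 0) →
      V (φ 0) + ⟪gradient V (φ 0), ∫ θ in (-h)..0, f (φ 0, φ θ)⟫ +
          ∫ θ in (-h)..0, (w₁ + (h + θ) * w₂) * ‖φ θ‖ ^ (γ + μ - 1) ≤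
        k₁ * ‖φ 0‖ ^ γ + β * (⨆ θ : Set.Icc (-h) (0:ℝ), ‖φ θ.1‖) ^ (γ + μ - 1) := by
  intro φ hφ
  obtain ⟨C, hC⟩ := isCompact_Icc.exists_bound_of_continuousOn hφ
  set M : ℝ := ⨆ θ : Set.Icc (-h) (0:ℝ), ‖φ θ.1‖ with hMdef
  have hbdd : BddAbove (Set.range fun θ : Set.Icc (-h) (0:ℝ) => ‖φ θ.1‖) := by
    refine ⟨C, ?_⟩
    rintro _ ⟨θ, rfl⟩
    exact hC θ.1 θ.2
  have h0mem : (0:ℝ) ∈ Set.Icc (-h) (0:ℝ) := ⟨by linarith, le_refl 0⟩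
  have hM : ∀ θ ∈ Set.Icc (-h) (0:ℝ), ‖φ θ‖ ≤ M := fun θ hθ =>
    le_ciSup hbdd (⟨θ, hθ⟩ : Set.Icc (-h) (0:ℝ))
  have hMnn : 0 ≤ M := le_trans (norm_nonneg _) (hM 0 h0mem)
  have hμ0 : (0:ℝ) ≤ μ := by linarith
  have hp1 : (0:ℝ) ≤ γ - 1 := by linarith
  have hpnn : (0:ℝ) ≤ γ + μ - 1 := by linarith
  -- bound on the integral of f
  have hnormI : ‖∫ θ in (-h)..0, f (φ 0, φ θ)‖ ≤ (2 * m * M ^ μ) * h := by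
    have key : ∀ x ∈ Set.uIoc (-h) (0:ℝ), ‖f (φ 0, φ x)‖ ≤ 2 * m * M ^ μ := by
      intro x hx
      rw [Set.uIoc_of_le (by linarith : -h ≤ (0:ℝ))] at hx
      have hxm : x ∈ Set.Icc (-h) (0:ℝ) := ⟨le_of_lt hx.1, hx.2⟩
      calc ‖f (φ 0, φ x)‖ ≤ m * (‖φ 0‖ ^ μ + ‖φ x‖ ^ μ) := hfb _ _
        _ ≤ m * (M ^ μ + M ^ μ) := by
            apply mul_le_mul_of_nonneg_left _ hm.le
            exact add_le_add (Real.rpow_le_rpow (norm_nonneg _) (hM 0 h0mem) hμ0)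
              (Real.rpow_le_rpow (norm_nonneg _) (hM x hxm) hμ0)
        _ = 2 * m * M ^ μ := by ring
    have := intervalIntegral.norm_integral_le_of_norm_le_const key
    calc ‖∫ θ in (-h)..0, f (φ 0, φ θ)‖ ≤ 2 * m * M ^ μ * |0 - (-h)| := this
      _ = 2 * m * M ^ μ * h := by rw [sub_neg_eq_add, zero_add, abs_of_pos hh]
  -- bound on the inner product term
  have hinner : ⟪gradient V (φ 0), ∫ θ in (-h)..0, f (φ 0, φ θ)⟫ ≤
      2 * k₂ * m * h * M ^ (γ + μ - 1) := by
    have h1 : ‖gradient V (φ 0)‖ ≤ k₂ * M ^ (γ - 1) :=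
      le_trans (hgrad _) (mul_le_mul_of_nonneg_left
        (Real.rpow_le_rpow (norm_nonneg _) (hM 0 h0mem) hp1) hk₂.le)
    calc ⟪gradient V (φ 0), ∫ θ in (-h)..0, f (φ 0, φ θ)⟫
        ≤ ‖gradient V (φ 0)‖ * ‖∫ θ in (-h)..0, f (φ 0, φ θ)‖ := real_inner_le_norm _ _
      _ ≤ (k₂ * M ^ (γ - 1)) * ((2 * m * M ^ μ) * h) := by
          apply mul_le_mul h1 hnormI (norm_nonneg _)
          positivity
      _ = 2 * k₂ * m * h * (M ^ (γ - 1) * M ^ μ) := by ring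
      _ = 2 * k₂ * m * h * M ^ (γ + μ - 1) := by
          rw [← Real.rpow_add' hMnn (by linarith : γ - 1 + μ ≠ 0)]
          ring_nf
  -- bound on the third term
  have hint3 : (∫ θ in (-h)..0, (w₁ + (h + θ) * w₂) * ‖φ θ‖ ^ (γ + μ - 1)) ≤
      (w₁ + h * w₂) * M ^ (γ + μ - 1) * h := by
    have key : ∀ x ∈ Set.uIoc (-h) (0:ℝ),
        ‖(w₁ + (h + x) * w₂) * ‖φ x‖ ^ (γ + μ - 1)‖ ≤ (w₁ + h * w₂) * M ^ (γ + μ - 1) := by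
      intro x hx
      rw [Set.uIoc_of_le (by linarith : -h ≤ (0:ℝ))] at hx
      have hxm : x ∈ Set.Icc (-h) (0:ℝ) := ⟨le_of_lt hx.1, hx.2⟩
      have hw : 0 ≤ w₁ + (h + x) * w₂ := by nlinarith [hx.1, hw₂.le, hw₁.le]
      rw [Real.norm_eq_abs, abs_of_nonneg (mul_nonneg hw (Real.rpow_nonneg (norm_nonneg _) _))]
      apply mul_le_mul _ (Real.rpow_le_rpow (norm_nonneg _) (hM x hxm) hpnn)
        (Real.rpow_nonneg (norm_nonneg _) _) (by nlinarith)
      nlinarith [hxm.2, hw₂.le]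
    have habs := intervalIntegral.norm_integral_le_of_norm_le_const key
    rw [Real.norm_eq_abs] at habs
    calc (∫ θ in (-h)..0, (w₁ + (h + θ) * w₂) * ‖φ θ‖ ^ (γ + μ - 1))
        ≤ |∫ θ in (-h)..0, (w₁ + (h + θ) * w₂) * ‖φ θ‖ ^ (γ + μ - 1)| := le_abs_self _
      _ ≤ (w₁ + h * w₂) * M ^ (γ + μ - 1) * |0 - (-h)| := habs
      _ = (w₁ + h * w₂) * M ^ (γ + μ - 1) * h := by
          rw [sub_neg_eq_add, zero_add, abs_of_pos hh]
  have hβeq : β * M ^ (γ + μ - 1) =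
      2 * k₂ * m * h * M ^ (γ + μ - 1) + (w₁ + h * w₂) * M ^ (γ + μ - 1) * h := by
    rw [hβ]; ring
  linarith [hVub (φ 0), hinner, hint3]
end

section
/- Let L = m m₁ k₂ + m² k₃, H₂ = (min{w₀/(4hL), w₁/(2hL), w₂/(2L)})^{1/(μ−1)}, δ ∈ (0, H₂), and c = min{w₀ − 4hLδ^{μ−1}, w₂ − 2Lδ^{μ−1}}. Let x be a solution of the delay system and t > 0 be such that ‖x(t+θ)‖ ≤ δ for all θ ∈ [−h,0]. Then the function v_x is differentiable at t and its derivative satisfies v_x′(t) ≤ −c·(‖x(t)‖^{γ+μ−1} + ∫_{−h}^{0} ‖x(t+θ)‖^{γ+μ−1} dθ). -/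
open Real Set RealInnerProductSpace

private lemma key1 {δ u : ℝ} (hu : 0 ≤ u) (hud : u ≤ δ) {P e : ℝ}
    (hP : 0 ≤ P) (he : 0 ≤ e) : u ^ (P + e) ≤ δ ^ e * u ^ P := by
  rw [Real.rpow_add_of_nonneg hu hP he, mul_comm]
  exact mul_le_mul_of_nonneg_right (Real.rpow_le_rpow hu hud he) (Real.rpow_nonneg hu P)

private lemma key2 {δ u b : ℝ} (hu : 0 ≤ u) (hb : 0 ≤ b) (hud : u ≤ δ) (hbd : b ≤ δ)
    {α β e P : ℝ} (hα : 0 ≤ α) (hβ : 0 ≤ β) (he : 0 ≤ e) (hP : 0 ≤ P)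
    (hsum : α + β = P + e) : u ^ α * b ^ β ≤ δ ^ e * (u ^ P + b ^ P) := by
  set M := max u b with hM
  have hM0 : 0 ≤ M := le_trans hu (le_max_left _ _)
  have hMδ : M ≤ δ := max_le hud hbd
  have h1 : u ^ α * b ^ β ≤ M ^ α * M ^ β := by
    gcongr <;> [exact le_max_left _ _; exact le_max_right _ _]
  have h2 : M ^ α * M ^ β = M ^ (P + e) := by
    rw [← Real.rpow_add_of_nonneg hM0 hα hβ, hsum]
  have h3 : M ^ (P + e) = M ^ e * M ^ P := by
    rw [Real.rpow_add_of_nonneg hM0 hP he, mul_comm]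
  have h4 : M ^ P ≤ u ^ P + b ^ P := by
    rcases max_cases u b with ⟨hc, _⟩ | ⟨hc, _⟩ <;> rw [hM, hc]
    · nlinarith [Real.rpow_nonneg hb P]
    · nlinarith [Real.rpow_nonneg hu P]
  calc u ^ α * b ^ β ≤ M ^ e * M ^ P := by rw [← h3, ← h2]; exact h1
    _ ≤ δ ^ e * (u ^ P + b ^ P) :=
        mul_le_mul (Real.rpow_le_rpow hM0 hMδ he) h4 (Real.rpow_nonneg hM0 P)
          (Real.rpow_nonneg (hM0.trans hMδ) e)

private lemma key3 {δ u b a : ℝ} (hu : 0 ≤ u) (hb : 0 ≤ b) (ha : 0 ≤ a)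
    (hud : u ≤ δ) (hbd : b ≤ δ) (had : a ≤ δ)
    {α β σ e P : ℝ} (hα : 0 ≤ α) (hβ : 0 ≤ β) (hσ : 0 ≤ σ) (he : 0 ≤ e) (hP : 0 ≤ P)
    (hsum : α + β + σ = P + e) :
    u ^ α * b ^ β * a ^ σ ≤ δ ^ e * (u ^ P + b ^ P + a ^ P) := by
  set M := max u (max b a) with hM
  have hM0 : 0 ≤ M := le_trans hu (le_max_left _ _)
  have hMδ : M ≤ δ := max_le hud (max_le hbd had)
  have h1 : u ^ α * b ^ β * a ^ σ ≤ M ^ α * M ^ β * M ^ σ := by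
    gcongr
    · exact le_max_left _ _
    · exact le_trans (le_max_left _ _) (le_max_right _ _)
    · exact le_trans (le_max_right _ _) (le_max_right _ _)
  have h2 : M ^ α * M ^ β * M ^ σ = M ^ (P + e) := by
    rw [← Real.rpow_add_of_nonneg hM0 hα hβ,
      ← Real.rpow_add_of_nonneg hM0 (add_nonneg hα hβ) hσ, hsum]
  have h3 : M ^ (P + e) = M ^ e * M ^ P := by
    rw [Real.rpow_add_of_nonneg hM0 hP he, mul_comm]
  have h4 : M ^ P ≤ u ^ P + b ^ P + a ^ P := by
    have h5 : M = u ∨ M = b ∨ M = a := by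
      rcases max_cases u (max b a) with ⟨hc, _⟩ | ⟨hc, _⟩
      · exact Or.inl hc
      · rcases max_cases b a with ⟨hc2, _⟩ | ⟨hc2, _⟩
        · exact Or.inr (Or.inl (hc.trans hc2))
        · exact Or.inr (Or.inr (hc.trans hc2))
    rcases h5 with hc | hc | hc <;> rw [hc] <;>
      nlinarith [Real.rpow_nonneg hu P, Real.rpow_nonneg hb P, Real.rpow_nonneg ha P]
  calc u ^ α * b ^ β * a ^ σ ≤ M ^ e * M ^ P := by rw [← h3, ← h2]; exact h1
    _ ≤ δ ^ e * (u ^ P + b ^ P + a ^ P) :=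
        mul_le_mul (Real.rpow_le_rpow hM0 hMδ he) h4 (Real.rpow_nonneg hM0 P)
          (Real.rpow_nonneg (hM0.trans hMδ) e)

private lemma star_ineq {μ γ m m₁ k₂ k₃ δ u b a : ℝ} (hμ : 1 < μ) (hγ : 2 ≤ γ)
    (hm : 0 < m) (hm₁ : 0 < m₁) (hk₂ : 0 < k₂) (hk₃ : 0 < k₃)
    (hu : 0 ≤ u) (hb : 0 ≤ b) (ha : 0 ≤ a) (hud : u ≤ δ) (hbd : b ≤ δ) (had : a ≤ δ) :
    m^2*k₃*(u^(γ-2)*((u^μ+b^μ)*(u^μ+a^μ)))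
      + m*m₁*k₂*(u^(γ-1)*((u^μ+b^μ)*(u^(μ-1)+a^(μ-1))))
      ≤ (m*m₁*k₂ + m^2*k₃) * δ^(μ-1) *
        (4*u^(γ+μ-1) + 2*b^(γ+μ-1) + 2*a^(γ+μ-1)) := by
  have hg2 : 0 ≤ γ - 2 := by linarith
  have hg1 : 0 ≤ γ - 1 := by linarith
  have hμ0 : 0 ≤ μ := by linarith
  have he : 0 ≤ μ - 1 := by linarith
  have hP : 0 ≤ γ + μ - 1 := by linarith
  set P := γ + μ - 1 with hPdef
  set e := μ - 1 with hedef
  have hA : u^(γ-2)*((u^μ+b^μ)*(u^μ+a^μ)) ≤ δ^e*(4*u^P+2*b^P+2*a^P) := by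
    have t1 : u^(γ-2)*u^μ*u^μ ≤ δ^e*u^P := by
      calc u^(γ-2)*u^μ*u^μ = u^(P+e) := by
            rw [← Real.rpow_add_of_nonneg hu hg2 hμ0,
              ← Real.rpow_add_of_nonneg hu (add_nonneg hg2 hμ0) hμ0]
            congr 1; rw [hPdef, hedef]; ring
        _ ≤ δ^e*u^P := key1 hu hud hP he
    have t2 : u^(γ-2)*u^μ*a^μ ≤ δ^e*(u^P+a^P) := by
      calc u^(γ-2)*u^μ*a^μ = u^((γ-2)+μ)*a^μ := by
            rw [← Real.rpow_add_of_nonneg hu hg2 hμ0]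
        _ ≤ δ^e*(u^P+a^P) :=
            key2 hu ha hud had (add_nonneg hg2 hμ0) hμ0 he hP (by rw [hPdef, hedef]; ring)
    have t3 : u^(γ-2)*b^μ*u^μ ≤ δ^e*(u^P+b^P) := by
      calc u^(γ-2)*b^μ*u^μ = u^((γ-2)+μ)*b^μ := by
            rw [mul_right_comm, ← Real.rpow_add_of_nonneg hu hg2 hμ0]
        _ ≤ δ^e*(u^P+b^P) :=
            key2 hu hb hud hbd (add_nonneg hg2 hμ0) hμ0 he hP (by rw [hPdef, hedef]; ring)
    have t4 : u^(γ-2)*b^μ*a^μ ≤ δ^e*(u^P+b^P+a^P) :=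
      key3 hu hb ha hud hbd had hg2 hμ0 hμ0 he hP (by rw [hPdef, hedef]; ring)
    nlinarith [t1, t2, t3, t4]
  have hB : u^(γ-1)*((u^μ+b^μ)*(u^(μ-1)+a^(μ-1))) ≤ δ^e*(4*u^P+2*b^P+2*a^P) := by
    have t1 : u^(γ-1)*u^μ*u^(μ-1) ≤ δ^e*u^P := by
      calc u^(γ-1)*u^μ*u^(μ-1) = u^(P+e) := by
            rw [← Real.rpow_add_of_nonneg hu hg1 hμ0,
              ← Real.rpow_add_of_nonneg hu (add_nonneg hg1 hμ0) he]
            congr 1; rw [hPdef, hedef]; ring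
        _ ≤ δ^e*u^P := key1 hu hud hP he
    have t2 : u^(γ-1)*u^μ*a^(μ-1) ≤ δ^e*(u^P+a^P) := by
      calc u^(γ-1)*u^μ*a^(μ-1) = u^((γ-1)+μ)*a^(μ-1) := by
            rw [← Real.rpow_add_of_nonneg hu hg1 hμ0]
        _ ≤ δ^e*(u^P+a^P) :=
            key2 hu ha hud had (add_nonneg hg1 hμ0) he he hP (by rw [hPdef, hedef]; ring)
    have t3 : u^(γ-1)*b^μ*u^(μ-1) ≤ δ^e*(u^P+b^P) := by
      calc u^(γ-1)*b^μ*u^(μ-1) = u^((γ-1)+(μ-1))*b^μ := by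
            rw [mul_right_comm, ← Real.rpow_add_of_nonneg hu hg1 he]
        _ ≤ δ^e*(u^P+b^P) :=
            key2 hu hb hud hbd (add_nonneg hg1 he) hμ0 he hP (by rw [hPdef, hedef]; ring)
    have t4 : u^(γ-1)*b^μ*a^(μ-1) ≤ δ^e*(u^P+b^P+a^P) :=
      key3 hu hb ha hud hbd had hg1 hμ0 he he hP (by rw [hPdef, hedef]; ring)
    nlinarith [t1, t2, t3, t4]
  calc m^2*k₃*(u^(γ-2)*((u^μ+b^μ)*(u^μ+a^μ)))
        + m*m₁*k₂*(u^(γ-1)*((u^μ+b^μ)*(u^(μ-1)+a^(μ-1))))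
      ≤ m^2*k₃*(δ^e*(4*u^P+2*b^P+2*a^P)) + m*m₁*k₂*(δ^e*(4*u^P+2*b^P+2*a^P)) := by
        have h1 := mul_le_mul_of_nonneg_left hA (by positivity : (0:ℝ) ≤ m^2*k₃)
        have h2 := mul_le_mul_of_nonneg_left hB (by positivity : (0:ℝ) ≤ m*m₁*k₂)
        linarith
    _ = (m*m₁*k₂ + m^2*k₃) * δ^e * (4*u^P+2*b^P+2*a^P) := by ring

private lemma slide {Y : Type*} [NormedAddCommGroup Y] [NormedSpace ℝ Y] [CompleteSpace Y]
    {F : ℝ → Y} {h t η : ℝ} (hh : 0 < h) (hη : 0 < η)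
    (hcont : ∀ s ∈ Set.Ioo (t - h - η) (t + η), ContinuousAt F s) :
    HasDerivAt (fun τ => ∫ s in (τ - h)..τ, F s) (F t - F (t - h)) t := by
  set I : Set ℝ := Set.Ioo (t - h - η) (t + η) with hI
  have hIo : IsOpen I := isOpen_Ioo
  have hFc : ContinuousOn F I := fun s hs => (hcont s hs).continuousWithinAt
  have htI : t ∈ I := ⟨by linarith, by linarith⟩
  have hthI : t - h ∈ I := ⟨by linarith, by linarith⟩
  have hint : ∀ a ∈ I, ∀ b ∈ I, IntervalIntegrable F MeasureTheory.volume a b := fun a ha b hb =>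
    (hFc.mono (Set.ordConnected_Ioo.uIcc_subset ha hb)).intervalIntegrable
  have hmeas := hFc.stronglyMeasurableAtFilter (μ := MeasureTheory.volume) hIo
  -- the reference function
  have hd1 : HasDerivAt (fun τ => ∫ s in t..τ, F s) (F t) t :=
    intervalIntegral.integral_hasDerivAt_right (hint t htI t htI) (hmeas t htI) (hcont t htI)
  have hd2' : HasDerivAt (fun r => ∫ s in (t - h)..r, F s) (F (t - h)) (t - h) :=
    intervalIntegral.integral_hasDerivAt_right (hint _ hthI _ hthI) (hmeas _ hthI)
      (hcont _ hthI)
  have hd2 : HasDerivAt (fun τ => ∫ s in (t - h)..(τ - h), F s) (F (t - h)) t := by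
    have := hd2'.scomp (x := t) (h := fun τ => τ - h) ((hasDerivAt_id t).sub_const h)
    simpa [Function.comp_def] using this
  have hG : HasDerivAt (fun τ => (∫ s in (t - h)..t, F s) + (∫ s in t..τ, F s)
      - ∫ s in (t - h)..(τ - h), F s) (F t - F (t - h)) t := (hd1.const_add _).sub hd2
  apply hG.congr_of_eventuallyEq
  have hball : Set.Ioo (t - η) (t + η) ∈ nhds t := Ioo_mem_nhds (by linarith) (by linarith)
  filter_upwards [hball] with τ hτ
  obtain ⟨hτ1, hτ2⟩ := hτ
  have hτI : τ ∈ I := ⟨by linarith, by linarith⟩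
  have hτhI : τ - h ∈ I := ⟨by linarith, by linarith⟩
  have e1 : (∫ s in (τ-h)..(t-h), F s) + (∫ s in (t-h)..t, F s) = ∫ s in (τ-h)..t, F s :=
    intervalIntegral.integral_add_adjacent_intervals (hint _ hτhI _ hthI) (hint _ hthI _ htI)
  have e2 : (∫ s in (τ-h)..t, F s) + (∫ s in t..τ, F s) = ∫ s in (τ-h)..τ, F s :=
    intervalIntegral.integral_add_adjacent_intervals (hint _ hτhI _ htI) (hint _ htI _ hτI)
  have e3 : (∫ s in (τ-h)..(t-h), F s) = -∫ s in (t-h)..(τ-h), F s :=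
    intervalIntegral.integral_symm _ _
  rw [← e2, ← e1, e3]
  abel

set_option maxHeartbeats 2000000 in
/-- Lemma 3: bound on the derivative of the Lyapunov–Krasovskii functional along solutions. -/
theorem functional_derivative_bound
    {n : ℕ} (hn : 1 ≤ n)
    (h μ : ℝ) (hh : 0 < h) (hμ : 1 < μ)
    (f : EuclideanSpace ℝ (Fin n) × EuclideanSpace ℝ (Fin n) → EuclideanSpace ℝ (Fin n))
    (hf : ContDiff ℝ 1 f)
    (hhom : ∀ c > (0:ℝ), ∀ x y : EuclideanSpace ℝ (Fin n),
      f (c • x, c • y) = (c ^ μ) • f (x, y))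
    (m m₁ : ℝ) (hm : 0 < m) (hm₁ : 0 < m₁)
    (hfb : ∀ x y : EuclideanSpace ℝ (Fin n), ‖f (x, y)‖ ≤ m * (‖x‖ ^ μ + ‖y‖ ^ μ))
    (hfx : ∀ x y : EuclideanSpace ℝ (Fin n),
      ‖fderiv ℝ (fun x' => f (x', y)) x‖ ≤ m₁ * (‖x‖ ^ (μ - 1) + ‖y‖ ^ (μ - 1)))
    (γ : ℝ) (hγ : 2 ≤ γ)
    (V : EuclideanSpace ℝ (Fin n) → ℝ) (hV : ContDiff ℝ 2 V)
    (k₂ k₃ w : ℝ) (hk₂ : 0 < k₂) (hk₃ : 0 < k₃) (hw : 0 < w)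
    (hgrad : ∀ x : EuclideanSpace ℝ (Fin n), ‖gradient V x‖ ≤ k₂ * ‖x‖ ^ (γ - 1))
    (hhess : ∀ x : EuclideanSpace ℝ (Fin n),
      ‖fderiv ℝ (gradient V) x‖ ≤ k₃ * ‖x‖ ^ (γ - 2))
    (hdV : ∀ x : EuclideanSpace ℝ (Fin n),
      ⟪gradient V x, f (x, x)⟫ ≤ -w * ‖x‖ ^ (γ + μ - 1))
    (w₀ w₁ w₂ : ℝ) (hw₁ : 0 < w₁) (hw₂ : 0 < w₂)
    (hw₀ : w₀ = w - w₁ - h * w₂) (hw₀pos : 0 < w₀)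
    (L H₂ δ c : ℝ)
    (hL : L = m * m₁ * k₂ + m ^ 2 * k₃)
    (hH₂ : H₂ = (min (w₀ / (4 * h * L)) (min (w₁ / (2 * h * L)) (w₂ / (2 * L)))) ^
      (1 / (μ - 1)))
    (hδ : δ ∈ Set.Ioo 0 H₂)
    (hc : c = min (w₀ - 4 * h * L * δ ^ (μ - 1)) (w₂ - 2 * L * δ ^ (μ - 1)))
    (x : ℝ → EuclideanSpace ℝ (Fin n))
    (hxc : ContinuousOn x (Set.Ici (-h)))
    (hxd : ∀ t > (0:ℝ), HasDerivAt x (f (x t, x (t - h))) t)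
    (t : ℝ) (ht : 0 < t)
    (hxδ : ∀ θ ∈ Set.Icc (-h) (0:ℝ), ‖x (t + θ)‖ ≤ δ) :
    DifferentiableAt ℝ (fun τ => V (x τ) +
        ⟪gradient V (x τ), ∫ s in (τ - h)..τ, f (x τ, x s)⟫ +
        ∫ s in (τ - h)..τ, (w₁ + (h + s - τ) * w₂) * ‖x s‖ ^ (γ + μ - 1)) t ∧
      deriv (fun τ => V (x τ) +
        ⟪gradient V (x τ), ∫ s in (τ - h)..τ, f (x τ, x s)⟫ +
        ∫ s in (τ - h)..τ, (w₁ + (h + s - τ) * w₂) * ‖x s‖ ^ (γ + μ - 1)) t ≤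
      -c * (‖x t‖ ^ (γ + μ - 1) + ∫ θ in (-h)..0, ‖x (t + θ)‖ ^ (γ + μ - 1)) := by
  have hμ0 : (0:ℝ) ≤ μ := by linarith
  have he0 : (0:ℝ) ≤ μ - 1 := by linarith
  have hP0 : (0:ℝ) ≤ γ + μ - 1 := by linarith
  -- basic continuity facts
  have hcx : ∀ s : ℝ, -h < s → ContinuousAt x s := fun s hs =>
    hxc.continuousAt (Ici_mem_nhds hs)
  have hx't : HasDerivAt x (f (x t, x (t - h))) t := hxd t ht
  set x't : EuclideanSpace ℝ (Fin n) := f (x t, x (t - h)) with hx'tdef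
  set η : ℝ := t / 2 with hηdef
  have hηpos : 0 < η := by positivity
  set I : Set ℝ := Set.Ioo (t - h - η) (t + η) with hIdef
  have hIsub : ∀ s ∈ I, -h < s := fun s hs => by
    simp only [hIdef, Set.mem_Ioo] at hs
    have : -h < t - h - η := by simp only [hηdef]; linarith
    linarith [hs.1]
  have hxcI : ∀ s ∈ I, ContinuousAt x s := fun s hs => hcx s (hIsub s hs)
  set F : ℝ → EuclideanSpace ℝ (Fin n) := fun s => f (x t, x s) with hFdef
  set ψ : ℝ → ℝ := fun s => ‖x s‖ ^ (γ + μ - 1) with hψdef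
  have hFcI : ∀ s ∈ I, ContinuousAt F s := fun s hs =>
    (hf.continuous.continuousAt).comp (continuousAt_const.prodMk (hxcI s hs))
  have hψcI : ∀ s ∈ I, ContinuousAt ψ s := fun s hs =>
    ((hxcI s hs).norm).rpow_const (Or.inr hP0)
  have hGt : HasDerivAt (fun τ => gradient V (x τ))
      (fderiv ℝ (gradient V) (x t) x't) t := by
    have h1 : ContDiff ℝ 1 (fderiv ℝ V) := hV.fderiv_right (by norm_num)
    have h2 : ContDiff ℝ 1 (gradient V) := by
      have : gradient V = fun y =>
          (InnerProductSpace.toDual ℝ (EuclideanSpace ℝ (Fin n))).symm (fderiv ℝ V y) := rfl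
      rw [this]
      exact ((InnerProductSpace.toDual ℝ (EuclideanSpace ℝ (Fin n))).symm.contDiff).comp h1
    exact ((h2.differentiable one_ne_zero (x t)).hasFDerivAt).comp_hasDerivAt t hx't
  have hgi : ∀ (y v : EuclideanSpace ℝ (Fin n)), ⟪gradient V y, v⟫ = fderiv ℝ V y v :=
    fun y v => InnerProductSpace.toDual_symm_apply
  have hA : HasDerivAt (fun τ => V (x τ)) ⟪gradient V (x t), x't⟫ t := by
    rw [hgi]
    exact ((hV.differentiable (by norm_num) (x t)).hasFDerivAt).comp_hasDerivAt t hx't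
  -- derivative of the inner integral term
  set D₁ : EuclideanSpace ℝ (Fin n) → EuclideanSpace ℝ (Fin n) →
      (EuclideanSpace ℝ (Fin n) →L[ℝ] EuclideanSpace ℝ (Fin n)) := fun u y =>
    (fderiv ℝ f (u, y)).comp (ContinuousLinearMap.inl ℝ _ _) with hD₁def
  have hD₁ : ∀ u y, HasFDerivAt (fun v => f (v, y)) (D₁ u y) u := fun u y =>
    ((hf.differentiable one_ne_zero) (u, y)).hasFDerivAt.comp u (hasFDerivAt_prodMk_left u y)
  have hD₁norm : ∀ u y, ‖D₁ u y‖ ≤ m₁ * (‖u‖ ^ (μ - 1) + ‖y‖ ^ (μ - 1)) := fun u y => by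
    rw [← (hD₁ u y).fderiv]; exact hfx u y
  set K : EuclideanSpace ℝ (Fin n) →L[ℝ] EuclideanSpace ℝ (Fin n) :=
    ∫ s in (t - h)..t, D₁ (x t) (x s) with hKdef
  have htI : t ∈ I := by simp only [hIdef, Set.mem_Ioo]; constructor <;> linarith
  have hthI : t - h ∈ I := by simp only [hIdef, Set.mem_Ioo]; constructor <;> linarith
  have hxOnI : ContinuousOn x I := fun s hs => (hxcI s hs).continuousWithinAt
  have hIcc : Set.uIcc (t - h) t ⊆ I :=
    Set.OrdConnected.uIcc_subset (hIdef ▸ Set.ordConnected_Ioo) hthI htI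
  have hIIF : ∀ a ∈ I, ∀ b ∈ I, IntervalIntegrable F MeasureTheory.volume a b :=
    fun a ha b hb => (ContinuousOn.mono (fun s hs => (hFcI s hs).continuousWithinAt)
      (Set.OrdConnected.uIcc_subset (hIdef ▸ Set.ordConnected_Ioo) ha hb)).intervalIntegrable
  have hHcI : ∀ (u : EuclideanSpace ℝ (Fin n)), ∀ s ∈ I, ContinuousAt (fun s' => f (u, x s')) s :=
    fun u s hs => (hf.continuous.continuousAt).comp (continuousAt_const.prodMk (hxcI s hs))
  have hIIH : ∀ (u : EuclideanSpace ℝ (Fin n)), ∀ a ∈ I, ∀ b ∈ I,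
      IntervalIntegrable (fun s => f (u, x s)) MeasureTheory.volume a b :=
    fun u a ha b hb => (ContinuousOn.mono (fun s hs => (hHcI u s hs).continuousWithinAt)
      (Set.OrdConnected.uIcc_subset (hIdef ▸ Set.ordConnected_Ioo) ha hb)).intervalIntegrable
  have hgd : HasDerivAt (fun τ => ∫ s in (τ - h)..τ, f (x τ, x s))
      (F t - F (t - h) + K x't) t := by
    have hg₁ : HasDerivAt (fun τ => ∫ s in (τ - h)..τ, F s) (F t - F (t - h)) t :=
      slide hh hηpos (hIdef ▸ hFcI)
    -- parametric part with frozen limits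
    have hPf : HasFDerivAt (fun u => ∫ s in (t - h)..t, f (u, x s)) K (x t) := by
      apply intervalIntegral.hasFDerivAt_integral_of_dominated_of_fderiv_le
        (F' := fun u s => D₁ u (x s))
        (bound := fun s => m₁ * ((‖x t‖ + 1) ^ (μ - 1) + ‖x s‖ ^ (μ - 1)))
        (s := Metric.ball (x t) 1) (hs := Metric.ball_mem_nhds _ one_pos)
      · exact Filter.Eventually.of_forall fun u =>
          ((ContinuousOn.mono (fun s hs => (hHcI u s hs).continuousWithinAt)
            ((Set.uIoc_subset_uIcc).trans hIcc)).aestronglyMeasurable measurableSet_uIoc)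
      · exact hIIH (x t) _ hthI _ htI
      · exact ((ContinuousOn.clm_comp
          ((hf.continuous_fderiv one_ne_zero).comp_continuousOn
            (continuousOn_const.prodMk (hxOnI.mono ((Set.uIoc_subset_uIcc).trans hIcc))))
          continuousOn_const).aestronglyMeasurable measurableSet_uIoc)
      · refine Filter.Eventually.of_forall fun s hs u hu => ?_
        refine (hD₁norm u (x s)).trans ?_
        have hun : ‖u‖ ≤ ‖x t‖ + 1 := by
          have h1 := mem_ball_iff_norm.mp hu
          have h2 := norm_sub_norm_le u (x t)
          linarith
        have := Real.rpow_le_rpow (norm_nonneg u) hun he0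
        nlinarith [Real.rpow_nonneg (norm_nonneg (x s)) (μ - 1), hm₁.le]
      · apply ContinuousOn.intervalIntegrable
        refine (continuousOn_const.mul (continuousOn_const.add ?_))
        exact fun s hs => (((hxcI s (hIcc hs)).norm).rpow_const (Or.inr he0)).continuousWithinAt
      · exact Filter.Eventually.of_forall fun s _ u _ => hD₁ u (x s)
    have hPc : HasDerivAt (fun τ => ∫ s in (t - h)..t, f (x τ, x s)) (K x't) t :=
      hPf.comp_hasDerivAt t hx't
    -- remainder term
    have hρ : HasDerivAt (fun τ => (∫ s in t..τ, (f (x τ, x s) - F s))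
        - ∫ s in (t - h)..(τ - h), (f (x τ, x s) - F s)) 0 t := by
      -- uniform bound for ‖x‖ on a compact neighborhood
      have hJsub : Set.Icc (t - h - η) (t + η) ⊆ Set.Ici (-h) := fun s hs => by
        simp only [Set.mem_Ici]; simp only [Set.mem_Icc] at hs
        have : -h ≤ t - h - η := by simp only [hηdef]; linarith
        linarith [hs.1]
      obtain ⟨R, hR⟩ := IsCompact.exists_bound_of_continuousOn isCompact_Icc (hxc.mono hJsub)
      have hIJ : I ⊆ Set.Icc (t - h - η) (t + η) := hIdef ▸ Set.Ioo_subset_Icc_self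
      have hR0 : (0:ℝ) ≤ R :=
        (norm_nonneg (x t)).trans (hR t ⟨by linarith, by linarith⟩)
      set M : ℝ := m₁ * ((‖x t‖ + 1) ^ (μ - 1) + R ^ (μ - 1)) with hMdef
      have hM0 : 0 ≤ M := by
        have := Real.rpow_nonneg (by positivity : (0:ℝ) ≤ ‖x t‖ + 1) (μ - 1)
        have := Real.rpow_nonneg hR0 (μ - 1)
        positivity
      -- Lipschitz-type bound in the first argument
      have hlip : ∀ (u : EuclideanSpace ℝ (Fin n)), ‖u - x t‖ ≤ 1 → ∀ s ∈ I,
          ‖f (u, x s) - f (x t, x s)‖ ≤ M * ‖u - x t‖ := by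
        intro u hu s hs
        have hball : Convex ℝ (Metric.closedBall (x t) 1) := convex_closedBall _ _
        refine Convex.norm_image_sub_le_of_norm_fderiv_le
          (fun z _ => (hD₁ z (x s)).differentiableAt)
          (fun z hz => ?_) hball (Metric.mem_closedBall_self zero_le_one)
          (by simpa [Metric.mem_closedBall, dist_eq_norm] using hu)
        rw [(hD₁ z (x s)).fderiv]
        refine (hD₁norm z (x s)).trans ?_
        have hz1 : ‖z‖ ≤ ‖x t‖ + 1 := by
          have h1 := Metric.mem_closedBall.mp hz
          rw [dist_eq_norm] at h1
          have h2 := norm_sub_norm_le z (x t)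
          linarith
        have hb1 := Real.rpow_le_rpow (norm_nonneg z) hz1 he0
        have hb2 := Real.rpow_le_rpow (norm_nonneg (x s)) (hR s (hIJ hs)) he0
        rw [hMdef]
        nlinarith [hm₁.le]
      rw [hasDerivAt_iff_isLittleO]
      simp only [intervalIntegral.integral_same, sub_self, sub_zero, smul_zero]
      rw [Asymptotics.isLittleO_iff]
      intro ε hε
      have hrpos : 0 < min 1 (ε / (2 * M + 1)) := by positivity
      have hxev : ∀ᶠ τ in nhds t, ‖x τ - x t‖ ≤ min 1 (ε / (2 * M + 1)) := by
        have hcont : Filter.Tendsto x (nhds t) (nhds (x t)) := hcx t (by linarith)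
        have := hcont (Metric.closedBall_mem_nhds (x t) hrpos)
        filter_upwards [this] with τ hτ
        simpa [Metric.mem_closedBall, dist_eq_norm] using hτ
      filter_upwards [hxev, Ioo_mem_nhds (by linarith : t - η < t) (by linarith : t < t + η)]
        with τ hxτ hτ
      obtain ⟨hτa, hτb⟩ := hτ
      have hτI : τ ∈ I := by simp only [hIdef, Set.mem_Ioo]; constructor <;> linarith
      have hτhI : τ - h ∈ I := by simp only [hIdef, Set.mem_Ioo]; constructor <;> linarith
      have hxτ1 : ‖x τ - x t‖ ≤ 1 := hxτ.trans (min_le_left _ _)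
      have hxτ2 : ‖x τ - x t‖ ≤ ε / (2 * M + 1) := hxτ.trans (min_le_right _ _)
      have hb1 : ‖∫ s in t..τ, (f (x τ, x s) - F s)‖ ≤ (M * ‖x τ - x t‖) * |τ - t| := by
        apply intervalIntegral.norm_integral_le_of_norm_le_const
        intro s hs
        have hsI : s ∈ I := Set.OrdConnected.uIcc_subset (hIdef ▸ Set.ordConnected_Ioo)
          htI hτI (Set.uIoc_subset_uIcc hs)
        exact hlip (x τ) hxτ1 s hsI
      have hb2 : ‖∫ s in (t - h)..(τ - h), (f (x τ, x s) - F s)‖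
          ≤ (M * ‖x τ - x t‖) * |τ - t| := by
        have := intervalIntegral.norm_integral_le_of_norm_le_const
          (C := M * ‖x τ - x t‖) (a := t - h) (b := τ - h)
          (f := fun s => f (x τ, x s) - F s) ?_
        · convert this using 2
          ring
        · intro s hs
          have hsI : s ∈ I := Set.OrdConnected.uIcc_subset (hIdef ▸ Set.ordConnected_Ioo)
            hthI hτhI (Set.uIoc_subset_uIcc hs)
          exact hlip (x τ) hxτ1 s hsI
      have htotal := (norm_sub_le _ _).trans (add_le_add hb1 hb2)
      refine htotal.trans ?_
      have habs : (0:ℝ) ≤ |τ - t| := abs_nonneg _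
      have hnorm : ‖τ - t‖ = |τ - t| := rfl
      rw [hnorm]
      have hkey : 2 * M * ‖x τ - x t‖ ≤ ε := by
        have h2M : (0:ℝ) < 2 * M + 1 := by linarith
        have := mul_le_mul_of_nonneg_left hxτ2 (by linarith : (0:ℝ) ≤ 2 * M)
        have heq : 2 * M * (ε / (2 * M + 1)) ≤ ε := by
          rw [mul_div_assoc']
          rw [div_le_iff₀ h2M]
          nlinarith
        linarith
      nlinarith [norm_nonneg (x τ - x t), hM0]
    have hsum : HasDerivAt (fun τ => ((∫ s in (τ - h)..τ, F s)
        + (∫ s in (t - h)..t, f (x τ, x s))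
        + ((∫ s in t..τ, (f (x τ, x s) - F s))
          - ∫ s in (t - h)..(τ - h), (f (x τ, x s) - F s)))
        - ∫ s in (t - h)..t, F s) (F t - F (t - h) + K x't) t := by
      have := ((hg₁.add hPc).add hρ).sub_const (∫ s in (t - h)..t, F s)
      refine this.congr_deriv ?_
      abel
    apply hsum.congr_of_eventuallyEq
    filter_upwards [Ioo_mem_nhds (by linarith : t - η < t) (by linarith : t < t + η)]
      with τ hτ
    obtain ⟨hτa, hτb⟩ := hτ
    have hτI : τ ∈ I := by simp only [hIdef, Set.mem_Ioo]; constructor <;> linarith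
    have hτhI : τ - h ∈ I := by simp only [hIdef, Set.mem_Ioo]; constructor <;> linarith
    have hIIΔ : ∀ a ∈ I, ∀ b ∈ I,
        IntervalIntegrable (fun s => f (x τ, x s) - F s) MeasureTheory.volume a b :=
      fun a ha b hb => (hIIH (x τ) a ha b hb).sub (hIIF a ha b hb)
    have e0 : (∫ s in (τ - h)..τ, f (x τ, x s))
        = (∫ s in (τ - h)..τ, F s) + ∫ s in (τ - h)..τ, (f (x τ, x s) - F s) := by
      rw [← intervalIntegral.integral_add (hIIF _ hτhI _ hτI) (hIIΔ _ hτhI _ hτI)]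
      apply intervalIntegral.integral_congr
      intro s _
      module
    have e1 : (∫ s in (τ - h)..(t - h), (f (x τ, x s) - F s))
        + ∫ s in (t - h)..t, (f (x τ, x s) - F s)
        = ∫ s in (τ - h)..t, (f (x τ, x s) - F s) :=
      intervalIntegral.integral_add_adjacent_intervals (hIIΔ _ hτhI _ hthI) (hIIΔ _ hthI _ htI)
    have e2 : (∫ s in (τ - h)..t, (f (x τ, x s) - F s))
        + ∫ s in t..τ, (f (x τ, x s) - F s)
        = ∫ s in (τ - h)..τ, (f (x τ, x s) - F s) :=
      intervalIntegral.integral_add_adjacent_intervals (hIIΔ _ hτhI _ htI) (hIIΔ _ htI _ hτI)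
    have e3 : (∫ s in (τ - h)..(t - h), (f (x τ, x s) - F s))
        = -∫ s in (t - h)..(τ - h), (f (x τ, x s) - F s) :=
      intervalIntegral.integral_symm _ _
    have e4 : (∫ s in (t - h)..t, (f (x τ, x s) - F s))
        = (∫ s in (t - h)..t, f (x τ, x s)) - ∫ s in (t - h)..t, F s :=
      intervalIntegral.integral_sub (hIIH (x τ) _ hthI _ htI) (hIIF _ hthI _ htI)
    rw [e0, ← e2, ← e1, e3, e4]
    abel
  have hB : HasDerivAt (fun τ => ⟪gradient V (x τ), ∫ s in (τ - h)..τ, f (x τ, x s)⟫)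
      (⟪gradient V (x t), F t - F (t - h) + K x't⟫ +
        ⟪fderiv ℝ (gradient V) (x t) x't, ∫ s in (t - h)..t, F s⟫) t :=
    hGt.inner ℝ hgd
  have hC : HasDerivAt (fun τ => ∫ s in (τ - h)..τ, (w₁ + (h + s - τ) * w₂) * ψ s)
      ((w₁ + h * w₂) * ψ t - w₁ * ψ (t - h) - w₂ * ∫ s in (t - h)..t, ψ s) t := by
    have hsψcI : ∀ s ∈ I, ContinuousAt (fun s => s * ψ s) s := fun s hs =>
      (continuousAt_id).mul (hψcI s hs)
    have hΦ : HasDerivAt (fun τ => ∫ s in (τ - h)..τ, ψ s) (ψ t - ψ (t - h)) t :=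
      slide hh hηpos (hIdef ▸ hψcI)
    have hΨ : HasDerivAt (fun τ => ∫ s in (τ - h)..τ, s * ψ s)
        (t * ψ t - (t - h) * ψ (t - h)) t := slide hh hηpos (hIdef ▸ hsψcI)
    have hlin : HasDerivAt (fun τ => w₁ + (h - τ) * w₂) (-w₂) t := by
      have h0 : HasDerivAt (fun τ : ℝ => w₁ + (h - τ) * w₂) (-1 * w₂) t :=
        (((hasDerivAt_id t).const_sub h).mul_const w₂).const_add w₁
      convert h0 using 1; ring
    have hD : HasDerivAt (fun τ => (w₁ + (h - τ) * w₂) * (∫ s in (τ - h)..τ, ψ s)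
        + w₂ * ∫ s in (τ - h)..τ, s * ψ s)
        ((-w₂ * (∫ s in (t - h)..t, ψ s) + (w₁ + (h - t) * w₂) * (ψ t - ψ (t - h)))
          + w₂ * (t * ψ t - (t - h) * ψ (t - h))) t := (hlin.mul hΦ).add (hΨ.const_mul w₂)
    have hEq : (fun τ => ∫ s in (τ - h)..τ, (w₁ + (h + s - τ) * w₂) * ψ s) =ᶠ[nhds t]
        (fun τ => (w₁ + (h - τ) * w₂) * (∫ s in (τ - h)..τ, ψ s)
          + w₂ * ∫ s in (τ - h)..τ, s * ψ s) := by
      filter_upwards [Ioo_mem_nhds (by linarith : t - η < t) (by linarith : t < t + η)]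
        with τ hτ
      obtain ⟨hτa, hτb⟩ := hτ
      have hτ1 : τ - h ∈ I := by
        simp only [hIdef, Set.mem_Ioo]; constructor <;> linarith
      have hτ2 : τ ∈ I := by
        simp only [hIdef, Set.mem_Ioo]; constructor <;> linarith
      have hsub : Set.uIcc (τ - h) τ ⊆ I := Set.OrdConnected.uIcc_subset
        (hIdef ▸ Set.ordConnected_Ioo) hτ1 hτ2
      have hiψ : IntervalIntegrable ψ MeasureTheory.volume (τ - h) τ :=
        (ContinuousOn.mono (fun s hs => (hψcI s hs).continuousWithinAt) hsub).intervalIntegrable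
      have hisψ : IntervalIntegrable (fun s => s * ψ s) MeasureTheory.volume (τ - h) τ :=
        (ContinuousOn.mono (fun s hs => (hsψcI s hs).continuousWithinAt) hsub).intervalIntegrable
      have hinteq : (fun s => (w₁ + (h + s - τ) * w₂) * ψ s)
          = fun s => (w₁ + (h - τ) * w₂) * ψ s + w₂ * (s * ψ s) := funext fun s => by ring
      rw [hinteq, intervalIntegral.integral_add (hiψ.const_mul _) (hisψ.const_mul _),
        intervalIntegral.integral_const_mul, intervalIntegral.integral_const_mul]
    have := hD.congr_of_eventuallyEq hEq
    refine this.congr_deriv ?_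
    ring
  have hTot : HasDerivAt (fun τ => V (x τ) +
      ⟪gradient V (x τ), ∫ s in (τ - h)..τ, f (x τ, x s)⟫ +
      ∫ s in (τ - h)..τ, (w₁ + (h + s - τ) * w₂) * ψ s)
      (⟪gradient V (x t), x't⟫ +
        (⟪gradient V (x t), F t - F (t - h) + K x't⟫ +
          ⟪fderiv ℝ (gradient V) (x t) x't, ∫ s in (t - h)..t, F s⟫) +
        ((w₁ + h * w₂) * ψ t - w₁ * ψ (t - h) - w₂ * ∫ s in (t - h)..t, ψ s)) t :=
    (hA.add hB).add hC
  refine ⟨hTot.differentiableAt, ?_⟩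
  rw [hTot.deriv]
  -- notation for the key quantities
  have hab : t - h ≤ t := by linarith
  have hxtδ : ‖x t‖ ≤ δ := by
    have h0 := hxδ 0 ⟨neg_nonpos.mpr hh.le, le_refl 0⟩
    simpa using h0
  have hxthδ : ‖x (t - h)‖ ≤ δ := by
    have h0 := hxδ (-h) ⟨le_refl _, neg_nonpos.mpr hh.le⟩
    rw [show t + -h = t - h by ring] at h0
    exact h0
  have hxsδ : ∀ s ∈ Set.Icc (t - h) t, ‖x s‖ ≤ δ := fun s hs => by
    have h0 := hxδ (s - t) ⟨by linarith [hs.1], by linarith [hs.2]⟩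
    rw [show t + (s - t) = s by ring] at h0
    exact h0
  -- rewrite the θ-integral as an s-integral
  have hshift : (∫ θ in (-h)..(0:ℝ), ‖x (t + θ)‖ ^ (γ + μ - 1)) = ∫ s in (t - h)..t, ψ s := by
    have h0 := intervalIntegral.integral_comp_add_left (a := -h) (b := 0)
      (fun s => ‖x s‖ ^ (γ + μ - 1)) t
    rw [show t + -h = t - h by ring, add_zero] at h0
    exact h0
  rw [hshift]
  -- continuity helpers on [t-h, t]
  have hcont_rpow : ∀ p : ℝ, 0 ≤ p →
      ContinuousOn (fun s => ‖x s‖ ^ p) (Set.uIcc (t - h) t) := fun p hp s hs =>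
    (((hxcI s (hIcc hs)).norm).rpow_const (Or.inr hp)).continuousWithinAt
  have hrint : ∀ p : ℝ, 0 ≤ p →
      IntervalIntegrable (fun s => ‖x s‖ ^ p) MeasureTheory.volume (t - h) t := fun p hp =>
    (hcont_rpow p hp).intervalIntegrable
  -- step 1 : collect the first two inner product terms
  have inner1 : ⟪gradient V (x t), x't⟫ + ⟪gradient V (x t), F t - F (t - h) + K x't⟫
      = ⟪gradient V (x t), f (x t, x t)⟫ + ⟪gradient V (x t), K x't⟫ := by
    rw [inner_add_right, inner_sub_right]
    have hFt : F t = f (x t, x t) := rfl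
    have hFth : F (t - h) = x't := rfl
    rw [hFt, hFth]
    ring
  have hT1 : ⟪gradient V (x t), f (x t, x t)⟫ ≤ -w * ‖x t‖ ^ (γ + μ - 1) := hdV (x t)
  have hx'tn : ‖x't‖ ≤ m * (‖x t‖ ^ μ + ‖x (t - h)‖ ^ μ) := hfb _ _
  -- norm of ∫ F
  have hIIF2 : IntervalIntegrable (fun s => m * (‖x t‖ ^ μ + ‖x s‖ ^ μ))
      MeasureTheory.volume (t - h) t :=
    (continuousOn_const.mul (continuousOn_const.add (hcont_rpow μ hμ0))).intervalIntegrable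
  have hnormintF : ‖∫ s in (t - h)..t, F s‖
      ≤ ∫ s in (t - h)..t, m * (‖x t‖ ^ μ + ‖x s‖ ^ μ) := by
    refine (intervalIntegral.norm_integral_le_integral_norm hab).trans ?_
    refine intervalIntegral.integral_mono_on hab ?_ hIIF2 (fun s _ => hfb _ _)
    exact ((ContinuousOn.mono (fun s hs => (hFcI s hs).continuousWithinAt) hIcc).norm).intervalIntegrable
  -- norm of K
  have hIIK2 : IntervalIntegrable (fun s => m₁ * (‖x t‖ ^ (μ - 1) + ‖x s‖ ^ (μ - 1)))
      MeasureTheory.volume (t - h) t :=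
    (continuousOn_const.mul (continuousOn_const.add (hcont_rpow _ he0))).intervalIntegrable
  have hKnorm : ‖K‖ ≤ ∫ s in (t - h)..t, m₁ * (‖x t‖ ^ (μ - 1) + ‖x s‖ ^ (μ - 1)) := by
    refine (intervalIntegral.norm_integral_le_integral_norm hab).trans ?_
    refine intervalIntegral.integral_mono_on hab ?_ hIIK2 (fun s _ => hD₁norm _ _)
    refine ContinuousOn.intervalIntegrable (ContinuousOn.norm ?_)
    exact ContinuousOn.clm_comp
      ((hf.continuous_fderiv one_ne_zero).comp_continuousOn
        (continuousOn_const.prodMk (hxOnI.mono hIcc))) continuousOn_const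
  have hintm_nonneg : 0 ≤ ∫ s in (t - h)..t, m * (‖x t‖ ^ μ + ‖x s‖ ^ μ) :=
    intervalIntegral.integral_nonneg hab (fun s _ => by positivity)
  have hintm1_nonneg : 0 ≤ ∫ s in (t - h)..t, m₁ * (‖x t‖ ^ (μ - 1) + ‖x s‖ ^ (μ - 1)) :=
    intervalIntegral.integral_nonneg hab (fun s _ => by positivity)
  -- the Hessian term
  have hT2 : ⟪fderiv ℝ (gradient V) (x t) x't, ∫ s in (t - h)..t, F s⟫
      ≤ ∫ s in (t - h)..t, m ^ 2 * k₃ * (‖x t‖ ^ (γ - 2) *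
        ((‖x t‖ ^ μ + ‖x (t - h)‖ ^ μ) * (‖x t‖ ^ μ + ‖x s‖ ^ μ))) := by
    have h1 : ‖fderiv ℝ (gradient V) (x t) x't‖
        ≤ k₃ * ‖x t‖ ^ (γ - 2) * (m * (‖x t‖ ^ μ + ‖x (t - h)‖ ^ μ)) :=
      (ContinuousLinearMap.le_opNorm _ _).trans
        (mul_le_mul (hhess _) hx'tn (norm_nonneg _) (by positivity))
    calc ⟪fderiv ℝ (gradient V) (x t) x't, ∫ s in (t - h)..t, F s⟫
        ≤ ‖fderiv ℝ (gradient V) (x t) x't‖ * ‖∫ s in (t - h)..t, F s‖ :=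
          real_inner_le_norm _ _
      _ ≤ (k₃ * ‖x t‖ ^ (γ - 2) * (m * (‖x t‖ ^ μ + ‖x (t - h)‖ ^ μ)))
          * ∫ s in (t - h)..t, m * (‖x t‖ ^ μ + ‖x s‖ ^ μ) :=
          mul_le_mul h1 hnormintF (norm_nonneg _) (by positivity)
      _ = ∫ s in (t - h)..t, m ^ 2 * k₃ * (‖x t‖ ^ (γ - 2) *
          ((‖x t‖ ^ μ + ‖x (t - h)‖ ^ μ) * (‖x t‖ ^ μ + ‖x s‖ ^ μ))) := by
          rw [← intervalIntegral.integral_const_mul]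
          apply intervalIntegral.integral_congr
          intro s _
          ring
  -- the D₁ term
  have hT3 : ⟪gradient V (x t), K x't⟫
      ≤ ∫ s in (t - h)..t, m * m₁ * k₂ * (‖x t‖ ^ (γ - 1) *
        ((‖x t‖ ^ μ + ‖x (t - h)‖ ^ μ) * (‖x t‖ ^ (μ - 1) + ‖x s‖ ^ (μ - 1)))) := by
    have h2 : ‖K x't‖ ≤ (∫ s in (t - h)..t, m₁ * (‖x t‖ ^ (μ - 1) + ‖x s‖ ^ (μ - 1)))
        * (m * (‖x t‖ ^ μ + ‖x (t - h)‖ ^ μ)) :=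
      (K.le_opNorm x't).trans (mul_le_mul hKnorm hx'tn (norm_nonneg _) hintm1_nonneg)
    calc ⟪gradient V (x t), K x't⟫ ≤ ‖gradient V (x t)‖ * ‖K x't‖ := real_inner_le_norm _ _
      _ ≤ (k₂ * ‖x t‖ ^ (γ - 1)) * ((∫ s in (t - h)..t, m₁ * (‖x t‖ ^ (μ - 1)
          + ‖x s‖ ^ (μ - 1))) * (m * (‖x t‖ ^ μ + ‖x (t - h)‖ ^ μ))) :=
          mul_le_mul (hgrad _) h2 (norm_nonneg _) (by positivity)
      _ = (k₂ * ‖x t‖ ^ (γ - 1) * (m * (‖x t‖ ^ μ + ‖x (t - h)‖ ^ μ)))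
          * ∫ s in (t - h)..t, m₁ * (‖x t‖ ^ (μ - 1) + ‖x s‖ ^ (μ - 1)) := by ring
      _ = ∫ s in (t - h)..t, m * m₁ * k₂ * (‖x t‖ ^ (γ - 1) *
          ((‖x t‖ ^ μ + ‖x (t - h)‖ ^ μ) * (‖x t‖ ^ (μ - 1) + ‖x s‖ ^ (μ - 1)))) := by
          rw [← intervalIntegral.integral_const_mul]
          apply intervalIntegral.integral_congr
          intro s _
          ring
  -- combine the two integral bounds and apply the pointwise monomial estimate
  have hQ1int : IntervalIntegrable (fun s => m ^ 2 * k₃ * (‖x t‖ ^ (γ - 2) *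
      ((‖x t‖ ^ μ + ‖x (t - h)‖ ^ μ) * (‖x t‖ ^ μ + ‖x s‖ ^ μ))))
      MeasureTheory.volume (t - h) t :=
    (continuousOn_const.mul (continuousOn_const.mul (continuousOn_const.mul
      (continuousOn_const.add (hcont_rpow μ hμ0))))).intervalIntegrable
  have hQ2int : IntervalIntegrable (fun s => m * m₁ * k₂ * (‖x t‖ ^ (γ - 1) *
      ((‖x t‖ ^ μ + ‖x (t - h)‖ ^ μ) * (‖x t‖ ^ (μ - 1) + ‖x s‖ ^ (μ - 1)))))
      MeasureTheory.volume (t - h) t :=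
    (continuousOn_const.mul (continuousOn_const.mul (continuousOn_const.mul
      (continuousOn_const.add (hcont_rpow _ he0))))).intervalIntegrable
  have hQRint : IntervalIntegrable (fun s => L * δ ^ (μ - 1) *
      (4 * ‖x t‖ ^ (γ + μ - 1) + 2 * ‖x (t - h)‖ ^ (γ + μ - 1) + 2 * ‖x s‖ ^ (γ + μ - 1)))
      MeasureTheory.volume (t - h) t :=
    (continuousOn_const.mul (continuousOn_const.add
      (continuousOn_const.mul (hcont_rpow _ hP0)))).intervalIntegrable
  have hT23 : ⟪fderiv ℝ (gradient V) (x t) x't, ∫ s in (t - h)..t, F s⟫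
      + ⟪gradient V (x t), K x't⟫
      ≤ ∫ s in (t - h)..t, L * δ ^ (μ - 1) * (4 * ‖x t‖ ^ (γ + μ - 1)
        + 2 * ‖x (t - h)‖ ^ (γ + μ - 1) + 2 * ‖x s‖ ^ (γ + μ - 1)) := by
    have hsum := add_le_add hT2 hT3
    rw [← intervalIntegral.integral_add hQ1int hQ2int] at hsum
    refine hsum.trans ?_
    refine intervalIntegral.integral_mono_on hab (hQ1int.add hQ2int) hQRint ?_
    intro s hs
    rw [hL]
    exact star_ineq hμ hγ hm hm₁ hk₂ hk₃ (norm_nonneg _) (norm_nonneg _) (norm_nonneg _)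
      hxtδ hxthδ (hxsδ s hs)
  -- compute the right-hand integral
  have hIPdef : (∫ s in (t - h)..t, L * δ ^ (μ - 1) * (4 * ‖x t‖ ^ (γ + μ - 1)
      + 2 * ‖x (t - h)‖ ^ (γ + μ - 1) + 2 * ‖x s‖ ^ (γ + μ - 1)))
      = L * δ ^ (μ - 1) * ((4 * ‖x t‖ ^ (γ + μ - 1) + 2 * ‖x (t - h)‖ ^ (γ + μ - 1)) * h
        + 2 * ∫ s in (t - h)..t, ψ s) := by
    rw [intervalIntegral.integral_const_mul]
    congr 1
    rw [intervalIntegral.integral_add intervalIntegrable_const ((hrint _ hP0).const_mul 2),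
      intervalIntegral.integral_const, intervalIntegral.integral_const_mul]
    have : t - (t - h) = h := by ring
    rw [this, smul_eq_mul]
    ring
  -- positivity facts
  have hψt : ψ t = ‖x t‖ ^ (γ + μ - 1) := rfl
  have hψth : ψ (t - h) = ‖x (t - h)‖ ^ (γ + μ - 1) := rfl
  have hIP0 : 0 ≤ ∫ s in (t - h)..t, ψ s :=
    intervalIntegral.integral_nonneg hab (fun s _ => Real.rpow_nonneg (norm_nonneg _) _)
  have hu0 : 0 ≤ ‖x t‖ ^ (γ + μ - 1) := Real.rpow_nonneg (norm_nonneg _) _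
  have hb0 : 0 ≤ ‖x (t - h)‖ ^ (γ + μ - 1) := Real.rpow_nonneg (norm_nonneg _) _
  -- bounds on δ ^ (μ-1)
  have hLpos : 0 < L := by rw [hL]; positivity
  have hminpos : 0 < min (w₀ / (4 * h * L)) (min (w₁ / (2 * h * L)) (w₂ / (2 * L))) := by
    refine lt_min (by positivity) (lt_min (by positivity) (by positivity))
  have hδe : δ ^ (μ - 1) < min (w₀ / (4 * h * L)) (min (w₁ / (2 * h * L)) (w₂ / (2 * L))) := by
    have h1 : δ ^ (μ - 1) < H₂ ^ (μ - 1) :=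
      Real.rpow_lt_rpow hδ.1.le hδ.2 (by linarith)
    have h2 : H₂ ^ (μ - 1) = min (w₀ / (4 * h * L)) (min (w₁ / (2 * h * L)) (w₂ / (2 * L))) := by
      rw [hH₂, ← Real.rpow_mul hminpos.le, one_div_mul_cancel (by linarith : μ - 1 ≠ 0),
        Real.rpow_one]
    rw [h2] at h1
    exact h1
  have hδ'0 : 0 ≤ δ ^ (μ - 1) := Real.rpow_nonneg hδ.1.le _
  have hd1 : 4 * h * L * δ ^ (μ - 1) ≤ w₀ := by
    have h0 := hδe.trans_le (min_le_left _ _)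
    rw [lt_div_iff₀ (by positivity)] at h0
    linarith only [h0]
  have hd2 : 2 * h * L * δ ^ (μ - 1) ≤ w₁ := by
    have h0 := hδe.trans_le ((min_le_right _ _).trans (min_le_left _ _))
    rw [lt_div_iff₀ (by positivity)] at h0
    linarith only [h0]
  have hd3 : 2 * L * δ ^ (μ - 1) ≤ w₂ := by
    have h0 := hδe.trans_le ((min_le_right _ _).trans (min_le_right _ _))
    rw [lt_div_iff₀ (by positivity)] at h0
    linarith only [h0]
  have hc1 : c ≤ w₀ - 4 * h * L * δ ^ (μ - 1) := hc ▸ min_le_left _ _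
  have hc2 : c ≤ w₂ - 2 * L * δ ^ (μ - 1) := hc ▸ min_le_right _ _
  -- final arithmetic
  have hmain := add_le_add (add_le_add hT1 (hIPdef ▸ hT23)) (le_refl
    ((w₁ + h * w₂) * ψ t - w₁ * ψ (t - h) - w₂ * ∫ s in (t - h)..t, ψ s))
  calc ⟪gradient V (x t), x't⟫ + (⟪gradient V (x t), F t - F (t - h) + K x't⟫
        + ⟪fderiv ℝ (gradient V) (x t) x't, ∫ s in (t - h)..t, F s⟫)
        + ((w₁ + h * w₂) * ψ t - w₁ * ψ (t - h) - w₂ * ∫ s in (t - h)..t, ψ s)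
      = (⟪gradient V (x t), f (x t, x t)⟫ + ⟪gradient V (x t), K x't⟫
          + ⟪fderiv ℝ (gradient V) (x t) x't, ∫ s in (t - h)..t, F s⟫)
        + ((w₁ + h * w₂) * ψ t - w₁ * ψ (t - h) - w₂ * ∫ s in (t - h)..t, ψ s) := by
        linarith only [inner1]
    _ ≤ (-w * ‖x t‖ ^ (γ + μ - 1) + L * δ ^ (μ - 1) * ((4 * ‖x t‖ ^ (γ + μ - 1)
          + 2 * ‖x (t - h)‖ ^ (γ + μ - 1)) * h + 2 * ∫ s in (t - h)..t, ψ s))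
        + ((w₁ + h * w₂) * ψ t - w₁ * ψ (t - h) - w₂ * ∫ s in (t - h)..t, ψ s) := by
        linarith only [hmain]
    _ ≤ -c * (‖x t‖ ^ (γ + μ - 1) + ∫ s in (t - h)..t, ψ s) := by
        rw [hψt, hψth]
        have hc1w : c ≤ w - w₁ - h * w₂ - 4 * h * L * δ ^ (μ - 1) := by
          rw [hw₀] at hc1; linarith only [hc1]
        linarith only [mul_nonneg (sub_nonneg.mpr hc1w) hu0,
          mul_nonneg (sub_nonneg.mpr hc2) hIP0,
          mul_nonneg (sub_nonneg.mpr hd2) hb0]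
end

section
/- Let p and q be real numbers with p > q ≥ 1 and set L₁ = (2·max{1,h})^{p/q − 1}. Then for every a ≥ 0 and every continuous nonnegative function g : [−h,0] → ℝ one has (a^q + ∫_{−h}^{0} g(θ)^q dθ)^{p/q} ≤ L₁·(a^p + ∫_{−h}^{0} g(θ)^p dθ). -/
open Real Set MeasureTheory

lemma real_rpow_add_le_mul {x y r : ℝ} (hx : 0 ≤ x) (hy : 0 ≤ y) (hr : 1 ≤ r) :
    (x + y) ^ r ≤ 2 ^ (r - 1) * (x ^ r + y ^ r) := by
  lift x to NNReal using hx
  lift y to NNReal using hy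
  have := NNReal.rpow_add_le_mul_rpow_add_rpow x y hr
  have h2 : ((((2 : NNReal) ^ (r-1)) * (x ^ r + y ^ r) : NNReal) : ℝ)
      = 2 ^ (r - 1) * ((x:ℝ) ^ r + (y:ℝ) ^ r) := by
    push_cast [NNReal.coe_rpow]
    norm_num
  calc ((x:ℝ) + y) ^ r = (((x + y : NNReal) ^ r : NNReal) : ℝ) := by
        rw [NNReal.coe_rpow]; push_cast; ring_nf
    _ ≤ _ := by rw [← h2]; exact_mod_cast this

/-- Technical Lemma 4: for `p > q ≥ 1`,
`(a^q + ∫ g^q)^{p/q} ≤ (2 max{1,h})^{p/q - 1} (a^p + ∫ g^p)`. -/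
theorem power_integral_inequality
    (h : ℝ) (hh : 0 < h)
    (p q : ℝ) (hq : 1 ≤ q) (hpq : q < p)
    (L₁ : ℝ) (hL₁ : L₁ = (2 * max 1 h) ^ (p / q - 1))
    (a : ℝ) (ha : 0 ≤ a)
    (g : ℝ → ℝ) (hg : ContinuousOn g (Set.Icc (-h) 0))
    (hgpos : ∀ θ ∈ Set.Icc (-h) (0:ℝ), 0 ≤ g θ) :
    (a ^ q + ∫ θ in (-h)..0, g θ ^ q) ^ (p / q) ≤
      L₁ * (a ^ p + ∫ θ in (-h)..0, g θ ^ p) := by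
  have hq0 : (0:ℝ) < q := lt_of_lt_of_le one_pos hq
  have hp0 : (0:ℝ) < p := hq0.trans hpq
  set r : ℝ := p / q with hrdef
  have hr1 : 1 < r := (one_lt_div hq0).2 hpq
  have hr0 : 0 < r := one_pos.trans hr1
  have hle : (-h : ℝ) ≤ 0 := by linarith
  have hsub : Set.Ioc (-h) 0 ⊆ Set.Icc (-h) 0 := Set.Ioc_subset_Icc_self
  set μ := volume.restrict (Set.Ioc (-h) (0:ℝ)) with hμ
  have hμfin : IsFiniteMeasure μ := by
    constructor
    rw [hμ, Measure.restrict_apply_univ, Real.volume_Ioc]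
    exact ENNReal.ofReal_lt_top
  have hμuniv : (μ Set.univ).toReal = h := by
    rw [hμ, Measure.restrict_apply_univ, Real.volume_Ioc, ENNReal.toReal_ofReal (by linarith)]
    ring
  -- continuity of powers
  have hgq : ContinuousOn (fun x => g x ^ q) (Set.Icc (-h) 0) :=
    hg.rpow_const (fun x hx => Or.inr hq0.le)
  have hgp : ContinuousOn (fun x => g x ^ p) (Set.Icc (-h) 0) :=
    hg.rpow_const (fun x hx => Or.inr hp0.le)
  -- Memℒp facts
  have memq : MemLp (fun x => g x ^ q) (ENNReal.ofReal r) μ := by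
    obtain ⟨C, hC⟩ := isCompact_Icc.exists_bound_of_continuousOn hgq
    refine MemLp.of_bound ?_ C ?_
    · exact (hgq.aestronglyMeasurable measurableSet_Icc).mono_measure
        (Measure.restrict_mono hsub le_rfl)
    · rw [hμ]
      refine (ae_restrict_iff' measurableSet_Ioc).2 (ae_of_all _ fun x hx => ?_)
      exact hC x (hsub hx)
  have memone : MemLp (fun _ : ℝ => (1:ℝ)) (ENNReal.ofReal (r / (r - 1))) μ :=
    memLp_const 1
  -- conjugate exponents
  have hconj : r.HolderConjugate (r / (r - 1)) := Real.HolderConjugate.conjExponent hr1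
  -- nonnegativity a.e.
  have hgnn : 0 ≤ᵐ[μ] fun x => g x ^ q := by
    rw [hμ]
    refine (ae_restrict_iff' measurableSet_Ioc).2 (ae_of_all _ fun x hx => ?_)
    exact Real.rpow_nonneg (hgpos x (hsub hx)) q
  -- Hölder
  have holder := MeasureTheory.integral_mul_le_Lp_mul_Lq_of_nonneg hconj hgnn
    (ae_of_all _ fun _ => zero_le_one) memq memone
  simp only [mul_one, Real.one_rpow] at holder
  rw [MeasureTheory.integral_const, measureReal_def, hμuniv, smul_eq_mul, mul_one] at holder
  -- rewrite (g^q)^r = g^p on the set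
  have hqr : q * r = p := by rw [hrdef]; field_simp [hq0.ne']
  have hcong : ∫ x, (g x ^ q) ^ r ∂μ = ∫ x, g x ^ p ∂μ := by
    rw [hμ]
    refine setIntegral_congr_fun measurableSet_Ioc fun x hx => ?_
    rw [← Real.rpow_mul (hgpos x (hsub hx)), hqr]
  rw [hcong] at holder
  set Iq := ∫ x, g x ^ q ∂μ with hIq
  set Ip := ∫ x, g x ^ p ∂μ with hIp
  have hIqnn : 0 ≤ Iq := by
    rw [hIq, hμ]
    exact setIntegral_nonneg measurableSet_Ioc fun x hx =>
      Real.rpow_nonneg (hgpos x (hsub hx)) q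
  have hIpnn : 0 ≤ Ip := by
    rw [hIp, hμ]
    exact setIntegral_nonneg measurableSet_Ioc fun x hx =>
      Real.rpow_nonneg (hgpos x (hsub hx)) p
  -- raise Hölder to the power r
  have key : Iq ^ r ≤ h ^ (r - 1) * Ip := by
    have h1 : Iq ^ r ≤ (Ip ^ (1 / r) * h ^ (1 / (r / (r - 1)))) ^ r :=
      Real.rpow_le_rpow hIqnn holder hr0.le
    have h2 : (Ip ^ (1 / r) * h ^ (1 / (r / (r - 1)))) ^ r = h ^ (r - 1) * Ip := by
      rw [Real.mul_rpow (Real.rpow_nonneg hIpnn _) (Real.rpow_nonneg hh.le _),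
        ← Real.rpow_mul hIpnn, ← Real.rpow_mul hh.le, one_div_mul_cancel hr0.ne',
        Real.rpow_one]
      rw [mul_comm]
      congr 1
      field_simp
    rw [h2] at h1
    exact h1
  set M : ℝ := max 1 h with hM
  have hM1 : (1:ℝ) ≤ M := le_max_left _ _
  have hMe : (1:ℝ) ≤ M ^ (r - 1) := Real.one_le_rpow hM1 (by linarith)
  have hhM : h ^ (r - 1) ≤ M ^ (r - 1) :=
    Real.rpow_le_rpow hh.le (le_max_right _ _) (by linarith)
  -- rewrite interval integrals
  have hintq : (∫ θ in (-h)..0, g θ ^ q) = Iq := by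
    rw [intervalIntegral.integral_of_le hle]
  have hintp : (∫ θ in (-h)..0, g θ ^ p) = Ip := by
    rw [intervalIntegral.integral_of_le hle]
  rw [hintq, hintp]
  have haqr : (a ^ q) ^ r = a ^ p := by
    rw [← Real.rpow_mul ha, hqr]
  calc (a ^ q + Iq) ^ r
      ≤ 2 ^ (r - 1) * ((a ^ q) ^ r + Iq ^ r) :=
        real_rpow_add_le_mul (Real.rpow_nonneg ha q) hIqnn hr1.le
    _ ≤ 2 ^ (r - 1) * (M ^ (r - 1) * a ^ p + M ^ (r - 1) * Ip) := by
        refine mul_le_mul_of_nonneg_left ?_ (Real.rpow_nonneg (by norm_num) _)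
        refine add_le_add ?_ ?_
        · rw [haqr]
          nlinarith [Real.rpow_nonneg ha p]
        · exact key.trans (mul_le_mul_of_nonneg_right hhM hIpnn)
    _ = L₁ * (a ^ p + Ip) := by
        rw [hL₁, Real.mul_rpow (by norm_num) (by linarith : (0:ℝ) ≤ M)]
        ring
end

section
/- Let k ≥ 2 be an integer and set L₁ = 2^{k−2}(1+h)^{k−1}. Then for every a ∈ ℝ and every continuous function g : [−h,0] → ℝ one has (a² + ∫_{−h}^{0} g(θ)² dθ)^k ≤ L₁·(a^{2k} + ∫_{−h}^{0} g(θ)^{2k} dθ). -/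
open Real Set MeasureTheory

/-- Technical Lemma 6 (scalar case): for an integer `k ≥ 2`,
`(a² + ∫ g²)^k ≤ 2^{k-2}(1+h)^{k-1}(a^{2k} + ∫ g^{2k})`. -/
theorem power_integral_inequality_scalar
    (h : ℝ) (hh : 0 < h)
    (k : ℕ) (hk : 2 ≤ k)
    (L₁ : ℝ) (hL₁ : L₁ = 2 ^ (k - 2) * (1 + h) ^ (k - 1))
    (a : ℝ) (g : ℝ → ℝ) (hg : ContinuousOn g (Set.Icc (-h) 0)) :
    (a ^ 2 + ∫ θ in (-h)..0, g θ ^ 2) ^ k ≤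
      L₁ * (a ^ (2 * k) + ∫ θ in (-h)..0, g θ ^ (2 * k)) := by
  have hh0 : (-h : ℝ) ≤ 0 := by linarith
  have hk1 : 1 ≤ k := le_trans one_le_two hk
  set I := ∫ θ in (-h)..0, g θ ^ 2 with hIdef
  set J := ∫ θ in (-h)..0, g θ ^ (2 * k) with hJdef
  set μ : Measure ℝ := volume.restrict (Ioc (-h) 0) with hμ
  have hcont2 : ContinuousOn (fun θ => g θ ^ 2) (Icc (-h) 0) := hg.pow 2
  have hcont2k : ContinuousOn (fun θ => g θ ^ (2 * k)) (Icc (-h) 0) := hg.pow (2 * k)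
  have hint2 : Integrable (fun θ => g θ ^ 2) μ :=
    (hcont2.integrableOn_Icc).mono_set Ioc_subset_Icc_self
  have hint2k : Integrable (fun θ => g θ ^ (2 * k)) μ :=
    (hcont2k.integrableOn_Icc).mono_set Ioc_subset_Icc_self
  have hIeq : I = ∫ θ, g θ ^ 2 ∂μ := intervalIntegral.integral_of_le hh0
  have hJeq : J = ∫ θ, g θ ^ (2 * k) ∂μ := intervalIntegral.integral_of_le hh0
  have hI0 : 0 ≤ I := by
    rw [hIeq]; exact integral_nonneg fun x => sq_nonneg _
  have hJ0 : 0 ≤ J := by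
    rw [hJeq]
    exact integral_nonneg fun x => by rw [pow_mul]; exact pow_nonneg (sq_nonneg _) k
  have hμuniv : (μ Set.univ).toReal = h := by
    rw [hμ, Measure.restrict_apply_univ, Real.volume_Ioc]
    rw [ENNReal.toReal_ofReal (by linarith)]
    ring
  haveI : IsFiniteMeasure μ := by
    constructor
    rw [hμ, Measure.restrict_apply_univ, Real.volume_Ioc]
    exact ENNReal.ofReal_lt_top
  haveI : NeZero μ := by
    constructor
    intro hμ0
    have := hμuniv
    rw [hμ0] at this
    simp at this
    linarith
  have hconv : ConvexOn ℝ (Ici 0) fun x : ℝ => x ^ k := (strictConvexOn_pow hk).convexOn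
  -- Jensen's inequality
  have hjensen := hconv.map_average_le (continuous_pow k).continuousOn isClosed_Ici
    (Filter.Eventually.of_forall fun x => sq_nonneg (g x)) hint2
    (by
      have : ((fun x : ℝ => x ^ k) ∘ fun θ => g θ ^ 2) = fun θ => g θ ^ (2 * k) := by
        funext θ; simp [pow_mul]
      rw [this]; exact hint2k)
  have hJ' : (∫ x, (g x ^ 2) ^ k ∂μ) = J := by
    rw [hJeq]; congr 1; funext θ; simp [pow_mul]
  rw [average_eq, average_eq, measureReal_def, hμuniv, ← hIeq] at hjensen
  have hjensen' : (h⁻¹ * I) ^ k ≤ h⁻¹ * J := by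
    rw [hJ'] at hjensen
    simpa [smul_eq_mul] using hjensen
  have hkey : I ^ k ≤ h ^ (k - 1) * J := by
    have h1 := mul_le_mul_of_nonneg_left hjensen' (pow_nonneg hh.le k)
    have hhk : h ^ k = h ^ (k - 1) * h := by
      rw [← pow_succ, Nat.sub_add_cancel hk1]
    rw [mul_pow] at h1
    have e1 : h ^ k * ((h⁻¹) ^ k * I ^ k) = I ^ k := by
      rw [← mul_assoc, ← mul_pow, mul_inv_cancel₀ hh.ne', one_pow, one_mul]
    have e2 : h ^ k * (h⁻¹ * J) = h ^ (k - 1) * J := by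
      rw [hhk]; field_simp
    rw [e1, e2] at h1
    exact h1
  -- two-point convexity
  set c : ℝ := 1 + h with hc
  have hc0 : 0 < c := by positivity
  have hck : c ^ k = c * c ^ (k - 1) := by rw [← pow_succ', Nat.sub_add_cancel hk1]
  have hconv2 := hconv.2 (show c * a ^ 2 ∈ Ici (0:ℝ) from mem_Ici.mpr (by positivity))
    (show c * I / h ∈ Ici (0:ℝ) from
      mem_Ici.mpr (div_nonneg (mul_nonneg hc0.le hI0) hh.le))
    (show (0:ℝ) ≤ 1 / c by positivity) (show (0:ℝ) ≤ h / c by positivity)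
    (by field_simp; rfl)
  simp only [smul_eq_mul] at hconv2
  have harg : (1 / c) * (c * a ^ 2) + (h / c) * (c * I / h) = a ^ 2 + I := by
    field_simp
  rw [harg] at hconv2
  have hrhs : (1 / c) * (c * a ^ 2) ^ k + (h / c) * (c * I / h) ^ k
      = c ^ (k - 1) * ((a ^ 2) ^ k + I ^ k / h ^ (k - 1)) := by
    have hhk : h ^ k = h * h ^ (k - 1) := by rw [← pow_succ', Nat.sub_add_cancel hk1]
    rw [mul_pow, div_pow, mul_pow, hck, hhk]
    field_simp
  rw [hrhs] at hconv2
  have hstep2 : c ^ (k - 1) * ((a ^ 2) ^ k + I ^ k / h ^ (k - 1))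
      ≤ c ^ (k - 1) * ((a ^ 2) ^ k + J) := by
    apply mul_le_mul_of_nonneg_left _ (pow_nonneg hc0.le _)
    apply add_le_add_right
    rw [div_le_iff₀ (pow_pos hh _)]
    linarith [hkey]
  have hL : c ^ (k - 1) * ((a ^ 2) ^ k + J) ≤ L₁ * (a ^ (2 * k) + J) := by
    rw [hL₁, pow_mul, mul_assoc]
    have h1 : (1:ℝ) ≤ 2 ^ (k - 2) := one_le_pow₀ one_le_two
    have h2 : 0 ≤ (a ^ 2) ^ k + J := by positivity
    exact le_mul_of_one_le_left (mul_nonneg (pow_nonneg hc0.le _) h2) h1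
  calc (a ^ 2 + I) ^ k ≤ c ^ (k - 1) * ((a ^ 2) ^ k + I ^ k / h ^ (k - 1)) := hconv2
    _ ≤ c ^ (k - 1) * ((a ^ 2) ^ k + J) := hstep2
    _ ≤ L₁ * (a ^ (2 * k) + J) := hL
end

section
/- Let χ ∈ (0, 1/√(h|α₂|)), set H₁ = (w₁χ²/|α₂|)^{1/(μ−1)}, let δ ∈ (0, H₁), and set a₁ = 1 − χ²h|α₂| and a₂ = w₁ − |α₂|χ^{−2}δ^{μ−1}. Then a₁ > 0, a₂ > 0, and for every continuous φ : [−h,0] → ℝ with |φ|_h ≤ δ one has v(φ) ≥ a₁φ(0)² + a₂ ∫_{−h}^{0} φ(θ)^{μ+1} dθ. -/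
open Real Set

set_option maxHeartbeats 1000000 in
/-- Lower bound for the scalar Lyapunov–Krasovskii functional. -/
theorem scalar_functional_lower_bound
    (h : ℝ) (hh : 0 < h) (μ : ℕ) (hμodd : Odd μ) (hμ : 1 < μ)
    (α₂ : ℝ) (hα₂ : α₂ ≠ 0)
    (w₁ w₂ : ℝ) (hw₁ : 0 < w₁) (hw₂ : 0 < w₂)
    (χ H₁ δ a₁ a₂ : ℝ)
    (hχ : χ ∈ Set.Ioo 0 (1 / Real.sqrt (h * |α₂|)))
    (hH₁ : H₁ = (w₁ * χ ^ 2 / |α₂|) ^ (1 / ((μ:ℝ) - 1)))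
    (hδ : δ ∈ Set.Ioo 0 H₁)
    (ha₁ : a₁ = 1 - χ ^ 2 * h * |α₂|)
    (ha₂ : a₂ = w₁ - |α₂| / χ ^ 2 * δ ^ (μ - 1)) :
    0 < a₁ ∧ 0 < a₂ ∧
      ∀ φ : ℝ → ℝ, ContinuousOn φ (Set.Icc (-h) 0) →
        (⨆ θ : Set.Icc (-h) (0:ℝ), |φ θ.1|) ≤ δ →
        a₁ * φ 0 ^ 2 + a₂ * ∫ θ in (-h)..0, φ θ ^ (μ + 1) ≤
          (φ 0 + α₂ * ∫ θ in (-h)..0, φ θ ^ μ) ^ 2 +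
            ∫ θ in (-h)..0, (w₁ + (h + θ) * w₂) * φ θ ^ (μ + 1) := by
  obtain ⟨hχ0, hχ1⟩ := hχ
  obtain ⟨hδ0, hδH⟩ := hδ
  have hα : 0 < |α₂| := abs_pos.mpr hα₂
  have hhα : 0 < h * |α₂| := mul_pos hh hα
  have hχsq : 0 < χ ^ 2 := pow_pos hχ0 2
  have hsrt : 0 < Real.sqrt (h * |α₂|) := Real.sqrt_pos.mpr hhα
  have ha1pos : 0 < a₁ := by
    have h1 : χ * Real.sqrt (h * |α₂|) < 1 := by
      have h2 := mul_lt_mul_of_pos_right hχ1 hsrt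
      rwa [one_div, inv_mul_cancel₀ hsrt.ne'] at h2
    have h3 : Real.sqrt (h * |α₂|) ^ 2 = h * |α₂| := Real.sq_sqrt hhα.le
    rw [ha₁]
    nlinarith [mul_nonneg hχ0.le hsrt.le]
  have hμR : (0:ℝ) < (μ:ℝ) - 1 := by
    have : (1:ℝ) < (μ:ℝ) := by exact_mod_cast hμ
    linarith
  have hc : 0 < w₁ * χ ^ 2 / |α₂| := by positivity
  have hδpow : δ ^ (μ - 1) < w₁ * χ ^ 2 / |α₂| := by
    have hcast : ((μ - 1 : ℕ) : ℝ) = (μ:ℝ) - 1 := by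
      rw [Nat.cast_sub hμ.le, Nat.cast_one]
    have h1 : δ ^ (μ - 1) = δ ^ ((μ:ℝ) - 1) := by
      rw [← Real.rpow_natCast δ (μ - 1), hcast]
    have h2 : δ ^ ((μ:ℝ) - 1) < H₁ ^ ((μ:ℝ) - 1) :=
      Real.rpow_lt_rpow hδ0.le hδH hμR
    have h3 : H₁ ^ ((μ:ℝ) - 1) = w₁ * χ ^ 2 / |α₂| := by
      rw [hH₁, ← Real.rpow_mul hc.le, one_div_mul_cancel hμR.ne', Real.rpow_one]
    rw [h1]
    rw [h3] at h2
    exact h2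
  have ha2pos : 0 < a₂ := by
    rw [ha₂]
    have h4 := mul_lt_mul_of_pos_left hδpow (show 0 < |α₂| / χ ^ 2 by positivity)
    have h5 : |α₂| / χ ^ 2 * (w₁ * χ ^ 2 / |α₂|) = w₁ := by
      field_simp
    linarith
  refine ⟨ha1pos, ha2pos, fun φ hφ hsup => ?_⟩
  have hle : -h ≤ (0:ℝ) := by linarith
  have hU : Set.uIcc (-h) (0:ℝ) = Set.Icc (-h) 0 := Set.uIcc_of_le hle
  have hbound : ∀ θ ∈ Set.Icc (-h) (0:ℝ), |φ θ| ≤ δ := by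
    intro θ hθ
    have hb : BddAbove (Set.range fun θ : Set.Icc (-h) (0:ℝ) => |φ θ.1|) := by
      have hb' : BddAbove ((fun t => |φ t|) '' Set.Icc (-h) 0) :=
        (isCompact_Icc.image_of_continuousOn hφ.abs).bddAbove
      rwa [Set.image_eq_range] at hb'
    exact le_trans (le_ciSup hb ⟨θ, hθ⟩) hsup
  have hEμ1 : Even (μ + 1) := hμodd.add_one
  have hEμm : Even (μ - 1) := Nat.Odd.sub_odd hμodd odd_one
  have iμ : IntervalIntegrable (fun θ => φ θ ^ μ) MeasureTheory.volume (-h) 0 :=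
    ContinuousOn.intervalIntegrable (by rw [hU]; exact hφ.pow μ)
  have iμ1 : IntervalIntegrable (fun θ => φ θ ^ (μ + 1)) MeasureTheory.volume (-h) 0 :=
    ContinuousOn.intervalIntegrable (by rw [hU]; exact hφ.pow (μ + 1))
  have iW : IntervalIntegrable (fun θ => (w₁ + (h + θ) * w₂) * φ θ ^ (μ + 1))
      MeasureTheory.volume (-h) 0 :=
    ContinuousOn.intervalIntegrable (by
      rw [hU]
      exact (Continuous.continuousOn (by continuity)).mul (hφ.pow (μ + 1)))
  have h1 : w₁ * ∫ θ in (-h)..0, φ θ ^ (μ + 1) ≤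
      ∫ θ in (-h)..0, (w₁ + (h + θ) * w₂) * φ θ ^ (μ + 1) := by
    rw [← intervalIntegral.integral_const_mul]
    apply intervalIntegral.integral_mono_on hle (iμ1.const_mul w₁) iW
    intro θ hθ
    have hnn : 0 ≤ φ θ ^ (μ + 1) := hEμ1.pow_nonneg (φ θ)
    have hw : w₁ ≤ w₁ + (h + θ) * w₂ := by nlinarith [hθ.1]
    exact mul_le_mul_of_nonneg_right hw hnn
  have key : ∀ θ ∈ Set.Icc (-h) (0:ℝ),
      -(χ ^ 2 * |α₂| * (φ 0) ^ 2) - |α₂| / χ ^ 2 * δ ^ (μ - 1) * φ θ ^ (μ + 1) ≤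
        2 * α₂ * φ 0 * φ θ ^ μ := by
    intro θ hθ
    have hb := hbound θ hθ
    have hJθ : 0 ≤ φ θ ^ (μ + 1) := hEμ1.pow_nonneg (φ θ)
    have hd1 : φ θ ^ (μ - 1) ≤ δ ^ (μ - 1) := by
      calc φ θ ^ (μ - 1) = |φ θ| ^ (μ - 1) := (hEμm.pow_abs (φ θ)).symm
        _ ≤ δ ^ (μ - 1) := pow_le_pow_left₀ (abs_nonneg _) hb _
    have hsplit : (φ θ ^ μ) ^ 2 = φ θ ^ (μ - 1) * φ θ ^ (μ + 1) := by
      rw [← pow_mul, ← pow_add]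
      congr 1
      omega
    have hpow : (φ θ ^ μ) ^ 2 ≤ δ ^ (μ - 1) * φ θ ^ (μ + 1) := by
      rw [hsplit]
      exact mul_le_mul_of_nonneg_right hd1 hJθ
    have hpos : 0 < χ ^ 2 * |α₂| := mul_pos hχsq hα
    have heq : χ ^ 2 * |α₂| *
        (|α₂| / χ ^ 2 * δ ^ (μ - 1) * φ θ ^ (μ + 1) + χ ^ 2 * |α₂| * (φ 0) ^ 2 +
          2 * α₂ * φ 0 * φ θ ^ μ)
        = α₂ ^ 2 * δ ^ (μ - 1) * φ θ ^ (μ + 1) + χ ^ 4 * α₂ ^ 2 * (φ 0) ^ 2 +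
          2 * χ ^ 2 * |α₂| * α₂ * φ 0 * φ θ ^ μ := by
      field_simp
      have hsq := abs_mul_abs_self α₂
      linear_combination (δ ^ (μ - 1) * φ θ ^ (μ + 1) + χ ^ 4 * φ 0 ^ 2) * hsq
    have hr : 0 ≤ α₂ ^ 2 * δ ^ (μ - 1) * φ θ ^ (μ + 1) + χ ^ 4 * α₂ ^ 2 * (φ 0) ^ 2 +
        2 * χ ^ 2 * |α₂| * α₂ * φ 0 * φ θ ^ μ := by
      have h4 : α₂ ^ 2 * (φ θ ^ μ) ^ 2 ≤ α₂ ^ 2 * (δ ^ (μ - 1) * φ θ ^ (μ + 1)) :=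
        mul_le_mul_of_nonneg_left hpow (sq_nonneg α₂)
      nlinarith [sq_nonneg (χ ^ 2 * α₂ * φ 0 + |α₂| * φ θ ^ μ), h4, sq_abs α₂,
        sq_nonneg (φ θ ^ μ)]
    have h0 : χ ^ 2 * |α₂| * 0 ≤ χ ^ 2 * |α₂| *
        (|α₂| / χ ^ 2 * δ ^ (μ - 1) * φ θ ^ (μ + 1) + χ ^ 2 * |α₂| * (φ 0) ^ 2 +
          2 * α₂ * φ 0 * φ θ ^ μ) := by
      rw [mul_zero, heq]
      exact hr
    have hexpr := (mul_le_mul_iff_right₀ hpos).mp h0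
    linarith
  have iL : IntervalIntegrable
      (fun θ => -(χ ^ 2 * |α₂| * (φ 0) ^ 2) - |α₂| / χ ^ 2 * δ ^ (μ - 1) * φ θ ^ (μ + 1))
      MeasureTheory.volume (-h) 0 :=
    intervalIntegrable_const.sub (iμ1.const_mul _)
  have h2' : ∫ θ in (-h)..0,
      (-(χ ^ 2 * |α₂| * (φ 0) ^ 2) - |α₂| / χ ^ 2 * δ ^ (μ - 1) * φ θ ^ (μ + 1)) ≤
      ∫ θ in (-h)..0, 2 * α₂ * φ 0 * φ θ ^ μ :=
    intervalIntegral.integral_mono_on hle iL (iμ.const_mul (2 * α₂ * φ 0)) key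
  have hLcomp : ∫ θ in (-h)..0,
      (-(χ ^ 2 * |α₂| * (φ 0) ^ 2) - |α₂| / χ ^ 2 * δ ^ (μ - 1) * φ θ ^ (μ + 1))
      = -(χ ^ 2 * |α₂| * (φ 0) ^ 2) * h -
        |α₂| / χ ^ 2 * δ ^ (μ - 1) * ∫ θ in (-h)..0, φ θ ^ (μ + 1) := by
    rw [intervalIntegral.integral_sub intervalIntegrable_const (iμ1.const_mul _),
      intervalIntegral.integral_const, intervalIntegral.integral_const_mul]
    simp only [smul_eq_mul]
    ring
  have hRcomp : ∫ θ in (-h)..0, 2 * α₂ * φ 0 * φ θ ^ μ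
      = 2 * α₂ * φ 0 * ∫ θ in (-h)..0, φ θ ^ μ :=
    intervalIntegral.integral_const_mul _ _
  rw [hLcomp, hRcomp] at h2'
  rw [ha₁, ha₂]
  nlinarith [h1, h2', sq_nonneg (α₂ * ∫ θ in (-h)..0, φ θ ^ μ)]
end

section
/- Let s > 0, set K = (1 + (μ−1)·m·h·s^{μ−1})^{1/(μ−1)}, and let Δ > 0 satisfy Δ + m·h·Δ^μ = s/K. Then every solution x of the delay system with initial function φ satisfying ‖φ‖_h < Δ obeys ‖x(t)‖ ≤ K·(‖φ‖_h + m·h·‖φ‖_h^μ) for all t ∈ [0,h]. -/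
open Real Set

set_option maxHeartbeats 2000000 in
/-- Lemma 7: a priori bound `‖x(t)‖ ≤ K(‖φ‖_h + mh‖φ‖_h^μ)` on the first delay interval
`[0, h]` for solutions with `‖φ‖_h < Δ`. -/
theorem bound_on_first_interval
    {n : ℕ} (hn : 1 ≤ n)
    (h μ : ℝ) (hh : 0 < h) (hμ : 1 < μ)
    (f : EuclideanSpace ℝ (Fin n) × EuclideanSpace ℝ (Fin n) → EuclideanSpace ℝ (Fin n))
    (hf : Continuous f)
    (m : ℝ) (hm : 0 < m)
    (hfb : ∀ x y : EuclideanSpace ℝ (Fin n), ‖f (x, y)‖ ≤ m * (‖x‖ ^ μ + ‖y‖ ^ μ))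
    (s K Δ : ℝ) (hs : 0 < s)
    (hK : K = (1 + (μ - 1) * m * h * s ^ (μ - 1)) ^ (1 / (μ - 1)))
    (hΔpos : 0 < Δ) (hΔ : Δ + m * h * Δ ^ μ = s / K)
    (φ x : ℝ → EuclideanSpace ℝ (Fin n)) (N : ℝ)
    (hφc : ContinuousOn φ (Set.Icc (-h) 0))
    (hxc : ContinuousOn x (Set.Ici (-h)))
    (hxφ : ∀ θ ∈ Set.Icc (-h) (0:ℝ), x θ = φ θ)
    (hxd : ∀ t > (0:ℝ), HasDerivAt x (f (x t, x (t - h))) t)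
    (hN : N = ⨆ θ : Set.Icc (-h) (0:ℝ), ‖φ θ.1‖)
    (hφΔ : N < Δ) :
    ∀ t ∈ Set.Icc (0:ℝ) h, ‖x t‖ ≤ K * (N + m * h * N ^ μ) := by
  have hμ0 : (0:ℝ) < μ - 1 := by linarith
  have hμpos : (0:ℝ) < μ := by linarith
  have hbdd : BddAbove (Set.range fun θ : Set.Icc (-h) (0:ℝ) => ‖φ θ.1‖) := by
    apply ((isCompact_Icc.image_of_continuousOn hφc.norm).bddAbove).mono
    rintro y ⟨θ, rfl⟩
    exact ⟨θ.1, θ.2, rfl⟩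
  have hφN : ∀ θ ∈ Set.Icc (-h) (0:ℝ), ‖φ θ‖ ≤ N := by
    intro θ hθ
    rw [hN]
    exact le_ciSup hbdd ⟨θ, hθ⟩
  have h0mem : (0:ℝ) ∈ Set.Icc (-h) (0:ℝ) := ⟨by linarith, le_refl 0⟩
  have hN0 : 0 ≤ N := le_trans (norm_nonneg _) (hφN 0 h0mem)
  have hsP : 0 < s ^ (μ - 1) := Real.rpow_pos_of_pos hs _
  set P : ℝ := 1 + (μ - 1) * m * h * s ^ (μ - 1) with hPdef
  have hP1 : 1 < P := by
    have : 0 < (μ - 1) * m * h * s ^ (μ - 1) := by positivity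
    simp only [hPdef]; linarith
  have hKP : K ^ (μ - 1) = P := by
    rw [hK, ← Real.rpow_mul (by linarith), one_div_mul_cancel (ne_of_gt hμ0), Real.rpow_one]
  have hK1 : 1 < K := by
    rw [hK, Real.one_lt_rpow_iff_of_pos (by linarith)]
    exact Or.inl ⟨by linarith, by positivity⟩
  have hK0 : 0 < K := lt_trans one_pos hK1
  -- key step, for ρ slightly above N
  have key : ∀ ρ, N < ρ → ρ < Δ → ∀ t ∈ Set.Icc (0:ℝ) h,
      ‖x t‖ ≤ K * (ρ + m * h * ρ ^ μ) := by
    intro ρ hNρ hρΔ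
    have hρ0 : 0 < ρ := lt_of_le_of_lt hN0 hNρ
    set a : ℝ := ρ + m * h * ρ ^ μ with hadef
    have ha0 : 0 < a := by positivity
    have haΔ : a < s / K := by
      rw [← hΔ]
      have h1 : ρ ^ μ < Δ ^ μ := Real.rpow_lt_rpow (le_of_lt hρ0) hρΔ hμpos
      have h2 := mul_lt_mul_of_pos_left h1 (mul_pos hm hh)
      simp only [hadef]; nlinarith
    have haK : a * K < s := (lt_div_iff₀ hK0).mp haΔ
    set c : ℝ := (μ - 1) * m * a ^ (μ - 1) with hcdef
    have hc0 : 0 < c := by positivity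
    have hAP : a ^ (μ - 1) * P < s ^ (μ - 1) := by
      rw [← hKP, ← Real.mul_rpow (le_of_lt ha0) (le_of_lt hK0)]
      exact Real.rpow_lt_rpow (by positivity) haK hμ0
    have hchP : c * h * P < P - 1 := by
      have h2 := mul_lt_mul_of_pos_left hAP (by positivity : (0:ℝ) < (μ - 1) * m * h)
      have h3 : c * h * P = (μ - 1) * m * h * (a ^ (μ - 1) * P) := by
        simp only [hcdef]; ring
      have h4 : P - 1 = (μ - 1) * m * h * s ^ (μ - 1) := by simp only [hPdef]; ring
      rw [h3, h4]; exact h2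
    have hch1 : c * h < 1 := by nlinarith
    have hq : ∀ t ∈ Set.Icc (0:ℝ) h, 0 < 1 - c * t := by
      intro t ht
      have : c * t ≤ c * h := mul_le_mul_of_nonneg_left ht.2 (le_of_lt hc0)
      linarith
    set e : ℝ := -(1 / (μ - 1)) with hedef
    have he0 : e ≤ 0 := by
      simp only [hedef]
      have : 0 ≤ 1 / (μ - 1) := by positivity
      linarith
    set v : ℝ → ℝ := fun t => a * (1 - c * t) ^ e with hvdef
    set B : ℝ → ℝ := fun t => v t - m * ρ ^ μ * (h - t) with hBdef
    set B' : ℝ → ℝ := fun t => m * v t ^ μ + m * ρ ^ μ with hB'def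
    have hv_ge : ∀ t ∈ Set.Icc (0:ℝ) h, a ≤ v t := by
      intro t ht
      have h1 : (1:ℝ) - c * t ≤ 1 := by
        have := mul_nonneg (le_of_lt hc0) ht.1
        linarith
      have h2 : (1:ℝ) ^ e ≤ (1 - c * t) ^ e :=
        Real.rpow_le_rpow_of_nonpos (hq t ht) h1 he0
      rw [Real.one_rpow] at h2
      simp only [hvdef]
      exact le_mul_of_one_le_right (le_of_lt ha0) h2
    have hv_le : ∀ t ∈ Set.Icc (0:ℝ) h, v t ≤ K * a := by
      intro t ht
      have hqh : (0:ℝ) < 1 - c * h := by linarith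
      have h1 : (1 - c * t) ^ e ≤ (1 - c * h) ^ e := by
        apply Real.rpow_le_rpow_of_nonpos hqh _ he0
        have : c * t ≤ c * h := mul_le_mul_of_nonneg_left ht.2 (le_of_lt hc0)
        linarith
      have h2 : (1 - c * h)⁻¹ ≤ P := by
        rw [← one_div]
        rw [div_le_iff₀ hqh]
        nlinarith
      have h3 : (1 - c * h) ^ e ≤ K := by
        have h4 : (1 - c * h) ^ e = ((1 - c * h)⁻¹) ^ (1 / (μ - 1)) := by
          rw [Real.inv_rpow (le_of_lt hqh), ← Real.rpow_neg (le_of_lt hqh)]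
        have h5 : ((1 - c * h)⁻¹) ^ (1 / (μ - 1)) ≤ P ^ (1 / (μ - 1)) :=
          Real.rpow_le_rpow (by positivity) h2 (by positivity)
        have h6 : P ^ (1 / (μ - 1)) = K := by
          rw [← hKP, ← Real.rpow_mul (le_of_lt hK0),
            mul_one_div_cancel (ne_of_gt hμ0), Real.rpow_one]
        rw [h4, ← h6]; exact h5
      calc v t = a * (1 - c * t) ^ e := rfl
        _ ≤ a * (1 - c * h) ^ e := by
            exact mul_le_mul_of_nonneg_left h1 (le_of_lt ha0)
        _ ≤ a * K := mul_le_mul_of_nonneg_left h3 (le_of_lt ha0)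
        _ = K * a := by ring
    have hB0 : B 0 = ρ := by
      simp only [hBdef, hvdef, mul_zero, sub_zero, Real.one_rpow, hadef]
      ring
    have hρB : ∀ t ∈ Set.Icc (0:ℝ) h, ρ ≤ B t := by
      intro t ht
      have h1 := hv_ge t ht
      have h2 : m * ρ ^ μ * (h - t) ≤ m * ρ ^ μ * h := by
        have : 0 ≤ m * ρ ^ μ := by positivity
        nlinarith [ht.1]
      simp only [hBdef]
      simp only [hadef] at h1
      linarith
    have hBle : ∀ t ∈ Set.Icc (0:ℝ) h, B t ≤ K * a := by
      intro t ht
      have h1 := hv_le t ht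
      have h2 : 0 ≤ m * ρ ^ μ * (h - t) :=
        mul_nonneg (by positivity) (by linarith [ht.2])
      simp only [hBdef]
      linarith
    -- derivative of B
    have hBd : ∀ t ∈ Set.Icc (0:ℝ) h, HasDerivAt B (B' t) t := by
      intro t ht
      have hqt := hq t ht
      have d1 : HasDerivAt (fun τ : ℝ => 1 - c * τ) (-c) t := by
        simpa using ((hasDerivAt_id t).const_mul c).const_sub 1
      have d2 := (d1.rpow_const (p := e) (Or.inl (ne_of_gt hqt))).const_mul a
      have d3 : HasDerivAt (fun τ : ℝ => m * ρ ^ μ * (h - τ)) (-(m * ρ ^ μ)) t := by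
        simpa using ((hasDerivAt_id t).const_sub h).const_mul (m * ρ ^ μ)
      have d4 := d2.sub d3
      have heq : a * (-c * e * (1 - c * t) ^ (e - 1)) - -(m * ρ ^ μ) = B' t := by
        have hee : e * μ = e - 1 := by
          simp only [hedef]
          field_simp
          ring
        have h1 : v t ^ μ = a ^ μ * (1 - c * t) ^ (e - 1) := by
          simp only [hvdef]
          rw [Real.mul_rpow (le_of_lt ha0) (Real.rpow_nonneg (le_of_lt hqt) _),
            ← Real.rpow_mul (le_of_lt hqt), hee]
        have h2 : (-c) * e = m * a ^ (μ - 1) := by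
          simp only [hcdef, hedef]
          field_simp
        have h3 : a ^ μ = a * a ^ (μ - 1) := by
          have h4 := Real.rpow_add ha0 1 (μ - 1)
          rw [Real.rpow_one] at h4
          calc a ^ μ = a ^ (1 + (μ - 1)) := by rw [show (1:ℝ) + (μ - 1) = μ by ring]
            _ = a * a ^ (μ - 1) := h4
        simp only [hB'def, h1, h3]
        rw [h2]
        ring
      rw [← heq]
      exact d4
    -- choose δ
    have hx0N : ‖x 0‖ ≤ N := by rw [hxφ 0 h0mem]; exact hφN 0 h0mem
    have hxc0 : ContinuousAt x 0 := hxc.continuousAt (Ici_mem_nhds (by linarith))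
    have hBc0 : ContinuousAt B 0 :=
      (hBd 0 ⟨le_rfl, le_of_lt hh⟩).continuousAt
    have hg : ∀ᶠ t in nhds (0:ℝ), ‖x t‖ < B t := by
      have h1 : ContinuousAt (fun t => B t - ‖x t‖) 0 := hBc0.sub hxc0.norm
      have hpos : 0 < B 0 - ‖x 0‖ := by rw [hB0]; linarith
      have h2 := h1.eventually_ne (ne_of_gt hpos)
      have h3 := h1.tendsto.eventually (eventually_gt_nhds hpos)
      filter_upwards [h3] with t ht
      linarith
    rw [Metric.eventually_nhds_iff] at hg
    obtain ⟨δ', hδ'0, hδ'⟩ := hg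
    set δ : ℝ := min (δ' / 2) h with hδdef
    have hδ0 : 0 < δ := lt_min (by linarith) hh
    have hδh : δ ≤ h := min_le_right _ _
    have hδlt : δ < δ' := lt_of_le_of_lt (min_le_left _ _) (by linarith)
    intro t ht
    have hKa : K * a ≤ K * (ρ + m * h * ρ ^ μ) := by rw [hadef]
    by_cases htδ : t ≤ δ
    · have hd : dist t 0 < δ' := by
        rw [Real.dist_eq, sub_zero, abs_of_nonneg ht.1]
        linarith
      have := hδ' hd
      calc ‖x t‖ ≤ B t := le_of_lt this
        _ ≤ K * a := hBle t ht
        _ ≤ _ := hKa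
    · push_neg at htδ
      have htmem : t ∈ Set.Icc δ h := ⟨le_of_lt htδ, ht.2⟩
      have hsub : Set.Icc δ h ⊆ Set.Icc (0:ℝ) h := Set.Icc_subset_Icc (le_of_lt hδ0) le_rfl
      have main : ∀ ⦃τ⦄, τ ∈ Set.Icc δ h → ‖x τ‖ ≤ B τ := by
        refine image_norm_le_of_norm_deriv_right_lt_deriv_boundary'
          (f' := fun τ => f (x τ, x (τ - h))) (B' := B') ?_ ?_ ?_ ?_ ?_ ?_
        · apply hxc.mono
          intro τ hτ
          have : (0:ℝ) ≤ τ := le_trans (le_of_lt hδ0) hτ.1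
          exact le_trans (by linarith) this
        · intro τ hτ
          exact (hxd τ (lt_of_lt_of_le hδ0 hτ.1)).hasDerivWithinAt
        · have hd : dist δ 0 < δ' := by
            rw [Real.dist_eq, sub_zero, abs_of_nonneg (le_of_lt hδ0)]
            exact hδlt
          exact le_of_lt (hδ' hd)
        · intro τ hτ
          exact ((hBd τ (hsub hτ)).continuousAt).continuousWithinAt
        · intro τ hτ
          exact (hBd τ (hsub (Set.Ico_subset_Icc_self hτ))).hasDerivWithinAt
        · intro τ hτ hcontact
          have hτ0 : 0 < τ := lt_of_lt_of_le hδ0 hτ.1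
          have hτIcc : τ ∈ Set.Icc (0:ℝ) h := hsub (Set.Ico_subset_Icc_self hτ)
          have hmem : τ - h ∈ Set.Icc (-h) (0:ℝ) := ⟨by linarith, by linarith [hτ.2]⟩
          have hxτh : ‖x (τ - h)‖ ≤ N := by rw [hxφ _ hmem]; exact hφN _ hmem
          have hb1 : ‖f (x τ, x (τ - h))‖ ≤ m * (‖x τ‖ ^ μ + ‖x (τ - h)‖ ^ μ) := hfb _ _
          have hb2 : ‖x τ‖ ^ μ ≤ v τ ^ μ := by
            apply Real.rpow_le_rpow (norm_nonneg _) _ (le_of_lt hμpos)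
            rw [hcontact]
            have h1 := hρB τ hτIcc
            have h2 : 0 ≤ m * ρ ^ μ * (h - τ) :=
              mul_nonneg (by positivity) (by linarith [hτIcc.2])
            simp only [hBdef]
            linarith
          have hb3 : ‖x (τ - h)‖ ^ μ < ρ ^ μ := by
            apply lt_of_le_of_lt (Real.rpow_le_rpow (norm_nonneg _) hxτh (le_of_lt hμpos))
            exact Real.rpow_lt_rpow hN0 hNρ hμpos
          calc ‖f (x τ, x (τ - h))‖ ≤ m * (‖x τ‖ ^ μ + ‖x (τ - h)‖ ^ μ) := hb1
            _ < m * (v τ ^ μ + ρ ^ μ) := by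
                apply mul_lt_mul_of_pos_left _ hm
                have := hb2; linarith
            _ = B' τ := by simp only [hB'def]; ring
      calc ‖x t‖ ≤ B t := main htmem
        _ ≤ K * a := hBle t ht
        _ ≤ _ := hKa
  -- limit ρ → N⁺
  intro t ht
  have hev : ∀ᶠ ρ in nhdsWithin N (Set.Ioi N), ‖x t‖ ≤ K * (ρ + m * h * ρ ^ μ) := by
    filter_upwards [Ioo_mem_nhdsGT_of_mem (Set.left_mem_Ico.mpr hφΔ)] with ρ hρ
    exact key ρ hρ.1 hρ.2 t ht
  have hten : Filter.Tendsto (fun ρ => K * (ρ + m * h * ρ ^ μ)) (nhdsWithin N (Set.Ioi N))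
      (nhds (K * (N + m * h * N ^ μ))) := by
    apply Filter.Tendsto.mono_left _ nhdsWithin_le_nhds
    exact (continuousAt_const.mul (continuousAt_id.add (continuousAt_const.mul
      (Real.continuousAt_rpow_const N μ (Or.inr (le_of_lt hμpos))))))
  exact ge_of_tendsto hten hev
end

section
/- Fix r > 1, δ > 0, and set k₄ = 2·h·m·m₂·k₂·r^μ·(1 + r^{μ−1}). Let x be a solution of the delay system and let t ≥ h be such that ‖x(ξ)‖ ≤ δ for all ξ ∈ [t−2h, t] and ‖x(ξ)‖ ≤ r·‖x(t)‖ for all ξ ∈ [t−2h, t]. Then the function s ↦ V(x(s)) is differentiable at t and its derivative at t is at most −(w − k₄δ^{μ−1})·‖x(t)‖^{γ+μ−1}. -/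
open Real Set RealInnerProductSpace

/-- Derivative bound for the Lyapunov function along solutions satisfying a
Razumikhin-type condition `‖x(ξ)‖ ≤ r‖x(t)‖` on `[t-2h, t]`. -/
theorem lyapunov_derivative_razumikhin
    {n : ℕ} (hn : 1 ≤ n)
    (h μ : ℝ) (hh : 0 < h) (hμ : 1 < μ)
    (f : EuclideanSpace ℝ (Fin n) × EuclideanSpace ℝ (Fin n) → EuclideanSpace ℝ (Fin n))
    (hf : ContDiff ℝ 1 f)
    (m m₂ : ℝ) (hm : 0 < m) (hm₂ : 0 < m₂)
    (hfb : ∀ x y : EuclideanSpace ℝ (Fin n), ‖f (x, y)‖ ≤ m * (‖x‖ ^ μ + ‖y‖ ^ μ))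
    (hfy : ∀ x y : EuclideanSpace ℝ (Fin n),
      ‖fderiv ℝ (fun y' => f (x, y')) y‖ ≤ m₂ * (‖x‖ ^ (μ - 1) + ‖y‖ ^ (μ - 1)))
    (γ : ℝ) (hγ : 2 ≤ γ)
    (V : EuclideanSpace ℝ (Fin n) → ℝ) (hV : ContDiff ℝ 1 V)
    (k₂ w : ℝ) (hk₂ : 0 < k₂) (hw : 0 < w)
    (hgrad : ∀ x : EuclideanSpace ℝ (Fin n), ‖gradient V x‖ ≤ k₂ * ‖x‖ ^ (γ - 1))
    (hdV : ∀ x : EuclideanSpace ℝ (Fin n),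
      ⟪gradient V x, f (x, x)⟫ ≤ -w * ‖x‖ ^ (γ + μ - 1))
    (r δ k₄ : ℝ) (hr : 1 < r) (hδ : 0 < δ)
    (hk₄ : k₄ = 2 * h * m * m₂ * k₂ * r ^ μ * (1 + r ^ (μ - 1)))
    (x : ℝ → EuclideanSpace ℝ (Fin n))
    (hxc : ContinuousOn x (Set.Ici (-h)))
    (hxd : ∀ t > (0:ℝ), HasDerivAt x (f (x t, x (t - h))) t)
    (t : ℝ) (ht : h ≤ t)
    (hxδ : ∀ ξ ∈ Set.Icc (t - 2 * h) t, ‖x ξ‖ ≤ δ)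
    (hraz : ∀ ξ ∈ Set.Icc (t - 2 * h) t, ‖x ξ‖ ≤ r * ‖x t‖) :
    DifferentiableAt ℝ (fun s => V (x s)) t ∧
      deriv (fun s => V (x s)) t ≤ -(w - k₄ * δ ^ (μ - 1)) * ‖x t‖ ^ (γ + μ - 1) := by
  have hμ0 : (0:ℝ) ≤ μ - 1 := by linarith
  have ht0 : (0:ℝ) < t := lt_of_lt_of_le hh ht
  set N := ‖x t‖ with hN
  have Nn : 0 ≤ N := norm_nonneg _
  have hmemt : t ∈ Set.Icc (t - 2*h) t := ⟨by linarith, le_rfl⟩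
  have hmemth : t - h ∈ Set.Icc (t - 2*h) t := ⟨by linarith, by linarith⟩
  have hrN : ∀ ξ ∈ Set.Icc (t - 2*h) t, ‖x ξ‖ ≤ r * N := by
    intro ξ hξ; simpa using hraz ξ (by simpa using hξ)
  have hpr : N ≤ r * N := by nlinarith
  -- power helper
  have hpow : ∀ a b : ℝ, 0 ≤ a → a ≤ δ → a ≤ b → a ^ μ ≤ δ ^ (μ - 1) * b := by
    intro a b ha haδ hab
    rcases ha.eq_or_lt with h0 | h0
    · rw [← h0, Real.zero_rpow (by linarith)]
      have hb : (0:ℝ) ≤ b := le_trans ha hab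
      positivity
    · have key : a ^ μ = a ^ (μ - 1) * a ^ (1:ℝ) := by
        rw [← Real.rpow_add h0]; ring_nf
      rw [Real.rpow_one] at key
      rw [key]
      have hb : (0:ℝ) ≤ b := le_trans ha hab
      exact mul_le_mul (Real.rpow_le_rpow ha haδ hμ0) hab ha (by positivity)
  set M : ℝ := 2 * m * (δ ^ (μ - 1) * (r * N)) with hM
  have hMb : ∀ ξ ∈ Set.Icc (t - h) t, ‖f (x ξ, x (ξ - h))‖ ≤ M := by
    intro ξ hξ
    have h1 : ξ ∈ Set.Icc (t - 2*h) t := ⟨by linarith [hξ.1], hξ.2⟩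
    have h2 : ξ - h ∈ Set.Icc (t - 2*h) t := ⟨by linarith [hξ.1], by linarith [hξ.2]⟩
    calc ‖f (x ξ, x (ξ - h))‖ ≤ m * (‖x ξ‖ ^ μ + ‖x (ξ - h)‖ ^ μ) := hfb _ _
      _ ≤ m * (δ ^ (μ - 1) * (r * N) + δ ^ (μ - 1) * (r * N)) := by
          gcongr
          · exact hpow _ _ (norm_nonneg _) (hxδ ξ (by simpa using h1)) (hrN ξ h1)
          · exact hpow _ _ (norm_nonneg _) (hxδ _ (by simpa using h2)) (hrN _ h2)
      _ = M := by rw [hM]; ring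
  -- ‖x t - x (t - h)‖ ≤ M * h via mean value + limiting at endpoint
  have hxdiff : ‖x t - x (t - h)‖ ≤ M * h := by
    have key : ∀ a' ∈ Set.Ioc (t - h) t, ‖x t - x a'‖ ≤ M * (t - a') := by
      intro a' ha'
      have hd : ∀ ξ ∈ Set.Icc a' t,
          HasDerivWithinAt x (f (x ξ, x (ξ - h))) (Set.Icc a' t) ξ := by
        intro ξ hξ
        have : 0 < ξ := by
          have := ha'.1; have := hξ.1; linarith
        exact (hxd ξ this).hasDerivWithinAt
      have hb : ∀ ξ ∈ Set.Ico a' t, ‖f (x ξ, x (ξ - h))‖ ≤ M := by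
        intro ξ hξ
        exact hMb ξ ⟨by linarith [ha'.1, hξ.1], hξ.2.le⟩
      have := norm_image_sub_le_of_norm_deriv_le_segment' hd hb t ⟨ha'.2, le_rfl⟩
      linarith [this]
    have hev : ∀ᶠ a' in nhdsWithin (t - h) (Set.Ioi (t - h)),
        ‖x t - x a'‖ ≤ M * (t - a') := by
      filter_upwards [Ioc_mem_nhdsGT (by linarith : t - h < t)] with a' ha'
        using key a' ha'
    have hcw : ContinuousWithinAt x (Set.Ioi (t - h)) (t - h) := by
      refine (hxc (t - h) (by simp; linarith)).mono ?_
      intro ξ hξ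
      simp only [Set.mem_Ioi] at hξ
      simp only [Set.mem_Ici]
      linarith
    have t1 : Filter.Tendsto (fun a' => ‖x t - x a'‖) (nhdsWithin (t - h) (Set.Ioi (t - h)))
        (nhds ‖x t - x (t - h)‖) := (Filter.Tendsto.sub tendsto_const_nhds hcw).norm
    have t2 : Filter.Tendsto (fun a' => M * (t - a')) (nhdsWithin (t - h) (Set.Ioi (t - h)))
        (nhds (M * (t - (t - h)))) := by
      apply Filter.Tendsto.mono_left _ nhdsWithin_le_nhds
      exact ((tendsto_const_nhds.sub Filter.tendsto_id).const_mul M)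
    have := le_of_tendsto_of_tendsto t1 t2 hev
    simpa using this
  -- Lipschitz bound for f in the second variable on the segment
  set L : ℝ := m₂ * ((1 + r ^ (μ - 1)) * N ^ (μ - 1)) with hL
  have hfdiff : ‖f (x t, x (t - h)) - f (x t, x t)‖ ≤ L * (M * h) := by
    set S := segment ℝ (x t) (x (t - h)) with hS
    have hseg : ∀ z ∈ S, ‖z‖ ≤ r * N := by
      intro z hz
      obtain ⟨a, c, ha, hc, hac, rfl⟩ := hz
      calc ‖a • x t + c • x (t - h)‖ ≤ ‖a • x t‖ + ‖c • x (t - h)‖ := norm_add_le _ _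
        _ = a * ‖x t‖ + c * ‖x (t - h)‖ := by
            rw [norm_smul, norm_smul, Real.norm_eq_abs, Real.norm_eq_abs,
              abs_of_nonneg ha, abs_of_nonneg hc]
        _ ≤ a * (r * N) + c * (r * N) := by
            gcongr
            exact hrN _ hmemth
        _ = r * N := by rw [← add_mul, hac, one_mul]
    have hLb : ∀ z ∈ S, ‖fderiv ℝ (fun y' => f (x t, y')) z‖ ≤ L := by
      intro z hz
      refine (hfy (x t) z).trans ?_
      have h1 : ‖z‖ ^ (μ - 1) ≤ r ^ (μ - 1) * N ^ (μ - 1) := by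
        rw [← Real.mul_rpow (by linarith) Nn]
        exact Real.rpow_le_rpow (norm_nonneg z) (hseg z hz) hμ0
      rw [hL]
      nlinarith [hm₂.le]
    have hdiffy : ∀ z ∈ S, HasFDerivWithinAt (fun y' => f (x t, y'))
        (fderiv ℝ (fun y' => f (x t, y')) z) S z := by
      intro z hz
      have hdz : DifferentiableAt ℝ (fun y' => f (x t, y')) z :=
        ((hf.differentiable one_ne_zero) (x t, z)).comp z
          (DifferentiableAt.prodMk (differentiableAt_const (x t)) differentiableAt_id)
      exact hdz.hasFDerivAt.hasFDerivWithinAt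
    have := (convex_segment (x t) (x (t - h))).norm_image_sub_le_of_norm_hasFDerivWithin_le
      hdiffy hLb (left_mem_segment ℝ (x t) (x (t - h))) (right_mem_segment ℝ (x t) (x (t - h)))
    refine this.trans ?_
    have hLnn : 0 ≤ L := by rw [hL]; positivity
    calc L * ‖x (t - h) - x t‖ = L * ‖x t - x (t - h)‖ := by rw [norm_sub_rev]
      _ ≤ L * (M * h) := by
          have hMh : ‖x t - x (t - h)‖ ≤ M * h := hxdiff
          exact mul_le_mul_of_nonneg_left hMh hLnn
  -- chain rule
  have hVd : HasFDerivAt V (fderiv ℝ V (x t)) (x t) :=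
    (hV.differentiable one_ne_zero (x t)).hasFDerivAt
  have hcomp : HasDerivAt (fun s => V (x s)) (fderiv ℝ V (x t) (f (x t, x (t - h)))) t :=
    hVd.comp_hasDerivAt t (hxd t ht0)
  refine ⟨hcomp.differentiableAt, ?_⟩
  rw [hcomp.deriv]
  have hinner : fderiv ℝ V (x t) (f (x t, x (t - h)))
      = ⟪gradient V (x t), f (x t, x (t - h))⟫ := by
    rw [gradient, InnerProductSpace.toDual_symm_apply]
  rw [hinner]
  set g := gradient V (x t) with hg
  have hsplit : ⟪g, f (x t, x (t - h))⟫
      = ⟪g, f (x t, x t)⟫ + ⟪g, f (x t, x (t - h)) - f (x t, x t)⟫ := by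
    rw [inner_sub_right]; ring
  have hCS : ⟪g, f (x t, x (t - h)) - f (x t, x t)⟫
      ≤ ‖g‖ * ‖f (x t, x (t - h)) - f (x t, x t)‖ := real_inner_le_norm _ _
  have hterm : ‖g‖ * ‖f (x t, x (t - h)) - f (x t, x t)‖ ≤ (k₂ * N ^ (γ - 1)) * (L * (M * h)) :=
    mul_le_mul (hgrad (x t)) hfdiff (norm_nonneg _) (by positivity)
  have hkey : (k₂ * N ^ (γ - 1)) * (L * (M * h)) ≤ k₄ * δ ^ (μ - 1) * N ^ (γ + μ - 1) := by
    rcases Nn.eq_or_lt with h0 | h0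
    · rw [hL, hM, ← h0, Real.zero_rpow (by linarith : γ - 1 ≠ 0),
        Real.zero_rpow (by linarith : γ + μ - 1 ≠ 0)]
      ring_nf
      simp
    · have hNpow : N ^ (γ - 1) * N ^ (μ - 1) * N ^ (1:ℝ) = N ^ (γ + μ - 1) := by
        rw [← Real.rpow_add h0, ← Real.rpow_add h0]
        congr 1; ring
      rw [Real.rpow_one] at hNpow
      have hrμ : r ≤ r ^ μ := by
        calc r = r ^ (1:ℝ) := (Real.rpow_one r).symm
          _ ≤ r ^ μ := Real.rpow_le_rpow_of_exponent_le hr.le hμ.le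
      have hcoef : 2 * h * m * m₂ * k₂ * r * (1 + r ^ (μ - 1)) ≤ k₄ := by
        rw [hk₄]
        have hp : (0:ℝ) ≤ 1 + r ^ (μ - 1) := by positivity
        gcongr
      calc (k₂ * N ^ (γ - 1)) * (L * (M * h))
          = (2 * h * m * m₂ * k₂ * r * (1 + r ^ (μ - 1)))
            * (δ ^ (μ - 1) * (N ^ (γ - 1) * N ^ (μ - 1) * N)) := by rw [hL, hM]; ring
        _ = (2 * h * m * m₂ * k₂ * r * (1 + r ^ (μ - 1)))
            * (δ ^ (μ - 1) * N ^ (γ + μ - 1)) := by rw [hNpow]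
        _ ≤ k₄ * (δ ^ (μ - 1) * N ^ (γ + μ - 1)) :=
            mul_le_mul_of_nonneg_right hcoef (by positivity)
        _ = k₄ * δ ^ (μ - 1) * N ^ (γ + μ - 1) := by ring
  have hdVt := hdV (x t)
  rw [hsplit]
  have : ⟪g, f (x t, x (t - h)) - f (x t, x t)⟫ ≤ k₄ * δ ^ (μ - 1) * N ^ (γ + μ - 1) :=
    hCS.trans (hterm.trans hkey)
  have hfin : -(w - k₄ * δ ^ (μ - 1)) * N ^ (γ + μ - 1)
      = -w * N ^ (γ + μ - 1) + k₄ * δ ^ (μ - 1) * N ^ (γ + μ - 1) := by ring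
  rw [hfin]
  exact add_le_add hdVt this
end

section
/- Let L > 0, p > 1, and u₀ > 0. Suppose v : [0,∞) → ℝ is differentiable with v(t) ≥ 0 for all t ≥ 0, v(0) ≤ u₀, and v′(t) ≤ −L·v(t)^p for all t ≥ 0. Then v(t) ≤ u₀·(1 + L(p−1)u₀^{p−1}·t)^{−1/(p−1)} for all t ≥ 0. -/
open Real Set

/-- Comparison lemma: if `v' ≤ -L v^p` with `v ≥ 0`, `v(0) ≤ u₀`, then
`v(t) ≤ u₀ (1 + L(p-1)u₀^{p-1} t)^{-1/(p-1)}`. -/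
theorem comparison_decay
    (L p u₀ : ℝ) (hL : 0 < L) (hp : 1 < p) (hu₀ : 0 < u₀)
    (v v' : ℝ → ℝ)
    (hderiv : ∀ t ∈ Set.Ici (0:ℝ), HasDerivWithinAt v (v' t) (Set.Ici (0:ℝ)) t)
    (hvnonneg : ∀ t ∈ Set.Ici (0:ℝ), 0 ≤ v t)
    (hv0 : v 0 ≤ u₀)
    (hineq : ∀ t ∈ Set.Ici (0:ℝ), v' t ≤ -L * v t ^ p) :
    ∀ t ∈ Set.Ici (0:ℝ),
      v t ≤ u₀ * (1 + L * (p - 1) * u₀ ^ (p - 1) * t) ^ (-(1 / (p - 1))) := by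
  intro t ht
  rw [Set.mem_Ici] at ht
  have hp1 : (0:ℝ) < p - 1 := by linarith
  have hup : (0:ℝ) < u₀ ^ (p - 1) := rpow_pos_of_pos hu₀ _
  have hbase : (0:ℝ) < 1 + L * (p - 1) * u₀ ^ (p - 1) * t := by
    have := mul_nonneg (mul_nonneg (mul_nonneg hL.le hp1.le) hup.le) ht
    linarith
  have hRHS : (0:ℝ) ≤ u₀ * (1 + L * (p - 1) * u₀ ^ (p - 1) * t) ^ (-(1 / (p - 1))) :=
    mul_nonneg hu₀.le (rpow_nonneg hbase.le _)
  rcases le_or_gt (v t) 0 with hvt | hvt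
  · linarith
  -- v is positive on [0, t]
  have hvcont : ContinuousOn v (Set.Ici (0:ℝ)) := fun x hx =>
    (hderiv x hx).continuousWithinAt
  have hIcc : Set.Icc (0:ℝ) t ⊆ Set.Ici (0:ℝ) := fun x hx => hx.1
  have hI : interior (Set.Icc (0:ℝ) t) ⊆ Set.Ioo 0 t := by
    rw [interior_Icc]
  have hDA : ∀ x ∈ interior (Set.Icc (0:ℝ) t), HasDerivAt v (v' x) x := by
    intro x hx
    replace hx := hI hx
    exact (hderiv x (le_of_lt hx.1)).hasDerivAt (Ici_mem_nhds hx.1)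
  have hanti : AntitoneOn v (Set.Icc (0:ℝ) t) := by
    apply antitoneOn_of_hasDerivWithinAt_nonpos (convex_Icc 0 t) (hvcont.mono hIcc)
      (fun x hx => (hDA x hx).hasDerivWithinAt)
    intro x hx
    have hx' := hI hx
    have := hineq x (le_of_lt hx'.1)
    have hvp : (0:ℝ) ≤ v x ^ p := rpow_nonneg (hvnonneg x (le_of_lt hx'.1)) _
    have := mul_nonneg hL.le hvp
    linarith
  have hvpos : ∀ s ∈ Set.Icc (0:ℝ) t, 0 < v s := fun s hs =>
    lt_of_lt_of_le hvt (hanti hs (Set.right_mem_Icc.mpr ht) hs.2)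
  -- h s = v s ^ (1 - p) - L (p-1) s  is monotone on [0, t]
  set h : ℝ → ℝ := fun s => v s ^ (1 - p) - L * (p - 1) * s with hh
  have hmono : MonotoneOn h (Set.Icc (0:ℝ) t) := by
    apply monotoneOn_of_hasDerivWithinAt_nonneg (convex_Icc 0 t)
      (f' := fun s => v' s * (1 - p) * v s ^ (1 - p - 1) - L * (p - 1))
    · exact (((hvcont.mono hIcc).rpow_const
        (fun s hs => Or.inl (hvpos s hs).ne')).sub
        ((continuousOn_id.const_smul (L * (p - 1))).congr (by intro x _; simp [smul_eq_mul])))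
    · intro x hx
      have hd := ((hDA x hx).rpow_const (p := 1 - p)
        (Or.inl (hvpos x (interior_subset hx)).ne')).sub
        ((hasDerivAt_id x).const_mul (L * (p - 1)))
      simpa [mul_one, hh, Pi.sub_def] using hd.hasDerivWithinAt
    · intro x hx
      have hx' := hI hx
      have hxm : x ∈ Set.Icc (0:ℝ) t := interior_subset hx
      have hvx : 0 < v x := hvpos x hxm
      have hiq := hineq x (le_of_lt hx'.1)
      have hvpp : (0:ℝ) < v x ^ p := rpow_pos_of_pos hvx _
      have hA : (0:ℝ) < v x ^ (1 - p - 1) := rpow_pos_of_pos hvx _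
      have hBA : v x ^ p * v x ^ (1 - p - 1) = 1 := by
        rw [← Real.rpow_add hvx]
        norm_num
      have hkey : (0:ℝ) ≤ (-L * v x ^ p - v' x) * ((p - 1) * v x ^ (1 - p - 1)) :=
        mul_nonneg (by linarith) (by positivity)
      have heq : v' x * (1 - p) * v x ^ (1 - p - 1) - L * (p - 1)
          = (-L * v x ^ p - v' x) * ((p - 1) * v x ^ (1 - p - 1)) := by
        linear_combination (L * (p - 1)) * hBA
      linarith [heq ▸ hkey]
  -- conclude
  have h0t : h 0 ≤ h t := hmono (Set.left_mem_Icc.mpr ht) (Set.right_mem_Icc.mpr ht) ht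
  have hv00 : 0 < v 0 := hvpos 0 (Set.left_mem_Icc.mpr ht)
  have hg0 : u₀ ^ (1 - p) ≤ v 0 ^ (1 - p) :=
    Real.rpow_le_rpow_of_nonpos hv00 hv0 (by linarith)
  have hE : u₀ ^ (1 - p) + L * (p - 1) * t ≤ v t ^ (1 - p) := by
    simp only [hh] at h0t
    linarith
  have hEpos : (0:ℝ) < u₀ ^ (1 - p) + L * (p - 1) * t := by
    have h1 := rpow_pos_of_pos hu₀ (1 - p)
    have h2 := mul_nonneg (mul_nonneg hL.le hp1.le) ht
    linarith
  -- apply x ↦ x ^ (1/(1-p)), which is antitone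
  have hexp : (1:ℝ) / (1 - p) ≤ 0 := by
    apply div_nonpos_of_nonneg_of_nonpos zero_le_one; linarith
  have hfin := Real.rpow_le_rpow_of_nonpos hEpos hE hexp
  have hvt_eq : (v t ^ (1 - p)) ^ ((1:ℝ) / (1 - p)) = v t := by
    rw [← Real.rpow_mul hvt.le, mul_one_div, div_self (by linarith : (1:ℝ) - p ≠ 0),
      Real.rpow_one]
  have hEeq : u₀ ^ (1 - p) + L * (p - 1) * t
      = u₀ ^ (1 - p) * (1 + L * (p - 1) * u₀ ^ (p - 1) * t) := by
    have h1 : u₀ ^ (1 - p) * u₀ ^ (p - 1) = 1 := by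
      rw [← Real.rpow_add hu₀]; norm_num
    linear_combination (-(L * (p - 1) * t)) * h1
  have hmul : (u₀ ^ (1 - p) * (1 + L * (p - 1) * u₀ ^ (p - 1) * t)) ^ ((1:ℝ) / (1 - p))
      = u₀ * (1 + L * (p - 1) * u₀ ^ (p - 1) * t) ^ (-(1 / (p - 1))) := by
    rw [Real.mul_rpow (rpow_nonneg hu₀.le _) hbase.le, ← Real.rpow_mul hu₀.le,
      mul_one_div, div_self (by linarith : (1:ℝ) - p ≠ 0), Real.rpow_one]
    congr 1
    rw [show (1:ℝ) - p = -(p - 1) by ring, div_neg]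
  calc v t = (v t ^ (1 - p)) ^ ((1:ℝ) / (1 - p)) := hvt_eq.symm
    _ ≤ (u₀ ^ (1 - p) + L * (p - 1) * t) ^ ((1:ℝ) / (1 - p)) := hfin
    _ = u₀ * (1 + L * (p - 1) * u₀ ^ (p - 1) * t) ^ (-(1 / (p - 1))) := by
        rw [hEeq, hmul]
end
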